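/- arXiv:1705.07623 — 4 statements merged into one kernel-verified Lean document; each statement's English description precedes it below -/
import Mathlib

section
/- Let q^m ≡ 3 (mod 4) be an odd prime power and N an odd positive integer dividing (q^m−1)/(q−1). Let χ'_N be a multiplicative character of order N of F_{q^m} and let χ_N be its lift to F_{q^{2m}} (i.e., χ_N(α) = χ'_N(Norm_{F_{q^{2m}}/F_{q^m}}(α))), and let χ_4 be a multiplicative character of order 4 of F_{q^{2m}}. Then G_{q^{2m}}(χ_4 χ_N) = G_{q^{2m}}(χ_4³ χ_N), and moreover G_{q^{2m}}(χ_4 χ_N) = ρ · q^m · G_{q^m}(η χ'_N²) / G_{q^m}(η), where η is the quadratic character of F_{q^m}, and ρ = −1 if q^m ≡ 3 (mod 8) and ρ = 1 if q^m ≡ 7 (mod 8). -/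
open scoped Classical

/-- The canonical additive character of a finite field `F` of characteristic `p`:
`ψ(x) = exp(2πi·Tr_{F/F_p}(x)/p)`. -/
noncomputable def canonPsi (p : ℕ) (F : Type) [Field F] [Algebra (ZMod p) F] : F → ℂ :=
  fun x => Complex.exp (2 * Real.pi * Complex.I *
    ((Algebra.trace (ZMod p) F x).val : ℂ) / (p : ℂ))

/-- The Gauss sum `G_Q(χ) = Σ_{x ∈ F_Q^*} χ(x)ψ(x)`. -/
noncomputable def gaussSumF {F : Type} [Field F] [Fintype F]
    (χ : MulChar F ℂ) (ψ : F → ℂ) : ℂ :=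
  ∑ x ∈ Finset.univ.filter (fun x : F => x ≠ 0), χ x * ψ x

namespace Stmt2Aux

open Finset

noncomputable def zeta (p : ℕ) : ℂ := Complex.exp (2 * Real.pi * Complex.I / p)

lemma zeta_pow (p : ℕ) [Fact p.Prime] : zeta p ^ p = 1 :=
  (Complex.isPrimitiveRoot_exp p (Fact.out (p := p.Prime)).ne_zero).pow_eq_one

/-- The canonical additive character as a bundled `AddChar`. -/
noncomputable def Psi (p : ℕ) (F : Type) [Fact p.Prime] [Field F] [Fintype F]
    [Algebra (ZMod p) F] : AddChar F ℂ :=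
  (AddChar.zmodChar p (zeta_pow p)).compAddMonoidHom (Algebra.trace (ZMod p) F).toAddMonoidHom

variable {p : ℕ} [Fact p.Prime] {F : Type} [Field F] [Fintype F] [Algebra (ZMod p) F]

lemma Psi_apply (x : F) : Psi p F x = zeta p ^ (Algebra.trace (ZMod p) F x).val := rfl

lemma Psi_eq_canonPsi : ⇑(Psi p F) = canonPsi p F := by
  funext x
  rw [Psi_apply, canonPsi, zeta, ← Complex.exp_nat_mul]
  congr 1
  ring

lemma Psi_ne_one : Psi p F ≠ 1 := by
  have hp1 : 1 < p := (Fact.out (p := p.Prime)).one_lt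
  haveI : FiniteDimensional (ZMod p) F := Module.Finite.of_finite
  obtain ⟨x, hx⟩ := Algebra.trace_surjective (ZMod p) F (1 : ZMod p)
  intro h
  have h1 : Psi p F x = 1 := by rw [h]; rfl
  rw [Psi_apply, hx, ZMod.val_one] at h1
  exact ((Complex.isPrimitiveRoot_exp p (Fact.out (p := p.Prime)).ne_zero).ne_one hp1)
    (by simpa [zeta] using h1)

lemma Psi_isPrimitive : (Psi p F).IsPrimitive := AddChar.IsPrimitive.of_ne_one Psi_ne_one

lemma gaussSumF_eq (χ : MulChar F ℂ) : gaussSumF χ (canonPsi p F) = gaussSum χ (Psi p F) := by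
  rw [gaussSumF, gaussSum, ← Psi_eq_canonPsi]
  exact Finset.sum_filter_of_ne (fun x _ hx => by
    rintro rfl
    exact hx (by rw [MulChar.map_nonunit χ not_isUnit_zero, zero_mul]))

lemma sum_psi_zero {c : F} (hc : c ≠ 0) : ∑ x : F, Psi p F (c * x) = 0 := by
  have h := AddChar.sum_eq_zero_of_ne_one (Psi_isPrimitive (p := p) (F := F) hc)
  simpa [AddChar.mulShift_apply] using h

lemma sum_mulChar_psi (χ : MulChar F ℂ) {c : F} (hc : c ≠ 0) :
    ∑ x : F, χ x * Psi p F (c * x) = χ c⁻¹ * gaussSum χ (Psi p F) := by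
  rw [gaussSum, mul_sum]
  refine Fintype.sum_bijective (c * ·) (mulLeft_bijective₀ c hc) _ _ (fun x => ?_)
  rw [← mul_assoc, ← map_mul, inv_mul_cancel_left₀ hc]

/-- Fiber-counting over squares. -/
lemma sum_sq_expand (hF : ringChar F ≠ 2) (f : F → ℂ) :
    ∑ a : F, f (a ^ 2) = ∑ x : F, (1 + ((quadraticChar F x : ℤ) : ℂ)) * f x := by
  rw [← Finset.sum_fiberwise univ (fun a : F => a ^ 2) (fun a => f (a ^ 2))]
  refine Finset.sum_congr rfl (fun x _ => ?_)
  rw [Finset.sum_congr rfl (fun a ha => by rw [(Finset.mem_filter.mp ha).2]),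
    Finset.sum_const, nsmul_eq_mul]
  congr 1
  have h := quadraticChar_card_sqrts hF x
  have hcard : ({a : F | a ^ 2 = x}.toFinset.card : ℤ) = quadraticChar F x + 1 := h
  rw [Set.toFinset_setOf] at hcard
  have : ((Finset.filter (fun a : F => a ^ 2 = x) univ).card : ℂ) =
      ((quadraticChar F x : ℤ) : ℂ) + 1 := by exact_mod_cast congrArg (Int.cast : ℤ → ℂ) hcard
  rw [this]; ring

/-- A multiplicative character of order 2 is the quadratic character. -/
lemma eq_quadChar (η : MulChar F ℂ) (hη : orderOf η = 2) (x : F) :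
    η x = ((quadraticChar F x : ℤ) : ℂ) := by
  have hη2 : η ^ 2 = 1 := hη ▸ pow_orderOf_eq_one η
  have hsq : ∀ y : F, y ≠ 0 → η (y ^ 2) = 1 := fun y hy => by
    rw [map_pow, ← MulChar.pow_apply' η two_ne_zero, hη2, MulChar.one_apply (Ne.isUnit hy)]
  by_cases hx : x = 0
  · simp [hx, MulChar.map_nonunit η not_isUnit_zero]
  by_cases hs : IsSquare x
  · rw [(quadraticChar_one_iff_isSquare hx).mpr hs]
    obtain ⟨y, rfl⟩ := hs
    have hy : y ≠ 0 := fun h => hx (by simp [h])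
    rw [← sq] at hx ⊢
    simp [hsq y hy]
  · rw [quadraticChar_neg_one_iff_not_isSquare.mpr hs]
    have hval : η x * η x = 1 := by
      rw [← map_mul, ← sq]; exact hsq x hx
    rcases mul_self_eq_one_iff.mp hval with h1 | h1
    · exfalso
      -- η would be trivial
      have hone : η = 1 := by
        ext a
        rw [MulChar.one_apply_coe]
        by_cases hsa : IsSquare (a : F)
        · obtain ⟨y, hy⟩ := hsa
          have hy0 : y ≠ 0 := fun h => a.ne_zero (by rw [hy, h, mul_zero])
          rw [hy, ← sq, hsq y hy0]
        · -- a = x * (x⁻¹ * a), with x⁻¹ * a a square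
          have hxa : IsSquare (x⁻¹ * (a : F)) := by
            have h1q : quadraticChar F (x⁻¹ * (a : F)) = 1 := by
              have hxq : quadraticChar F x * quadraticChar F x⁻¹ = 1 := by
                rw [← map_mul, mul_inv_cancel₀ hx, map_one]
              rw [quadraticChar_neg_one_iff_not_isSquare.mpr hs] at hxq
              have hxinv : quadraticChar F x⁻¹ = -1 := by linarith
              rw [map_mul, hxinv, quadraticChar_neg_one_iff_not_isSquare.mpr hsa]
              ring
            exact (quadraticChar_one_iff_isSquare
              (mul_ne_zero (inv_ne_zero hx) a.ne_zero)).mp h1q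
          obtain ⟨y, hy⟩ := hxa
          have hy0 : y ≠ 0 := fun h => (mul_ne_zero (inv_ne_zero hx) a.ne_zero) (by
            rw [hy, h, mul_zero])
          have : (a : F) = x * (y * y) := by
            rw [← hy, mul_inv_cancel_left₀ hx]
          rw [this, map_mul, h1, one_mul, ← sq, hsq y hy0]
      rw [hone, orderOf_one] at hη
      norm_num at hη
    · rw [h1]; norm_num

end Stmt2Aux

open Stmt2Aux Finset in
set_option maxHeartbeats 2000000 in
/-- Let `q^m ≡ 3 (mod 4)` be an odd prime power and `N` an odd positive
divisor of `(q^m-1)/(q-1)`.  Let `χ'_N` be a multiplicative character of order `N` of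
`F_{q^m}`, `χ_N` its lift to `F_{q^{2m}}` (via the norm), and `χ_4` a multiplicative
character of order `4` of `F_{q^{2m}}`.  Then `G_{q^{2m}}(χ_4χ_N) = G_{q^{2m}}(χ_4³χ_N)`
and `G_{q^{2m}}(χ_4χ_N) = ρ·q^m·G_{q^m}(ηχ'_N²)/G_{q^m}(η)`, where `η` is the quadratic
character of `F_{q^m}` and `ρ = -1` if `q^m ≡ 3 (mod 8)`, `ρ = 1` if `q^m ≡ 7 (mod 8)`. -/
theorem stmt2 (p s q m N : ℕ) [Fact p.Prime] (hq : q = p ^ s) (hs : 0 < s) (hm : 0 < m)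
    (hq4 : q ^ m % 4 = 3) (hNodd : Odd N) (hNpos : 0 < N)
    (hNdvd : N ∣ (q ^ m - 1) / (q - 1))
    (F₁ F₂ : Type) [Field F₁] [Field F₂] [Fintype F₁] [Fintype F₂]
    [Algebra F₁ F₂] [Algebra (ZMod p) F₁] [Algebra (ZMod p) F₂]
    (hF₁ : Fintype.card F₁ = q ^ m) (hF₂ : Fintype.card F₂ = q ^ (2 * m))
    (χ'N : MulChar F₁ ℂ) (hχ'N : orderOf χ'N = N)
    (χN : MulChar F₂ ℂ) (hχN : ∀ α : F₂, χN α = χ'N (Algebra.norm F₁ α))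
    (χ₄ : MulChar F₂ ℂ) (hχ₄ : orderOf χ₄ = 4)
    (η : MulChar F₁ ℂ) (hη : orderOf η = 2)
    (ρ : ℂ) (hρ : ρ = if q ^ m % 8 = 3 then -1 else 1) :
    gaussSumF (χ₄ * χN) (canonPsi p F₂) = gaussSumF (χ₄ ^ 3 * χN) (canonPsi p F₂) ∧
    gaussSumF (χ₄ * χN) (canonPsi p F₂)
      = ρ * (q : ℂ) ^ m * gaussSumF (η * χ'N ^ 2) (canonPsi p F₁)
          / gaussSumF η (canonPsi p F₁) := by
  have pprime : p.Prime := Fact.out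
  set Q := q ^ m with hQdef
  have hQ3 : Q % 4 = 3 := hq4
  have hQodd : Q % 2 = 1 := by omega
  have hsm : s * m ≠ 0 := by positivity
  have hQp : Q = p ^ (s * m) := by rw [hQdef, hq, ← pow_mul]
  have podd : p ≠ 2 := by
    rintro rfl
    have : 2 ∣ Q := hQp ▸ dvd_pow_self 2 hsm
    omega
  have hp3 : 3 ≤ p := by have := pprime.two_le; omega
  have hq2 : 2 ≤ q := by
    rw [hq]; calc 2 ≤ p := by omega
    _ ≤ p ^ s := Nat.le_self_pow hs.ne' p
  have hQq : q - 1 ∣ Q - 1 := by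
    have := Nat.sub_dvd_pow_sub_pow q 1 m
    simpa using this
  -- instances
  haveI hsc : IsScalarTower (ZMod p) F₁ F₂ := IsScalarTower.of_algebraMap_eq
    (fun x => (RingHom.congr_fun (RingHom.ext_zmod (algebraMap (ZMod p) F₂)
      ((algebraMap F₁ F₂).comp (algebraMap (ZMod p) F₁))) x))
  haveI : FiniteDimensional (ZMod p) F₁ := Module.Finite.of_finite
  haveI : FiniteDimensional (ZMod p) F₂ := Module.Finite.of_finite
  haveI : FiniteDimensional F₁ F₂ := Module.Finite.of_finite
  haveI hch₁ : CharP F₁ p := charP_of_injective_algebraMap (algebraMap (ZMod p) F₁).injective p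
  haveI hch₂ : CharP F₂ p := charP_of_injective_algebraMap (algebraMap (ZMod p) F₂).injective p
  have hr₁2 : ringChar F₁ ≠ 2 := by rw [ringChar.eq F₁ p]; exact podd
  have hr₂2 : ringChar F₂ ≠ 2 := by rw [ringChar.eq F₂ p]; exact podd
  have h2₁ : (2 : F₁) ≠ 0 := Ring.two_ne_zero hr₁2
  have h2₂ : (2 : F₂) ≠ 0 := Ring.two_ne_zero hr₂2
  have hcard₁ : Fintype.card F₁ = Q := hF₁
  have hcard₂ : Fintype.card F₂ = Q ^ 2 := by rw [hF₂, two_mul, pow_add, sq, hQdef]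
  have injF : Function.Injective (algebraMap F₁ F₂) := (algebraMap F₁ F₂).injective
  -- the imaginary unit
  obtain ⟨i, hi⟩ : IsSquare (-1 : F₂) := by
    rw [FiniteField.isSquare_neg_one_iff, hcard₂, Nat.pow_mod, hQ3]
    norm_num
  have hii : i * i = -1 := hi.symm
  have hi0 : i ≠ 0 := by rintro rfl; rw [mul_zero] at hii; simp at hii
  have hmem : ∀ a : F₁, algebraMap F₁ F₂ a ≠ i := by
    intro a ha
    have hsq1 : IsSquare (-1 : F₁) := ⟨a, injF (by rw [map_neg, map_one, map_mul, ha, hii])⟩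
    rw [FiniteField.isSquare_neg_one_iff, hcard₁] at hsq1
    exact hsq1 hQ3
  -- Frobenius x ↦ x^Q as an F₁-algebra automorphism
  have hpowQ : ∀ a : F₁, a ^ Q = a := fun a => by rw [← hcard₁]; exact FiniteField.pow_card a
  let φ₀ : F₂ →ₐ[F₁] F₂ :=
    { toRingHom := iterateFrobenius F₂ p (s * m),
      commutes' := fun a => by
        show iterateFrobenius F₂ p (s * m) (algebraMap F₁ F₂ a) = algebraMap F₁ F₂ a
        rw [iterateFrobenius_def, ← map_pow, ← hQp, hpowQ] }
  let φ : F₂ ≃ₐ[F₁] F₂ := AlgEquiv.ofBijective φ₀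
    ((Fintype.bijective_iff_injective_and_card _).mpr ⟨φ₀.toRingHom.injective, rfl⟩)
  have hφ : ∀ x : F₂, φ x = x ^ Q := fun x => by
    show φ₀ x = x ^ Q
    show iterateFrobenius F₂ p (s * m) x = x ^ Q
    rw [iterateFrobenius_def, ← hQp]
  have hiQ : i ^ Q = -i := by
    have hi4 : i ^ 4 = 1 := by
      have : i ^ 4 = (i * i) * (i * i) := by ring
      rw [this, hii]; ring
    calc i ^ Q = i ^ (4 * (Q / 4) + 3) := by congr 1; omega
    _ = (i ^ 4) ^ (Q / 4) * i ^ 3 := by rw [pow_add, pow_mul]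
    _ = i ^ 3 := by rw [hi4, one_pow, one_mul]
    _ = (i * i) * i := by ring
    _ = -i := by rw [hii]; ring
  have hφi : φ i = -i := by rw [hφ, hiQ]
  have hnegi : -i ≠ i := by
    intro h
    apply hi0
    have h2i : (2 : F₂) * i = 0 := by rw [two_mul]; nth_rewrite 1 [← h]; ring
    rcases mul_eq_zero.mp h2i with h' | h'
    · exact absurd h' h2₂
    · exact h'
  have hφ1 : φ ≠ 1 := fun h => hnegi (by rw [← hφi, h]; rfl)
  have h1φ : (1 : F₂ ≃ₐ[F₁] F₂) ≠ φ := Ne.symm hφ1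
  -- Galois group
  have hfr : Module.finrank F₁ F₂ = 2 := by
    have h := Module.card_eq_pow_finrank (K := F₁) (V := F₂)
    rw [hcard₁, hcard₂] at h
    exact (Nat.pow_right_injective (by omega) h.symm)
  have hGal : ({1, φ} : Finset (F₂ ≃ₐ[F₁] F₂)) = univ := by
    apply Finset.eq_univ_of_card
    rw [Finset.card_pair h1φ, ← Nat.card_eq_fintype_card, IsGalois.card_aut_eq_finrank, hfr]
  have hnormφ : ∀ x : F₂, algebraMap F₁ F₂ (Algebra.norm F₁ x) = x * x ^ Q := by
    intro x
    rw [Algebra.norm_eq_prod_automorphisms, ← hGal, Finset.prod_pair h1φ, AlgEquiv.one_apply, hφ]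
  have htrφ : ∀ x : F₂, algebraMap F₁ F₂ (Algebra.trace F₁ F₂ x) = x + x ^ Q := by
    intro x
    rw [trace_eq_sum_automorphisms, ← hGal, Finset.sum_pair h1φ, AlgEquiv.one_apply, hφ]
  have htrinv : ∀ x : F₂, Algebra.trace (ZMod p) F₂ (φ x) = Algebra.trace (ZMod p) F₂ x := by
    intro x
    apply (algebraMap (ZMod p) F₂).injective
    have hres : φ x = (φ.restrictScalars (ZMod p)) x := rfl
    rw [hres, trace_eq_sum_automorphisms, trace_eq_sum_automorphisms]
    exact Fintype.sum_bijective (· * φ.restrictScalars (ZMod p))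
      (Group.mulRight_bijective _) _ _ (fun τ => (AlgEquiv.mul_apply _ _ _).symm)
  have hnorminv : ∀ x : F₂, Algebra.norm F₁ (φ x) = Algebra.norm F₁ x := by
    intro x
    apply injF
    rw [Algebra.norm_eq_prod_automorphisms, Algebra.norm_eq_prod_automorphisms]
    exact Fintype.prod_bijective (· * φ) (Group.mulRight_bijective φ) _ _
      (fun τ => (AlgEquiv.mul_apply _ _ _).symm)
  -- the parametrization (a, b) ↦ a + b·i of F₂
  set e : F₁ × F₁ → F₂ := fun ab => algebraMap F₁ F₂ ab.1 + algebraMap F₁ F₂ ab.2 * i with he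
  have hinj : Function.Injective e := by
    rintro ⟨a, b⟩ ⟨c, d⟩ h
    simp only [he] at h
    by_cases hbd : b = d
    · subst hbd
      have : algebraMap F₁ F₂ a = algebraMap F₁ F₂ c := by
        have := add_right_cancel h; exact this
      exact Prod.ext (injF this) rfl
    · exfalso
      apply hmem ((d - b)⁻¹ * (a - c))
      have hdb : (d - b : F₁) ≠ 0 := sub_ne_zero.mpr (Ne.symm hbd)
      have hdb' : algebraMap F₁ F₂ (d - b) ≠ 0 := fun hcon => hdb (injF (by rw [hcon, map_zero]))
      have h1 : algebraMap F₁ F₂ (a - c) = algebraMap F₁ F₂ (d - b) * i := by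
        rw [map_sub, map_sub]; linear_combination h
      rw [map_mul, map_inv₀, h1, ← mul_assoc, inv_mul_cancel₀ hdb', one_mul]
  have hbij : Function.Bijective e := (Fintype.bijective_iff_injective_and_card e).mpr
    ⟨hinj, by rw [Fintype.card_prod, hcard₁, hcard₂]; ring⟩
  have heφ : ∀ a b : F₁, (e (a, b)) ^ Q = e (a, -b) := by
    intro a b
    rw [← hφ]
    show φ (algebraMap F₁ F₂ a + algebraMap F₁ F₂ b * i) = _
    rw [map_add, map_mul, AlgEquiv.commutes, AlgEquiv.commutes, hφi]
    show _ = algebraMap F₁ F₂ a + algebraMap F₁ F₂ (-b) * i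
    rw [map_neg]; ring
  have hnorme : ∀ a b : F₁, Algebra.norm F₁ (e (a, b)) = a ^ 2 + b ^ 2 := by
    intro a b
    apply injF
    rw [hnormφ, heφ]
    symm
    show (algebraMap F₁ F₂ (a ^ 2 + b ^ 2)) = (algebraMap F₁ F₂ a + algebraMap F₁ F₂ b * i) *
      (algebraMap F₁ F₂ a + algebraMap F₁ F₂ (-b) * i)
    rw [map_add, map_pow, map_pow, map_neg]
    linear_combination ((algebraMap F₁ F₂ b)^2) * hii
  have htre : ∀ a b : F₁, Algebra.trace F₁ F₂ (e (a, b)) = 2 * a := by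
    intro a b
    apply injF
    rw [htrφ, heφ]
    symm
    show (algebraMap F₁ F₂ (2 * a)) = (algebraMap F₁ F₂ a + algebraMap F₁ F₂ b * i) +
      (algebraMap F₁ F₂ a + algebraMap F₁ F₂ (-b) * i)
    rw [map_mul, map_neg, map_ofNat]
    ring
  have hsqe : ∀ a b : F₁, (e (a, b)) ^ 2 = e (a ^ 2 - b ^ 2, 2 * a * b) := by
    intro a b
    show (algebraMap F₁ F₂ a + algebraMap F₁ F₂ b * i) ^ 2 =
      algebraMap F₁ F₂ (a ^ 2 - b ^ 2) + algebraMap F₁ F₂ (2 * a * b) * i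
    rw [map_sub, map_pow, map_pow, map_mul, map_mul, map_ofNat]
    linear_combination ((algebraMap F₁ F₂ b)^2) * hii
  have he0 : e (0, 0) = 0 := by
    show algebraMap F₁ F₂ 0 + algebraMap F₁ F₂ 0 * i = (0:F₂)
    rw [map_zero]; ring
  have hΨ₂ : ∀ x : F₂, Psi p F₂ x = Psi p F₁ (Algebra.trace F₁ F₂ x) := by
    intro x
    rw [Psi_apply, Psi_apply, Algebra.trace_trace]
  -- character values over F₁
  set lam : MulChar F₁ ℂ := η * χ'N ^ 2 with hlamdef
  have hmul₁ : ∀ (χ χ' : MulChar F₁ ℂ) (x : F₁), (χ * χ') x = χ x * χ' x := fun χ χ' x => rfl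
  have hmul₂ : ∀ (χ χ' : MulChar F₂ ℂ) (x : F₂), (χ * χ') x = χ x * χ' x := fun χ χ' x => rfl
  have hqc₁ := eq_quadChar η hη
  have hηsq : ∀ z : F₁, z ≠ 0 → η (z ^ 2) = 1 := by
    intro z hz
    have hη2 : η ^ 2 = 1 := hη ▸ pow_orderOf_eq_one η
    rw [map_pow, ← MulChar.pow_apply' η two_ne_zero, hη2, MulChar.one_apply (Ne.isUnit hz)]
  have hηm1 : η (-1 : F₁) = -1 := by
    rw [hqc₁, quadraticChar_neg_one hr₁2]
    have hc4 : ((Fintype.card F₁ : ℕ) : ZMod 4) = 3 := by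
      rw [← ZMod.natCast_mod, hcard₁, hQ3]; rfl
    rw [hc4]
    have h3 : ZMod.χ₄ 3 = -1 := by decide
    rw [h3]; norm_num
  have hχ'N2 : χ'N 2 = 1 := by
    -- 2 lies in the subfield with q elements, so it is an N-th power
    have h2p : (2 : F₁) ^ (p - 1) = 1 := by
      have h2z : (2 : ZMod p) ≠ 0 := by
        intro hcon
        have : ((2 : ℕ) : ZMod p) = 0 := by exact_mod_cast hcon
        rw [ZMod.natCast_eq_zero_iff] at this
        exact podd ((Nat.prime_dvd_prime_iff_eq pprime Nat.prime_two).mp this)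
      have := ZMod.pow_card_sub_one_eq_one h2z
      calc (2 : F₁) ^ (p - 1) = algebraMap (ZMod p) F₁ ((2 : ZMod p) ^ (p - 1)) := by
            rw [map_pow, map_ofNat]
      _ = 1 := by rw [this, map_one]
    have hpq : p - 1 ∣ q - 1 := by
      have := Nat.sub_dvd_pow_sub_pow p 1 s
      rw [one_pow, ← hq] at this; exact this
    have h2q : (2 : F₁) ^ (q - 1) = 1 := by
      obtain ⟨t, ht⟩ := hpq
      rw [ht, pow_mul, h2p, one_pow]
    have h2ne : (2 : F₁) ≠ 0 := h2₁
    obtain ⟨g, hg⟩ := IsCyclic.exists_generator (α := F₁ˣ)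
    have horder : orderOf g = Q - 1 := by
      rw [orderOf_eq_card_of_forall_mem_zpowers hg]
      simp [Fintype.card_units, hcard₁]
    obtain ⟨k, hk⟩ := hg (h2ne.isUnit.unit)
    have hu2 : (h2ne.isUnit.unit : F₁ˣ) ^ ((q : ℤ) - 1) = 1 := by
      have : ((h2ne.isUnit.unit : F₁ˣ) : F₁) ^ (q - 1) = 1 := by
        rw [IsUnit.unit_spec]; exact h2q
      have h' : (h2ne.isUnit.unit : F₁ˣ) ^ (q - 1) = 1 := Units.ext (by
        rw [Units.val_pow_eq_pow_val, this, Units.val_one])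
      have hcast : ((q : ℤ) - 1) = ((q - 1 : ℕ) : ℤ) := by
        have : 1 ≤ q := by omega
        push_cast [this]; ring
      rw [hcast, zpow_natCast, h']
    rw [← hk, ← zpow_mul] at hu2
    have hdvd1 : ((Q - 1 : ℕ) : ℤ) ∣ k * ((q : ℤ) - 1) := by
      rw [← horder]
      exact orderOf_dvd_iff_zpow_eq_one.mpr hu2
    set M := (Q - 1) / (q - 1) with hM
    have hMq : (Q - 1) = M * (q - 1) := (Nat.div_mul_cancel hQq).symm
    have hq1 : (1:ℤ) ≤ q := by exact_mod_cast (by omega : 1 ≤ q)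
    have hdvd2 : (M : ℤ) ∣ k := by
      have h1 : ((Q - 1 : ℕ) : ℤ) = (M : ℤ) * ((q : ℤ) - 1) := by
        rw [hMq]; push_cast [(by omega : 1 ≤ q)]; ring
      rw [h1] at hdvd1
      have hq1ne : ((q : ℤ) - 1) ≠ 0 := by
        have : (2:ℤ) ≤ q := by exact_mod_cast hq2
        omega
      exact (mul_dvd_mul_iff_right hq1ne).mp hdvd1
    have hNk : (N : ℤ) ∣ k := dvd_trans (Int.natCast_dvd_natCast.mpr hNdvd) hdvd2
    obtain ⟨j, hj⟩ := hNk
    have hωN : (χ'N.toUnitHom g) ^ (N : ℤ) = 1 := by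
      have hN1 : χ'N ^ N = 1 := hχ'N ▸ pow_orderOf_eq_one χ'N
      have : ((χ'N.toUnitHom g : ℂˣ) : ℂ) ^ N = 1 := by
        rw [MulChar.coe_toUnitHom, ← MulChar.pow_apply_coe, hN1, MulChar.one_apply_coe]
      rw [zpow_natCast]
      exact Units.ext (by rw [Units.val_pow_eq_pow_val, this, Units.val_one])
    have : χ'N.toUnitHom h2ne.isUnit.unit = 1 := by
      rw [← hk, map_zpow, hj, zpow_mul, hωN, one_zpow]
    calc χ'N 2 = χ'N (h2ne.isUnit.unit : F₁ˣ) := by rw [IsUnit.unit_spec]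
    _ = ((χ'N.toUnitHom h2ne.isUnit.unit : ℂˣ) : ℂ) := by rw [MulChar.coe_toUnitHom]
    _ = 1 := by rw [this, Units.val_one]
  -- λ values
  have hχ'Nsq1 : (χ'N ^ 2) (-1 : F₁) = 1 := by
    rw [MulChar.pow_apply' _ two_ne_zero, sq, ← map_mul, neg_mul_neg, one_mul, map_one]
  have hlamm1 : lam (-1 : F₁) = -1 := by
    rw [hlamdef, hmul₁, hηm1, hχ'Nsq1, mul_one]
  have hlamne1 : lam ≠ 1 := by
    intro h
    rw [h, MulChar.one_apply (IsUnit.neg isUnit_one)] at hlamm1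
    norm_num at hlamm1
  have hlam0 : lam (0 : F₁) = 0 := MulChar.map_nonunit lam not_isUnit_zero
  have hρcases : ρ = 1 ∨ ρ = -1 := by
    rw [hρ]; split <;> simp
  have hlam2 : lam (2 : F₁) = ρ := by
    rw [hlamdef, hmul₁, MulChar.pow_apply' _ two_ne_zero, hχ'N2, one_pow, mul_one]
    rw [hqc₁, quadraticChar_two hr₁2, hρ]
    have h8 : Q % 8 = 3 ∨ Q % 8 = 7 := by omega
    rcases h8 with h8 | h8
    · rw [if_pos h8]
      have hc8 : ((Fintype.card F₁ : ℕ) : ZMod 8) = 3 := by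
        rw [← ZMod.natCast_mod, hcard₁, h8]; rfl
      rw [hc8]
      have h3 : ZMod.χ₈ 3 = -1 := by decide
      rw [h3]; norm_num
    · rw [if_neg (by omega)]
      have hc8 : ((Fintype.card F₁ : ℕ) : ZMod 8) = 7 := by
        rw [← ZMod.natCast_mod, hcard₁, h8]; rfl
      rw [hc8]
      have h7 : ZMod.χ₈ 7 = 1 := by decide
      rw [h7]; norm_num
  have hlam2inv : lam ((2 : F₁)⁻¹) = ρ := by
    have hmul : lam (2⁻¹ : F₁) * lam 2 = 1 := by
      rw [← map_mul, inv_mul_cancel₀ h2₁, map_one]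
    rw [hlam2] at hmul
    rcases hρcases with h | h
    · rw [h] at hmul ⊢; linear_combination hmul
    · rw [h] at hmul ⊢; linear_combination -hmul
  -- Gauss sum facts over F₁
  set Gη := gaussSum η (Psi p F₁) with hGηdef
  set Gl := gaussSum lam (Psi p F₁) with hGldef
  have hηne1 : η ≠ 1 := by
    intro h; rw [h, orderOf_one] at hη; norm_num at hη
  have hηquad : η.IsQuadratic := by
    intro a
    rcases quadraticChar_isQuadratic F₁ a with h | h | h <;> rw [hqc₁, h] <;> norm_num
  have hGη2 : Gη ^ 2 = -(Q : ℂ) := by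
    rw [hGηdef, gaussSum_sq hηne1 hηquad Psi_isPrimitive, hηm1, hcard₁]; ring
  have hQC : (Q : ℂ) ≠ 0 := Nat.cast_ne_zero.mpr (by omega)
  have hGηne : Gη ≠ 0 := by
    intro h
    rw [h] at hGη2
    simp only [ne_eq, zero_pow, neg_eq_zero, OfNat.ofNat_ne_zero, not_false_eq_true] at hGη2
    exact hQC (neg_eq_zero.mp hGη2.symm)
  -- quadratic character and norm
  have hQCnormZ : ∀ x : F₂, x ≠ 0 → quadraticChar F₂ x = quadraticChar F₁ (Algebra.norm F₁ x) := by
    intro x hx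
    have hn0 : Algebra.norm F₁ x ≠ 0 := (Algebra.norm_ne_zero_iff).mpr hx
    have hiff : IsSquare x ↔ IsSquare (Algebra.norm F₁ x) := by
      constructor
      · rintro ⟨y, rfl⟩; exact ⟨Algebra.norm F₁ y, map_mul _ y y⟩
      · rintro ⟨w, hw⟩
        have hw0 : w ≠ 0 := by rintro rfl; rw [mul_zero] at hw; exact hn0 hw
        obtain ⟨v, hv⟩ : ∃ v, Q = 2 * v + 1 := ⟨Q / 2, by omega⟩
        rw [FiniteField.isSquare_iff hr₂2 hx]
        have hhalf : Fintype.card F₂ / 2 = v * (Q + 1) := by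
          rw [hcard₂]
          have hq2' : Q ^ 2 = 2 * (v * (Q + 1)) + 1 := by rw [hv]; ring
          rw [hq2', Nat.mul_add_div (by norm_num)]
          norm_num
        have hxQ1 : x ^ (Q + 1) = algebraMap F₁ F₂ (Algebra.norm F₁ x) := by
          rw [hnormφ x, pow_succ, mul_comm]
        rw [hhalf, mul_comm v (Q+1), pow_mul, hxQ1, hw]
        have h1 : ((w * w) ^ v : F₁) = 1 := by
          have hpow := FiniteField.pow_card_sub_one_eq_one w hw0
          rw [hcard₁] at hpow
          rw [← sq, ← pow_mul]
          have : 2 * v = Q - 1 := by omega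
          rw [this, hpow]
        rw [← map_pow, h1, map_one]
    by_cases hsx : IsSquare x
    · rw [(quadraticChar_one_iff_isSquare hx).mpr hsx,
        (quadraticChar_one_iff_isSquare hn0).mpr (hiff.mp hsx)]
    · rw [quadraticChar_neg_one_iff_not_isSquare.mpr hsx,
        quadraticChar_neg_one_iff_not_isSquare.mpr (fun h => hsx (hiff.mpr h))]
  -- order-2 character χ₄² on F₂
  have hχ₄4 : χ₄ ^ 4 = 1 := hχ₄ ▸ pow_orderOf_eq_one χ₄
  have hord2 : orderOf (χ₄ ^ 2) = 2 := by
    have h1 : (χ₄ ^ 2) ^ 2 = 1 := by rw [← pow_mul]; exact hχ₄4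
    have h2 : χ₄ ^ 2 ≠ 1 := by
      intro h
      have := orderOf_dvd_of_pow_eq_one h
      rw [hχ₄] at this
      norm_num at this
    exact orderOf_eq_prime h1 h2
  have hqc₂ := eq_quadChar (χ₄ ^ 2) hord2
  -- Part 1
  have hχ₄Q : ∀ x : F₂, x ≠ 0 → χ₄ x ^ Q = χ₄ x ^ 3 := by
    intro x hx
    have hQ43 : 4 * (Q / 4) + 3 = Q := by omega
    rw [← hQ43, pow_add, pow_mul, ← MulChar.pow_apply' χ₄ (by norm_num) x, hχ₄4,
      MulChar.one_apply (Ne.isUnit hx), one_pow, one_mul]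
  have part1 : gaussSum (χ₄ * χN) (Psi p F₂) = gaussSum (χ₄ ^ 3 * χN) (Psi p F₂) := by
    rw [gaussSum, gaussSum]
    refine (Fintype.sum_bijective φ φ.bijective _ _ (fun x => ?_)).symm
    show (χ₄ ^ 3 * χN) x * Psi p F₂ x = (χ₄ * χN) (φ x) * Psi p F₂ (φ x)
    have hpsix : Psi p F₂ (φ x) = Psi p F₂ x := by rw [Psi_apply, Psi_apply, htrinv]
    rw [hpsix]
    congr 1
    by_cases hx : x = 0
    · rw [hx, map_zero φ, MulChar.map_nonunit _ not_isUnit_zero,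
        MulChar.map_nonunit _ not_isUnit_zero]
    · rw [hmul₂, hmul₂, hχN, hχN, hnorminv, hφ, map_pow, hχ₄Q x hx,
        MulChar.pow_apply' χ₄ (by norm_num) x]
  -- Step B: 2·S as a sum against the quadratic character of F₂
  have hB : (2:ℂ) * gaussSum (χ₄ * χN) (Psi p F₂)
      = ∑ x : F₂, (1 + ((quadraticChar F₂ x : ℤ):ℂ)) * ((χ₄ * χN) x * Psi p F₂ x) := by
    rw [two_mul]
    nth_rewrite 2 [part1]
    rw [gaussSum, gaussSum, ← Finset.sum_add_distrib]
    refine Finset.sum_congr rfl (fun x _ => ?_)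
    by_cases hx : x = 0
    · subst hx
      rw [MulChar.map_nonunit _ not_isUnit_zero, MulChar.map_nonunit _ not_isUnit_zero]
      ring
    · have hh : ((quadraticChar F₂ x : ℤ):ℂ) = χ₄ x ^ 2 := by
        rw [← hqc₂ x, MulChar.pow_apply' χ₄ two_ne_zero]
      rw [hh, hmul₂, hmul₂, MulChar.pow_apply' χ₄ (by norm_num : (3:ℕ) ≠ 0)]
      ring
  -- Step C: unfold the quadratic-character weight as a sum over squares
  have hC : ∑ x : F₂, (1 + ((quadraticChar F₂ x : ℤ):ℂ)) * ((χ₄ * χN) x * Psi p F₂ x)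
      = ∑ γ : F₂, ((χ₄ * χN) (γ^2) * Psi p F₂ (γ^2)) :=
    (sum_sq_expand hr₂2 _).symm
  -- Step D: parametrize by F₁ × F₁
  have hD : ∑ γ : F₂, ((χ₄ * χN) (γ^2) * Psi p F₂ (γ^2))
      = ∑ ab : F₁ × F₁, lam (ab.1^2 + ab.2^2) * Psi p F₁ (2*ab.1^2 - 2*ab.2^2) := by
    refine (Fintype.sum_bijective e hbij _ _ (fun ab => ?_)).symm
    obtain ⟨a, b⟩ := ab
    have hΨpart : Psi p F₂ ((e (a,b))^2) = Psi p F₁ (2*a^2 - 2*b^2) := by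
      rw [hΨ₂, hsqe, htre]
      congr 1; ring
    rw [hΨpart]
    congr 1
    by_cases hab : e (a, b) = 0
    · have h00 : (a, b) = ((0 : F₁), (0 : F₁)) := hinj (by rw [hab, he0])
      have ha0 : a = 0 := congrArg Prod.fst h00
      have hb0 : b = 0 := congrArg Prod.snd h00
      subst ha0; subst hb0
      rw [hab]
      rw [MulChar.map_nonunit lam (by norm_num : ¬IsUnit ((0:F₁)^2 + 0^2)),
        MulChar.map_nonunit _ (by rw [zero_pow two_ne_zero]; exact not_isUnit_zero)]
    · have hn : Algebra.norm F₁ (e (a,b)) = a^2 + b^2 := hnorme a b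
      have hn0 : Algebra.norm F₁ (e (a,b)) ≠ 0 := Algebra.norm_ne_zero_iff.mpr hab
      rw [hmul₂, hlamdef, hmul₁]
      congr 1
      · rw [map_pow, ← MulChar.pow_apply' χ₄ two_ne_zero, hqc₂, hQCnormZ _ hab, hn, ← hqc₁]
      · rw [hχN, map_pow, hn, map_pow, ← MulChar.pow_apply' χ'N two_ne_zero]
  -- small numeric values
  have h4 : (4:F₁) ≠ 0 := by
    have h42 : (4:F₁) = 2^2 := by norm_num
    rw [h42]; exact pow_ne_zero 2 h2₁
  have hneg2 : (-2:F₁) ≠ 0 := neg_ne_zero.mpr h2₁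
  have hneg4 : (-4:F₁) ≠ 0 := neg_ne_zero.mpr h4
  have hη4inv : η ((4:F₁)⁻¹) = 1 := by
    have h42 : ((4:F₁))⁻¹ = (2⁻¹)^2 := by rw [inv_pow]; norm_num
    rw [h42]; exact hηsq _ (inv_ne_zero h2₁)
  have hηneg4inv : η ((-4:F₁)⁻¹) = -1 := by
    rw [show ((-4:F₁))⁻¹ = (-1) * (4:F₁)⁻¹ from by rw [inv_neg, neg_one_mul],
      map_mul, hηm1, hη4inv]
    ring
  have hlamneg2inv : lam ((-2:F₁)⁻¹) = -ρ := by
    rw [show ((-2:F₁))⁻¹ = (-1) * (2:F₁)⁻¹ from by rw [inv_neg, neg_one_mul],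
      map_mul, hlamm1, hlam2inv]
    ring
  -- Step E: expand squares in both coordinates
  have hexp : ∀ f : F₁ → ℂ, ∑ a : F₁, f (a^2) = ∑ x : F₁, (1 + η x) * f x := by
    intro f
    rw [sum_sq_expand hr₁2 f]
    exact Finset.sum_congr rfl (fun x _ => by rw [hqc₁ x])
  have hshift : ∀ (y : F₁) (G : F₁ → ℂ), ∑ x : F₁, G (x + y) = ∑ t : F₁, G t := by
    intro y G
    exact Fintype.sum_bijective (· + y) (Equiv.addRight y).bijective _ _ (fun x => rfl)
  have hT : ∑ ab : F₁ × F₁, lam (ab.1^2 + ab.2^2) * Psi p F₁ (2*ab.1^2 - 2*ab.2^2)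
      = ∑ y : F₁, ∑ x : F₁, (1 + η x) * ((1 + η y) * (lam (x + y) * Psi p F₁ (2*x - 2*y))) := by
    rw [Fintype.sum_prod_type]
    calc ∑ a : F₁, ∑ b : F₁, lam (a^2 + b^2) * Psi p F₁ (2*a^2 - 2*b^2)
        = ∑ a : F₁, ∑ y : F₁, (1 + η y) * (lam (a^2 + y) * Psi p F₁ (2*a^2 - 2*y)) :=
          Finset.sum_congr rfl (fun a _ =>
            hexp (fun t => lam (a^2 + t) * Psi p F₁ (2*a^2 - 2*t)))
      _ = ∑ y : F₁, ∑ a : F₁, (1 + η y) * (lam (a^2 + y) * Psi p F₁ (2*a^2 - 2*y)) :=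
          Finset.sum_comm
      _ = ∑ y : F₁, ∑ x : F₁, (1 + η x) * ((1 + η y) * (lam (x + y) * Psi p F₁ (2*x - 2*y))) :=
          Finset.sum_congr rfl (fun y _ =>
            hexp (fun t => (1 + η y) * (lam (t + y) * Psi p F₁ (2*t - 2*y))))
  have hsplit : ∑ y : F₁, ∑ x : F₁, (1 + η x) * ((1 + η y) * (lam (x + y) * Psi p F₁ (2*x - 2*y)))
      = (∑ y : F₁, ∑ x : F₁, lam (x + y) * Psi p F₁ (2*x - 2*y))
      + (∑ y : F₁, ∑ x : F₁, η x * (lam (x + y) * Psi p F₁ (2*x - 2*y)))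
      + (∑ y : F₁, ∑ x : F₁, η y * (lam (x + y) * Psi p F₁ (2*x - 2*y)))
      + (∑ y : F₁, ∑ x : F₁, η x * η y * (lam (x + y) * Psi p F₁ (2*x - 2*y))) := by
    rw [← Finset.sum_add_distrib, ← Finset.sum_add_distrib, ← Finset.sum_add_distrib]
    refine Finset.sum_congr rfl (fun y _ => ?_)
    rw [← Finset.sum_add_distrib, ← Finset.sum_add_distrib, ← Finset.sum_add_distrib]
    refine Finset.sum_congr rfl (fun x _ => ?_)
    ring
  -- T1 = 0
  have hT1 : (∑ y : F₁, ∑ x : F₁, lam (x + y) * Psi p F₁ (2*x - 2*y)) = 0 := by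
    have hinner : ∀ y : F₁, ∑ x : F₁, lam (x + y) * Psi p F₁ (2*x - 2*y)
        = (∑ t : F₁, lam t * Psi p F₁ (2*t)) * Psi p F₁ ((-4)*y) := by
      intro y
      calc ∑ x : F₁, lam (x + y) * Psi p F₁ (2*x - 2*y)
          = ∑ x : F₁, (fun t => lam t * Psi p F₁ (2*t) * Psi p F₁ ((-4)*y)) (x + y) := by
            refine Finset.sum_congr rfl (fun x _ => ?_)
            show lam (x + y) * Psi p F₁ (2*x - 2*y)
              = lam (x + y) * Psi p F₁ (2*(x + y)) * Psi p F₁ ((-4)*y)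
            rw [mul_assoc, ← AddChar.map_add_eq_mul]
            congr 2
            ring
        _ = ∑ t : F₁, lam t * Psi p F₁ (2*t) * Psi p F₁ ((-4)*y) :=
            hshift y (fun t => lam t * Psi p F₁ (2*t) * Psi p F₁ ((-4)*y))
        _ = (∑ t : F₁, lam t * Psi p F₁ (2*t)) * Psi p F₁ ((-4)*y) := by
            rw [Finset.sum_mul]
    rw [Finset.sum_congr rfl (fun y _ => hinner y), ← Finset.mul_sum,
      sum_psi_zero hneg4, mul_zero]
  -- T2
  have hT2 : (∑ y : F₁, ∑ x : F₁, η x * (lam (x + y) * Psi p F₁ (2*x - 2*y)))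
      = Gη * (-ρ * Gl) := by
    rw [Finset.sum_comm]
    have hinner : ∀ x : F₁, ∑ y : F₁, η x * (lam (x + y) * Psi p F₁ (2*x - 2*y))
        = (η x * Psi p F₁ (4*x)) * (-ρ * Gl) := by
      intro x
      calc ∑ y : F₁, η x * (lam (x + y) * Psi p F₁ (2*x - 2*y))
          = ∑ y : F₁, (fun t => η x * (lam t * (Psi p F₁ (4*x) * Psi p F₁ ((-2)*t)))) (y + x) := by
            refine Finset.sum_congr rfl (fun y _ => ?_)
            show η x * (lam (x + y) * Psi p F₁ (2*x - 2*y))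
              = η x * (lam (y + x) * (Psi p F₁ (4*x) * Psi p F₁ ((-2)*(y + x))))
            rw [← AddChar.map_add_eq_mul, add_comm x y]
            congr 2
            ring
        _ = ∑ t : F₁, η x * (lam t * (Psi p F₁ (4*x) * Psi p F₁ ((-2)*t))) :=
            hshift x (fun t => η x * (lam t * (Psi p F₁ (4*x) * Psi p F₁ ((-2)*t))))
        _ = (η x * Psi p F₁ (4*x)) * (∑ t : F₁, lam t * Psi p F₁ ((-2)*t)) := by
            rw [Finset.mul_sum]
            exact Finset.sum_congr rfl (fun t _ => by ring)
        _ = (η x * Psi p F₁ (4*x)) * (-ρ * Gl) := by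
            rw [sum_mulChar_psi lam hneg2, hlamneg2inv, hGldef]
    rw [Finset.sum_congr rfl (fun x _ => hinner x), ← Finset.sum_mul,
      sum_mulChar_psi η h4, hη4inv, one_mul, hGηdef]
  -- T3
  have hT3 : (∑ y : F₁, ∑ x : F₁, η y * (lam (x + y) * Psi p F₁ (2*x - 2*y)))
      = (-Gη) * (ρ * Gl) := by
    have hinner : ∀ y : F₁, ∑ x : F₁, η y * (lam (x + y) * Psi p F₁ (2*x - 2*y))
        = (η y * Psi p F₁ ((-4)*y)) * (ρ * Gl) := by
      intro y
      calc ∑ x : F₁, η y * (lam (x + y) * Psi p F₁ (2*x - 2*y))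
          = ∑ x : F₁, (fun t => η y * (lam t * (Psi p F₁ ((-4)*y) * Psi p F₁ (2*t)))) (x + y) := by
            refine Finset.sum_congr rfl (fun x _ => ?_)
            show η y * (lam (x + y) * Psi p F₁ (2*x - 2*y))
              = η y * (lam (x + y) * (Psi p F₁ ((-4)*y) * Psi p F₁ (2*(x + y))))
            rw [← AddChar.map_add_eq_mul]
            congr 2
            ring
        _ = ∑ t : F₁, η y * (lam t * (Psi p F₁ ((-4)*y) * Psi p F₁ (2*t))) :=
            hshift y (fun t => η y * (lam t * (Psi p F₁ ((-4)*y) * Psi p F₁ (2*t))))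
        _ = (η y * Psi p F₁ ((-4)*y)) * (∑ t : F₁, lam t * Psi p F₁ (2*t)) := by
            rw [Finset.mul_sum]
            exact Finset.sum_congr rfl (fun t _ => by ring)
        _ = (η y * Psi p F₁ ((-4)*y)) * (ρ * Gl) := by
            rw [sum_mulChar_psi lam h2₁, hlam2inv, hGldef]
    rw [Finset.sum_congr rfl (fun y _ => hinner y), ← Finset.sum_mul,
      sum_mulChar_psi η hneg4, hηneg4inv, hGηdef]
    ring
  -- T4 = 0
  have hT4 : (∑ y : F₁, ∑ x : F₁, η x * η y * (lam (x + y) * Psi p F₁ (2*x - 2*y))) = 0 := by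
    have hp1 : (∑ z : F₁ × F₁, η z.2 * η z.1 * (lam (z.2 + z.1) * Psi p F₁ (2*z.2 - 2*z.1)))
        = ∑ y : F₁, ∑ x : F₁, η x * η y * (lam (x + y) * Psi p F₁ (2*x - 2*y)) := by
      rw [Fintype.sum_prod_type]
    rw [← hp1]
    have hfilter1 : ∑ z : F₁ × F₁, η z.2 * η z.1 * (lam (z.2 + z.1) * Psi p F₁ (2*z.2 - 2*z.1))
        = ∑ z ∈ Finset.univ.filter (fun z : F₁ × F₁ => z.2 + z.1 ≠ 0),
            η z.2 * η z.1 * (lam (z.2 + z.1) * Psi p F₁ (2*z.2 - 2*z.1)) := by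
      symm
      refine Finset.sum_filter_of_ne (fun z _ hz h0 => hz ?_)
      rw [h0, MulChar.map_nonunit lam not_isUnit_zero]
      ring
    rw [hfilter1]
    have hbij4 : ∑ z ∈ Finset.univ.filter (fun z : F₁ × F₁ => z.2 + z.1 ≠ 0),
          η z.2 * η z.1 * (lam (z.2 + z.1) * Psi p F₁ (2*z.2 - 2*z.1))
        = ∑ w ∈ Finset.univ.filter (fun w : F₁ × F₁ => w.1 ≠ 0),
            η (w.1*w.2) * η (w.1*(1 - w.2))
              * (lam (w.1*w.2 + w.1*(1 - w.2)) * Psi p F₁ (2*(w.1*w.2) - 2*(w.1*(1 - w.2)))) := by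
      symm
      refine Finset.sum_nbij' (fun w => (w.1*(1 - w.2), w.1*w.2))
        (fun z => (z.2 + z.1, z.2 / (z.2 + z.1))) ?_ ?_ ?_ ?_ ?_
      · intro w hw
        rw [Finset.mem_filter] at hw ⊢
        refine ⟨Finset.mem_univ _, ?_⟩
        show w.1*w.2 + w.1*(1 - w.2) ≠ 0
        rw [show w.1*w.2 + w.1*(1 - w.2) = w.1 from by ring]
        exact hw.2
      · intro z hz
        rw [Finset.mem_filter] at hz ⊢
        exact ⟨Finset.mem_univ _, hz.2⟩
      · intro w hw
        rw [Finset.mem_filter] at hw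
        have hw1 : w.1 ≠ 0 := hw.2
        ext
        · show w.1*w.2 + w.1*(1 - w.2) = w.1
          ring
        · show (w.1*w.2) / (w.1*w.2 + w.1*(1 - w.2)) = w.2
          rw [show w.1*w.2 + w.1*(1 - w.2) = w.1 from by ring]
          rw [mul_comm, mul_div_assoc, div_self hw1, mul_one]
      · intro z hz
        rw [Finset.mem_filter] at hz
        have hz1 : z.2 + z.1 ≠ 0 := hz.2
        ext
        · show (z.2 + z.1) * (1 - z.2 / (z.2 + z.1)) = z.1
          field_simp
          ring
        · show (z.2 + z.1) * (z.2 / (z.2 + z.1)) = z.2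
          field_simp
      · intro w hw
        rfl
    rw [hbij4]
    have hunfilter : ∑ w ∈ Finset.univ.filter (fun w : F₁ × F₁ => w.1 ≠ 0),
          η (w.1*w.2) * η (w.1*(1 - w.2))
            * (lam (w.1*w.2 + w.1*(1 - w.2)) * Psi p F₁ (2*(w.1*w.2) - 2*(w.1*(1 - w.2))))
        = ∑ w : F₁ × F₁,
            η (w.1*w.2) * η (w.1*(1 - w.2))
              * (lam (w.1*w.2 + w.1*(1 - w.2)) * Psi p F₁ (2*(w.1*w.2) - 2*(w.1*(1 - w.2)))) := by
      refine Finset.sum_filter_of_ne (fun w _ hz h0 => hz ?_)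
      rw [h0, zero_mul, MulChar.map_nonunit η not_isUnit_zero]
      ring
    rw [hunfilter]
    have hpoint : ∀ w : F₁ × F₁,
        η (w.1*w.2) * η (w.1*(1 - w.2))
            * (lam (w.1*w.2 + w.1*(1 - w.2)) * Psi p F₁ (2*(w.1*w.2) - 2*(w.1*(1 - w.2))))
        = η w.2 * η (1 - w.2) * (lam w.1 * Psi p F₁ ((2*(2*w.2 - 1)) * w.1)) := by
      intro w
      rw [show w.1*w.2 + w.1*(1 - w.2) = w.1 from by ring,
        show (2*(w.1*w.2) - 2*(w.1*(1 - w.2)) : F₁) = (2*(2*w.2 - 1)) * w.1 from by ring]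
      by_cases hw1 : w.1 = 0
      · rw [hw1, MulChar.map_nonunit lam not_isUnit_zero]
        ring
      · rw [map_mul, map_mul]
        have h11 : η w.1 * η w.1 = 1 := by
          rw [← map_mul, ← sq]; exact hηsq _ hw1
        linear_combination (η w.2 * η (1 - w.2) * (lam w.1
          * Psi p F₁ ((2*(2*w.2 - 1)) * w.1))) * h11
    rw [Finset.sum_congr rfl (fun w _ => hpoint w)]
    rw [Fintype.sum_prod_type]
    rw [Finset.sum_comm]
    have hinner4 : ∀ u : F₁, ∑ s' : F₁, η u * η (1 - u) * (lam s' * Psi p F₁ ((2*(2*u - 1)) * s'))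
        = η u * η (1 - u) * lam ((2*(2*u - 1))⁻¹) * Gl := by
      intro u
      rw [← Finset.mul_sum]
      by_cases hu : (2*(2*u - 1) : F₁) = 0
      · rw [hu, inv_zero, MulChar.map_nonunit lam not_isUnit_zero]
        have hz : ∑ s' : F₁, lam s' * Psi p F₁ ((0:F₁) * s') = 0 := by
          have hone : ∀ s' : F₁, lam s' * Psi p F₁ ((0:F₁) * s') = lam s' := by
            intro s'; rw [zero_mul, AddChar.map_zero_eq_one, mul_one]
          rw [Finset.sum_congr rfl (fun s' _ => hone s')]
          exact MulChar.sum_eq_zero_of_ne_one hlamne1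
        rw [hz]
        ring
      · rw [sum_mulChar_psi lam hu, hGldef]
        ring
    rw [Finset.sum_congr rfl (fun u _ => hinner4 u)]
    have hU : ∑ u : F₁, η u * η (1 - u) * lam ((2*(2*u - 1))⁻¹) * Gl
        = (∑ u : F₁, η u * η (1 - u) * lam ((2*(2*u - 1))⁻¹)) * Gl := by
      rw [Finset.sum_mul]
    rw [hU]
    have hU0 : (∑ u : F₁, η u * η (1 - u) * lam ((2*(2*u - 1))⁻¹)) = 0 := by
      have hinv : Function.Bijective (fun u : F₁ => 1 - u) :=
        Function.Involutive.bijective (fun u => by show 1 - (1 - u) = u; ring)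
      have hre : (∑ u : F₁, η (1 - u) * η (1 - (1 - u)) * lam ((2*(2*(1 - u) - 1))⁻¹))
          = ∑ u : F₁, η u * η (1 - u) * lam ((2*(2*u - 1))⁻¹) :=
        Fintype.sum_bijective (fun u : F₁ => 1 - u) hinv _ _ (fun u => rfl)
      have hptU : ∀ u : F₁, η (1 - u) * η (1 - (1 - u)) * lam ((2*(2*(1 - u) - 1))⁻¹)
          = - (η u * η (1 - u) * lam ((2*(2*u - 1))⁻¹)) := by
        intro u
        rw [show (1 - (1 - u) : F₁) = u from by ring,
          show (2*(2*(1 - u) - 1) : F₁) = -(2*(2*u - 1)) from by ring,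
          inv_neg,
          show (-(2*(2*u - 1))⁻¹ : F₁) = (-1) * (2*(2*u - 1))⁻¹ from (neg_one_mul _).symm,
          map_mul, hlamm1]
        ring
      have h2U : (∑ u : F₁, η u * η (1 - u) * lam ((2*(2*u - 1))⁻¹))
          = - (∑ u : F₁, η u * η (1 - u) * lam ((2*(2*u - 1))⁻¹)) := by
        nth_rewrite 1 [← hre]
        rw [Finset.sum_congr rfl (fun u _ => hptU u)]
        rw [← Finset.sum_neg_distrib]
      exact add_self_eq_zero.mp (by linear_combination h2U)
    rw [hU0, zero_mul]
  -- conclusion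
  have hkey : gaussSum (χ₄ * χN) (Psi p F₂) = -ρ * (Gη * Gl) := by
    have h2S : (2:ℂ) * gaussSum (χ₄ * χN) (Psi p F₂) = (2:ℂ) * (-ρ * (Gη * Gl)) := by
      rw [hB, hC, hD, hT, hsplit, hT1, hT2, hT3, hT4]
      ring
    exact mul_left_cancel₀ two_ne_zero h2S
  refine ⟨?_, ?_⟩
  · rw [gaussSumF_eq, gaussSumF_eq]; exact part1
  · rw [gaussSumF_eq, gaussSumF_eq, gaussSumF_eq, hkey, ← hGηdef, ← hGldef]
    rw [show ((q:ℂ))^m = (Q:ℂ) from by rw [hQdef]; push_cast; ring]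
    rw [eq_div_iff hGηne]
    linear_combination (-ρ*Gl) * hGη2
end

section
/- Let q be an odd prime power, M an odd positive integer dividing q²+q+1, and N = (q²+q+1)/M. Assume the Gauss periods ψ_{F_{q³}}(C_i^{(N,q³)}), 0 ≤ i ≤ N−1, take exactly the three values −M+2q, −M+q, −M, and set I_1, I_2, I_3 to be the sets of indices i ∈ Z_N for which the Gauss period equals −M+2q, −M+q, −M respectively. Then |I_1| = (M−1)/2, |I_2| = q−M+2, and |I_3| = (q²+q+1)/M − q + (M−3)/2. -/
set_option maxHeartbeats 1000000

open scoped Classical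

def cycClass {F : Type} [Field F] (ω : F) (N i : ℕ) : Set F :=
  {x | ∃ k : ℕ, x = ω ^ i * (ω ^ N) ^ k}

noncomputable def psiSum {F : Type} [Field F] [Fintype F] (ψ : F → ℂ) (S : Set F) : ℂ :=
  ∑ x ∈ S.toFinset, ψ x

lemma aux_trace_ne (p : ℕ) [Fact p.Prime] (F : Type) [Field F] [Fintype F] [Algebra (ZMod p) F] :
    ∃ b : F, Algebra.trace (ZMod p) F b ≠ 0 := by
  haveI : CharP F p := charP_of_injective_ringHom (algebraMap (ZMod p) F).injective p
  have hrc : ringChar F = p := ringChar.eq F p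
  subst hrc
  obtain ⟨b, hb⟩ := FiniteField.trace_to_zmod_nondegenerate F (one_ne_zero (α := F))
  exact ⟨1 * b, hb⟩

lemma aux_char (p : ℕ) [Fact p.Prime] (F : Type) [Field F] [Fintype F] [Algebra (ZMod p) F] :
    ∃ ψ : AddChar F ℂ, (∀ x, canonPsi p F x = ψ x) ∧ (∑ x : F, ψ x = 0) := by
  have hp : p.Prime := Fact.out
  haveI : NeZero p := ⟨hp.pos.ne'⟩
  set ζ : ℂ := Complex.exp (2 * ↑Real.pi * Complex.I / (p : ℂ)) with hζdef
  have hprim : IsPrimitiveRoot ζ p := Complex.isPrimitiveRoot_exp p hp.pos.ne'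
  have hζp : ζ ^ p = 1 := hprim.pow_eq_one
  set ψ : AddChar F ℂ :=
    (AddChar.zmodChar p hζp).compAddMonoidHom (Algebra.trace (ZMod p) F).toAddMonoidHom with hψdef
  have hψx : ∀ x : F, ψ x = ζ ^ (Algebra.trace (ZMod p) F x).val := by
    intro x
    simp [hψdef, AddChar.compAddMonoidHom, AddChar.zmodChar_apply]
  have heq : ∀ x, canonPsi p F x = ψ x := by
    intro x
    rw [hψx, canonPsi, hζdef, ← Complex.exp_nat_mul]
    congr 1
    ring
  refine ⟨ψ, heq, ?_⟩
  apply AddChar.sum_eq_zero_of_ne_one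
  obtain ⟨b, hb⟩ := aux_trace_ne p F
  intro hone
  apply hb
  have h1 : ψ b = 1 := by rw [hone]; rfl
  rw [hψx] at h1
  have hdvd := (hprim.pow_eq_one_iff_dvd _).mp h1
  have hlt : (Algebra.trace (ZMod p) F b).val < p := ZMod.val_lt _
  exact (ZMod.val_eq_zero _).mp (Nat.eq_zero_of_dvd_of_lt hdvd hlt)

/-- Let `q` be an odd prime power, `M` an odd positive divisor of
`q²+q+1` and `N = (q²+q+1)/M`. If the Gauss periods `ψ_{F_{q³}}(C_i^{(N,q³)})`,
`0 ≤ i ≤ N-1`, take exactly the three values `-M+2q`, `-M+q`, `-M` and `I_1, I_2, I_3`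
are the corresponding index sets, then `|I_1| = (M-1)/2`, `|I_2| = q-M+2` and
`|I_3| = (q²+q+1)/M - q + (M-3)/2`. -/
theorem stmt4 (p n q M N : ℕ) [Fact p.Prime] (hq : q = p ^ n) (hn : 0 < n)
    (hodd : Odd q) (hModd : Odd M) (hM : 0 < M) (hMdvd : M ∣ q ^ 2 + q + 1)
    (hN : N = (q ^ 2 + q + 1) / M)
    (F : Type) [Field F] [Fintype F] [Algebra (ZMod p) F]
    (hF : Fintype.card F = q ^ 3)
    (ω : F) (hω : ∀ x : F, x ≠ 0 → ∃ k : ℕ, ω ^ k = x)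
    (hthree : {v : ℂ | ∃ i < N, psiSum (canonPsi p F) (cycClass ω N i) = v}
      = {(-(M : ℂ) + 2 * (q : ℂ)), (-(M : ℂ) + (q : ℂ)), (-(M : ℂ))})
    (I₁ I₂ I₃ : Finset ℕ)
    (hI₁ : I₁ = (Finset.range N).filter
      (fun i => psiSum (canonPsi p F) (cycClass ω N i) = -(M : ℂ) + 2 * (q : ℂ)))
    (hI₂ : I₂ = (Finset.range N).filter
      (fun i => psiSum (canonPsi p F) (cycClass ω N i) = -(M : ℂ) + (q : ℂ)))
    (hI₃ : I₃ = (Finset.range N).filter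
      (fun i => psiSum (canonPsi p F) (cycClass ω N i) = -(M : ℂ))) :
    (I₁.card : ℤ) = ((M : ℤ) - 1) / 2 ∧ (I₂.card : ℤ) = (q : ℤ) - M + 2 ∧
      (I₃.card : ℤ) = ((q : ℤ) ^ 2 + q + 1) / M - q + ((M : ℤ) - 3) / 2 := by
  -- abbreviate the Gauss periods
  let G : ℕ → ℂ := fun i => psiSum (canonPsi p F) (cycClass ω N i)
  have hG : ∀ i, psiSum (canonPsi p F) (cycClass ω N i) = G i := fun _ => rfl
  simp only [hG] at hthree hI₁ hI₂ hI₃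
  -- numeric facts
  have hp : p.Prime := Fact.out
  have hpodd : Odd p := by
    rcases hp.eq_two_or_odd' with h2 | h
    · exfalso
      have h2q : 2 ∣ q := by rw [hq, h2]; exact dvd_pow_self 2 hn.ne'
      rw [Nat.odd_iff] at hodd
      omega
    · exact h
  have hq3 : 3 ≤ q := by
    have hp3 : 3 ≤ p := by
      have := hp.two_le
      rcases hpodd with ⟨t, ht⟩
      omega
    calc 3 ≤ p := hp3
    _ ≤ p ^ n := Nat.le_self_pow hn.ne' p
    _ = q := hq.symm
  have hq30 : 27 ≤ q ^ 3 := by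
    calc 27 = 3 ^ 3 := rfl
    _ ≤ q ^ 3 := Nat.pow_le_pow_left hq3 3
  have hNM : N * M = q ^ 2 + q + 1 := by
    rw [hN]; exact Nat.div_mul_cancel hMdvd
  have hNpos : 0 < N := by
    rw [hN]
    exact Nat.div_pos (Nat.le_of_dvd (by positivity) hMdvd) hM
  set m : ℕ := q ^ 3 - 1 with hmdef
  set f : ℕ := (q - 1) * M with hfdef
  have hmNf : m = N * f := by
    have h1 : (q - 1) * (q ^ 2 + q + 1) + 1 = q ^ 3 := by
      obtain ⟨r, hr⟩ : ∃ r, q = r + 1 := ⟨q - 1, by omega⟩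
      subst hr
      simp only [Nat.add_sub_cancel]
      ring
    have h2 : N * ((q - 1) * M) = (q - 1) * (N * M) := by ring
    rw [hmdef, hfdef, h2, hNM]
    omega
  have hmpos : 0 < m := by omega
  have hNm : N ∣ m := ⟨f, hmNf⟩
  have hfpos : 0 < f := by
    rw [hfdef]; exact Nat.mul_pos (by omega) hM
  -- the additive character
  obtain ⟨ψ, hψeq, hψsum⟩ := aux_char p F
  have hψ0 : ψ 0 = 1 := AddChar.map_zero_eq_one ψ
  have hψadd : ∀ x y : F, ψ (x + y) = ψ x * ψ y := fun x y => AddChar.map_add_eq_mul ψ x y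
  have hψt : ∀ t : F, t ≠ 0 → ∑ x : F, ψ (t * x) = 0 := by
    intro t ht
    exact (Fintype.sum_bijective (t * ·) (mulLeft_bijective₀ t ht) _ _ fun x => rfl).trans hψsum
  -- ω is a primitive root
  have hω0 : ω ≠ 0 := by
    have hcardu : 1 < Fintype.card Fˣ := by
      rw [Fintype.card_units, hF]; omega
    obtain ⟨v, hv⟩ := Fintype.exists_ne_of_one_lt_card hcardu 1
    obtain ⟨k, hk⟩ := hω (v : F) (Units.ne_zero v)
    intro h0
    rw [h0] at hk
    rcases Nat.eq_zero_or_pos k with hk0 | hk0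
    · rw [hk0, pow_zero] at hk
      exact hv (Units.ext hk.symm)
    · rw [zero_pow hk0.ne'] at hk
      exact Units.ne_zero v hk.symm
  set u : Fˣ := Units.mk0 ω hω0 with hudef
  have hucoe : (u : F) = ω := rfl
  have hupow : ∀ k : ℕ, ((u ^ k : Fˣ) : F) = ω ^ k := by
    intro k; rw [Units.val_pow_eq_pow_val, hucoe]
  have hordu : orderOf u = m := by
    have hgen : ∀ v : Fˣ, v ∈ Subgroup.zpowers u := by
      intro v
      obtain ⟨k, hk⟩ := hω (v : F) (Units.ne_zero v)
      refine Subgroup.mem_zpowers_iff.mpr ⟨(k : ℤ), ?_⟩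
      rw [zpow_natCast]
      exact Units.ext (by rw [hupow k]; exact hk)
    have h1 : orderOf u = Nat.card Fˣ := orderOf_eq_card_of_forall_mem_zpowers hgen
    rw [h1, Nat.card_eq_fintype_card, Fintype.card_units, hF]
  have hord : orderOf ω = m := by
    rw [← hucoe, orderOf_units, hordu]
  have hωm : ω ^ m = 1 := by rw [← hord]; exact pow_orderOf_eq_one ω
  have hωinj : ∀ a b : ℕ, a < m → b < m → ω ^ a = ω ^ b → a = b := by
    intro a b ha hb hab
    have h1 : u ^ a = u ^ b := Units.ext (by rw [hupow, hupow]; exact hab)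
    have h2 : a ≡ b [MOD m] := by rw [← hordu]; exact pow_eq_pow_iff_modEq.mp h1
    unfold Nat.ModEq at h2
    rw [Nat.mod_eq_of_lt ha, Nat.mod_eq_of_lt hb] at h2
    exact h2
  have hpowN : ∀ a b : ℕ, ω ^ a = ω ^ b → a % N = b % N := by
    intro a b hab
    have h1 : u ^ a = u ^ b := Units.ext (by rw [hupow, hupow]; exact hab)
    have h2 : a ≡ b [MOD m] := by rw [← hordu]; exact pow_eq_pow_iff_modEq.mp h1
    exact h2.of_dvd hNm
  -- discrete log
  obtain ⟨dl, hdl⟩ : ∃ dl : F → ℕ, ∀ x, x ≠ 0 → ω ^ dl x = x :=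
    ⟨fun x => if hx : x ≠ 0 then Classical.choose (hω x hx) else 0,
     fun x hx => by simp only [ne_eq, hx, not_false_eq_true, dif_pos]
                    exact Classical.choose_spec (hω x hx)⟩
  set cls : F → ℕ := fun x => dl x % N with hclsdef
  have hclslt : ∀ x, cls x < N := fun x => Nat.mod_lt _ hNpos
  have hclspow : ∀ (x : F) (k : ℕ), x ≠ 0 → x = ω ^ k → cls x = k % N := by
    intro x k hx hk
    have h := hpowN (dl x) k (by rw [hdl x hx, ← hk])
    exact h
  have hclsmul : ∀ x y : F, x ≠ 0 → y ≠ 0 → cls (x * y) = (cls x + cls y) % N := by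
    intro x y hx hy
    have hxy : x * y ≠ 0 := mul_ne_zero hx hy
    have h1 : cls (x * y) = (dl x + dl y) % N := by
      apply hclspow _ _ hxy
      rw [pow_add, hdl x hx, hdl y hy]
    rw [h1, hclsdef]
    simp [Nat.add_mod]
  have hcls1 : cls (1 : F) = 0 := by
    have h := hclspow 1 0 one_ne_zero (by simp)
    simpa using h
  -- membership in cyclotomic classes
  have hmemC : ∀ i, i < N → ∀ x : F, x ∈ cycClass ω N i ↔ (x ≠ 0 ∧ cls x = i) := by
    intro i hi x
    constructor
    · rintro ⟨k, rfl⟩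
      have hx : ω ^ i * (ω ^ N) ^ k = ω ^ (i + N * k) := by
        rw [pow_add, pow_mul]
      have hne : ω ^ i * (ω ^ N) ^ k ≠ 0 := by
        rw [hx]; exact pow_ne_zero _ hω0
      refine ⟨hne, ?_⟩
      rw [hclspow _ (i + N * k) hne hx]
      rw [Nat.add_mul_mod_self_left, Nat.mod_eq_of_lt hi]
    · rintro ⟨hx, hc⟩
      set K : ℕ := dl x + m * N with hKdef
      have hiK : i ≤ K := by
        have : N ≤ m * N := Nat.le_mul_of_pos_left N hmpos
        omega
      have hKN : K % N = i % N := by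
        rw [hKdef, Nat.add_mul_mod_self_right, ← hc, Nat.mod_eq_of_lt (hclslt x)]
      have hdvd : N ∣ K - i := by
        have h1 : i ≡ K [MOD N] := by
          unfold Nat.ModEq; omega
        exact (Nat.modEq_iff_dvd' hiK).mp h1
      refine ⟨(K - i) / N, ?_⟩
      have hiN : i + N * ((K - i) / N) = K := by
        rw [Nat.mul_div_cancel' hdvd]
        omega
      rw [← pow_mul, ← pow_add, hiN, hKdef, pow_add, pow_mul, hωm, one_pow, mul_one, hdl x hx]
  -- finset versions
  set Si : ℕ → Finset F := fun i => Finset.univ.filter (fun x => x ≠ 0 ∧ cls x = i) with hSidef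
  set S : Finset F := Finset.univ.filter (fun x : F => x ≠ 0) with hSdef
  have hSerase : S = (Finset.univ : Finset F).erase 0 := by
    ext x; simp [hSdef]
  have hScard : S.card = q ^ 3 - 1 := by
    rw [hSerase, Finset.card_erase_of_mem (Finset.mem_univ 0), Finset.card_univ, hF]
  have hη : ∀ i, i < N → G i = ∑ x ∈ Si i, ψ x := by
    intro i hi
    show psiSum (canonPsi p F) (cycClass ω N i) = _
    rw [psiSum]
    have h1 : (cycClass ω N i).toFinset = Si i := by
      ext x
      rw [Set.mem_toFinset, hmemC i hi x]
      simp [hSidef]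
    rw [h1]
    exact Finset.sum_congr rfl fun x _ => hψeq x
  -- first moment
  have hS0 : ∑ i ∈ Finset.range N, G i = -1 := by
    have h1 : ∑ i ∈ Finset.range N, G i = ∑ i ∈ Finset.range N, ∑ x ∈ Si i, ψ x :=
      Finset.sum_congr rfl fun i hi => hη i (Finset.mem_range.mp hi)
    have h2 : ∀ i : ℕ, Si i = S.filter (fun x => cls x = i) := by
      intro i
      rw [hSidef, hSdef, Finset.filter_filter]
    have h3 : ∑ i ∈ Finset.range N, ∑ x ∈ S.filter (fun x => cls x = i), ψ x
        = ∑ x ∈ S, ψ x :=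
      Finset.sum_fiberwise_of_maps_to (fun x _ => Finset.mem_range.mpr (hclslt x)) ψ
    have h4 : ∑ x ∈ S, ψ x + ψ 0 = ∑ x : F, ψ x := by
      rw [hSerase]
      exact Finset.sum_erase_add _ _ (Finset.mem_univ 0)
    rw [hψsum, hψ0] at h4
    rw [h1]
    simp_rw [h2]
    rw [h3]
    linear_combination h4
  -- cardinality of the zeroth class
  have hcard0 : (Si 0).card = f := by
    have h := Finset.card_nbij (s := Finset.range f) (t := Si 0) (fun j => ω ^ (N * j))
      (by
        intro j hj
        rw [hSidef]
        simp only [Finset.mem_filter, Finset.mem_univ, true_and]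
        refine Finset.mem_filter.mpr ⟨Finset.mem_univ _, pow_ne_zero _ hω0, ?_⟩
        rw [hclspow _ (N * j) (pow_ne_zero _ hω0) rfl, Nat.mul_mod_right])
      (by
        intro j1 hj1 j2 hj2 hje
        simp only [Finset.coe_range, Set.mem_Iio] at hj1 hj2
        have h1 : N * j1 < m := by rw [hmNf]; exact (Nat.mul_lt_mul_left hNpos).mpr hj1
        have h2 : N * j2 < m := by rw [hmNf]; exact (Nat.mul_lt_mul_left hNpos).mpr hj2
        have := hωinj _ _ h1 h2 hje
        exact Nat.eq_of_mul_eq_mul_left hNpos this)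
      (by
        intro x hx
        simp only [Finset.coe_filter, Set.mem_setOf_eq, hSidef, Finset.mem_coe,
          Finset.mem_filter, Finset.mem_univ, true_and] at hx
        obtain ⟨hx0, hxc⟩ := hx
        set k : ℕ := dl x % m with hkdef
        have hklt : k < m := Nat.mod_lt _ hmpos
        have hωk : ω ^ k = x := by
          rw [hkdef, ← hord, pow_mod_orderOf, hdl x hx0]
        have hkN : k % N = 0 := by
          rw [hkdef, Nat.mod_mod_of_dvd _ hNm]
          exact hxc
        have hkdvd : N ∣ k := Nat.dvd_of_mod_eq_zero hkN
        refine ⟨k / N, ?_, ?_⟩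
        · simp only [Finset.coe_range, Set.mem_Iio]
          rw [Nat.div_lt_iff_lt_mul hNpos, mul_comm]
          rw [hmNf] at hklt
          exact hklt
        · show ω ^ (N * (k / N)) = x
          rw [Nat.mul_div_cancel' hkdvd, hωk])
    rw [Finset.card_range] at h
    exact h.symm
  -- -1 lies in the zeroth class
  obtain ⟨s, hs⟩ : ∃ s, q - 1 = 2 * s := by
    rcases hodd with ⟨t, ht⟩; exact ⟨t, by omega⟩
  set h2' : ℕ := N * (s * M) with h2def
  have hmh2 : m = 2 * h2' := by
    rw [hmNf, hfdef, hs, h2def]; ring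
  have hNh2 : N ∣ h2' := ⟨s * M, rfl⟩
  have hh2pos : 0 < h2' := by omega
  have hωh2 : ω ^ h2' = -1 := by
    have hsq : ω ^ h2' * ω ^ h2' = 1 := by
      rw [← pow_add]
      have : h2' + h2' = m := by omega
      rw [this, hωm]
    rcases mul_self_eq_one_iff.mp hsq with h1 | h1
    · exfalso
      have hdvd : orderOf ω ∣ h2' := orderOf_dvd_of_pow_eq_one h1
      rw [hord] at hdvd
      have := Nat.le_of_dvd hh2pos hdvd
      omega
    · exact h1
  have hneg1 : (-1 : F) ∈ Si 0 := by
    rw [hSidef]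
    simp only [Finset.mem_filter, Finset.mem_univ, true_and]
    refine ⟨neg_ne_zero.mpr one_ne_zero, ?_⟩
    rw [hclspow (-1) h2' (neg_ne_zero.mpr one_ne_zero) hωh2.symm, h2def, Nat.mul_mod_right]
  -- inner sum evaluation
  have hinner : ∀ w : F, ∑ x ∈ S, ψ (x * (1 + w)) =
      if w = -1 then ((q ^ 3 - 1 : ℕ) : ℂ) else -1 := by
    intro w
    by_cases hw : w = -1
    · subst hw
      rw [if_pos rfl]
      have hc : ∀ x ∈ S, ψ (x * (1 + -1)) = 1 := by
        intro x _
        rw [add_neg_cancel, mul_zero, hψ0]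
      rw [Finset.sum_congr rfl hc, Finset.sum_const, hScard, nsmul_eq_mul, mul_one]
    · rw [if_neg hw]
      have ht : (1 + w) ≠ 0 := by
        intro h
        exact hw (by linear_combination h)
      have h1 : ∑ x : F, ψ (x * (1 + w)) = 0 := by
        rw [← hψt (1 + w) ht]
        exact Fintype.sum_congr _ _ fun x => by rw [mul_comm]
      have h2 : ∑ x ∈ S, ψ (x * (1 + w)) + ψ (0 * (1 + w)) = ∑ x : F, ψ (x * (1 + w)) := by
        rw [hSerase]
        exact Finset.sum_erase_add _ _ (Finset.mem_univ 0)
      rw [h1, zero_mul, hψ0] at h2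
      linear_combination h2
  -- second moment
  have hS1 : ∑ i ∈ Finset.range N, (G i) ^ 2 = (q : ℂ) ^ 3 - (f : ℕ) := by
    set B : Finset (F × F) := (Finset.univ ×ˢ Finset.univ).filter
      (fun z => z.1 ≠ 0 ∧ z.2 ≠ 0 ∧ cls z.1 = cls z.2) with hBdef
    have step1 : ∑ i ∈ Finset.range N, (G i) ^ 2
        = ∑ i ∈ Finset.range N, ∑ z ∈ B.filter (fun z => cls z.1 = i), ψ z.1 * ψ z.2 := by
      apply Finset.sum_congr rfl
      intro i hi
      rw [hη i (Finset.mem_range.mp hi), sq, Finset.sum_mul_sum]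
      rw [← Finset.sum_product']
      apply Finset.sum_congr ?_ (fun _ _ => rfl)
      ext z
      rw [hBdef]
      simp only [Finset.mem_product, Finset.mem_filter, Finset.mem_univ, true_and, hSidef,
        and_true]
      constructor
      · rintro ⟨⟨ha, hd⟩, hb, he⟩
        exact ⟨⟨ha, hb, hd.trans he.symm⟩, hd⟩
      · rintro ⟨⟨ha, hb, hc⟩, hd⟩
        exact ⟨⟨ha, hd⟩, hb, hc.symm.trans hd⟩
    have step2 : ∑ i ∈ Finset.range N, ∑ z ∈ B.filter (fun z => cls z.1 = i), ψ z.1 * ψ z.2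
        = ∑ z ∈ B, ψ z.1 * ψ z.2 :=
      Finset.sum_fiberwise_of_maps_to (fun z _ => Finset.mem_range.mpr (hclslt z.1)) _
    have step3 : ∑ z ∈ B, ψ z.1 * ψ z.2
        = ∑ w ∈ S ×ˢ Si 0, ψ w.1 * ψ (w.1 * w.2) := by
      apply Finset.sum_nbij' (i := fun z => (z.1, z.1⁻¹ * z.2)) (j := fun w => (w.1, w.1 * w.2))
      · intro z hz
        rw [hBdef] at hz
        simp only [Finset.mem_filter, Finset.mem_product, Finset.mem_univ, true_and] at hz
        obtain ⟨h1, h2, h3⟩ := hz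
        rw [Finset.mem_product, hSdef, hSidef]
        simp only [Finset.mem_filter, Finset.mem_univ, true_and]
        refine ⟨h1, mul_ne_zero (inv_ne_zero h1) h2, ?_⟩
        rw [hclsmul _ _ (inv_ne_zero h1) h2, ← h3]
        rw [← hclsmul _ _ (inv_ne_zero h1) h1, inv_mul_cancel₀ h1, hcls1]
      · intro w hw
        rw [Finset.mem_product, hSdef, hSidef] at hw
        simp only [Finset.mem_filter, Finset.mem_univ, true_and] at hw
        obtain ⟨h1, h2, h3⟩ := hw
        rw [hBdef]
        simp only [Finset.mem_filter, Finset.mem_product, Finset.mem_univ, true_and]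
        refine ⟨h1, mul_ne_zero h1 h2, ?_⟩
        rw [hclsmul _ _ h1 h2, h3, Nat.add_zero, Nat.mod_eq_of_lt (hclslt _)]
      · intro z hz
        rw [hBdef] at hz
        simp only [Finset.mem_filter, Finset.mem_product, Finset.mem_univ, true_and] at hz
        exact Prod.ext rfl (mul_inv_cancel_left₀ hz.1 z.2)
      · intro w hw
        rw [Finset.mem_product, hSdef] at hw
        simp only [Finset.mem_filter, Finset.mem_univ, true_and] at hw
        exact Prod.ext rfl (inv_mul_cancel_left₀ hw.1 w.2)
      · intro z hz
        rw [hBdef] at hz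
        simp only [Finset.mem_filter, Finset.mem_product, Finset.mem_univ, true_and] at hz
        rw [mul_inv_cancel_left₀ hz.1]
    have step4 : ∑ w ∈ S ×ˢ Si 0, ψ w.1 * ψ (w.1 * w.2)
        = ∑ w ∈ Si 0, ∑ x ∈ S, ψ (x * (1 + w)) := by
      rw [Finset.sum_product]
      rw [Finset.sum_comm]
      apply Finset.sum_congr rfl
      intro w _
      apply Finset.sum_congr rfl
      intro x _
      rw [← hψadd]
      congr 1
      ring
    have step5 : ∑ w ∈ Si 0, ∑ x ∈ S, ψ (x * (1 + w)) = (q : ℂ) ^ 3 - (f : ℕ) := by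
      rw [Finset.sum_congr rfl (fun w _ => hinner w)]
      rw [← Finset.add_sum_erase _ _ hneg1, if_pos rfl]
      have hrest : ∀ w ∈ (Si 0).erase (-1),
          (if w = -1 then ((q ^ 3 - 1 : ℕ) : ℂ) else -1) = -1 := by
        intro w hw
        rw [if_neg (Finset.ne_of_mem_erase hw)]
      rw [Finset.sum_congr rfl hrest, Finset.sum_const,
        Finset.card_erase_of_mem hneg1, hcard0, nsmul_eq_mul]
      have e1 : ((q ^ 3 - 1 : ℕ) : ℂ) = (q : ℂ) ^ 3 - 1 := by
        push_cast [Nat.cast_sub (show 1 ≤ q ^ 3 by omega)]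
        ring
      have e2 : ((f - 1 : ℕ) : ℂ) = (f : ℂ) - 1 := by
        push_cast [Nat.cast_sub (show 1 ≤ f by omega)]
        ring
      rw [e1, e2]
      ring
    rw [step1, step2, step3, step4, step5]
  -- the three values
  have hq0 : (q : ℂ) ≠ 0 := Nat.cast_ne_zero.mpr (by omega)
  have hval : ∀ i ∈ Finset.range N,
      G i = -(M : ℂ) + 2 * (q : ℂ) ∨ G i = -(M : ℂ) + (q : ℂ) ∨ G i = -(M : ℂ) := by
    intro i hi
    have hmem : G i ∈ {v : ℂ | ∃ i < N, G i = v} := ⟨i, Finset.mem_range.mp hi, rfl⟩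
    rw [hthree] at hmem
    simpa [Set.mem_insert_iff] using hmem
  have h12 : (-(M : ℂ) + 2 * (q : ℂ)) ≠ (-(M : ℂ) + (q : ℂ)) := fun h => hq0 (by linear_combination h)
  have h13 : (-(M : ℂ) + 2 * (q : ℂ)) ≠ (-(M : ℂ)) := fun h => hq0 (by linear_combination h / 2)
  have h23 : (-(M : ℂ) + (q : ℂ)) ≠ (-(M : ℂ)) := fun h => hq0 (by linear_combination h)
  have hunion : I₁ ∪ I₂ ∪ I₃ = Finset.range N := by
    ext i
    simp only [Finset.mem_union, hI₁, hI₂, hI₃, Finset.mem_filter]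
    constructor
    · rintro ((h | h) | h) <;> exact h.1
    · intro hi
      rcases hval i hi with h | h | h
      · exact Or.inl (Or.inl ⟨hi, h⟩)
      · exact Or.inl (Or.inr ⟨hi, h⟩)
      · exact Or.inr ⟨hi, h⟩
  have hd12 : Disjoint I₁ I₂ := by
    rw [Finset.disjoint_left]
    intro i hi1 hi2
    rw [hI₁, Finset.mem_filter] at hi1
    rw [hI₂, Finset.mem_filter] at hi2
    exact h12 (hi1.2.symm.trans hi2.2)
  have hd13 : Disjoint I₁ I₃ := by
    rw [Finset.disjoint_left]
    intro i hi1 hi2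
    rw [hI₁, Finset.mem_filter] at hi1
    rw [hI₃, Finset.mem_filter] at hi2
    exact h13 (hi1.2.symm.trans hi2.2)
  have hd23 : Disjoint I₂ I₃ := by
    rw [Finset.disjoint_left]
    intro i hi1 hi2
    rw [hI₂, Finset.mem_filter] at hi1
    rw [hI₃, Finset.mem_filter] at hi2
    exact h23 (hi1.2.symm.trans hi2.2)
  have hd3 : Disjoint (I₁ ∪ I₂) I₃ := Finset.disjoint_union_left.mpr ⟨hd13, hd23⟩
  have hcard : I₁.card + I₂.card + I₃.card = N := by
    calc I₁.card + I₂.card + I₃.card = (I₁ ∪ I₂).card + I₃.card := by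
          rw [Finset.card_union_of_disjoint hd12]
    _ = (I₁ ∪ I₂ ∪ I₃).card := (Finset.card_union_of_disjoint hd3).symm
    _ = N := by rw [hunion, Finset.card_range]
  have hsplit : ∀ g : ℕ → ℂ,
      ∑ i ∈ Finset.range N, g i = ∑ i ∈ I₁, g i + ∑ i ∈ I₂, g i + ∑ i ∈ I₃, g i := by
    intro g
    rw [← hunion, Finset.sum_union hd3, Finset.sum_union hd12]
  have hconst : ∀ (J : Finset ℕ) (v : ℂ),
      (∀ i ∈ J, G i = v) → ∑ i ∈ J, G i = (J.card : ℂ) * v := by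
    intro J v hv
    rw [Finset.sum_congr rfl hv, Finset.sum_const, nsmul_eq_mul]
  have hconst2 : ∀ (J : Finset ℕ) (v : ℂ),
      (∀ i ∈ J, G i = v) → ∑ i ∈ J, (G i) ^ 2 = (J.card : ℂ) * v ^ 2 := by
    intro J v hv
    rw [Finset.sum_congr rfl (fun i hi => by rw [hv i hi]), Finset.sum_const, nsmul_eq_mul]
  have hv1 : ∀ i ∈ I₁, G i = -(M : ℂ) + 2 * (q : ℂ) := by
    intro i hi; rw [hI₁, Finset.mem_filter] at hi; exact hi.2
  have hv2 : ∀ i ∈ I₂, G i = -(M : ℂ) + (q : ℂ) := by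
    intro i hi; rw [hI₂, Finset.mem_filter] at hi; exact hi.2
  have hv3 : ∀ i ∈ I₃, G i = -(M : ℂ) := by
    intro i hi; rw [hI₃, Finset.mem_filter] at hi; exact hi.2
  have E1 : (I₁.card : ℂ) * (-(M : ℂ) + 2 * (q : ℂ)) + (I₂.card : ℂ) * (-(M : ℂ) + (q : ℂ))
      + (I₃.card : ℂ) * (-(M : ℂ)) = -1 := by
    have h := hsplit G
    rw [hS0, hconst I₁ _ hv1, hconst I₂ _ hv2, hconst I₃ _ hv3] at h
    linear_combination -h
  have E2 : (I₁.card : ℂ) * (-(M : ℂ) + 2 * (q : ℂ)) ^ 2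
      + (I₂.card : ℂ) * (-(M : ℂ) + (q : ℂ)) ^ 2
      + (I₃.card : ℂ) * (-(M : ℂ)) ^ 2 = (q : ℂ) ^ 3 - (f : ℕ) := by
    have h := hsplit (fun i => (G i) ^ 2)
    rw [hS1, hconst2 I₁ _ hv1, hconst2 I₂ _ hv2, hconst2 I₃ _ hv3] at h
    linear_combination -h
  have habcC : (I₁.card : ℂ) + (I₂.card : ℂ) + (I₃.card : ℂ) = (N : ℂ) := by
    exact_mod_cast congrArg (Nat.cast : ℕ → ℂ) hcard
  have hNMC : (N : ℂ) * (M : ℂ) = (q : ℂ) ^ 2 + (q : ℂ) + 1 := by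
    exact_mod_cast congrArg (Nat.cast : ℕ → ℂ) hNM
  have hfC : ((f : ℕ) : ℂ) = (q : ℂ) * (M : ℂ) - (M : ℂ) := by
    rw [hfdef]
    push_cast [Nat.cast_sub (show 1 ≤ q by omega)]
    ring
  have key1 : ((2 * I₁.card + I₂.card : ℕ) : ℂ) * (q : ℂ) = ((q + 1 : ℕ) : ℂ) * (q : ℂ) := by
    push_cast
    linear_combination E1 + (M : ℂ) * habcC + hNMC
  have h1 : 2 * I₁.card + I₂.card = q + 1 :=
    Nat.cast_inj.mp (mul_right_cancel₀ hq0 key1)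
  have h1C : 2 * (I₁.card : ℂ) + (I₂.card : ℂ) = (q : ℂ) + 1 := by
    exact_mod_cast congrArg (Nat.cast : ℕ → ℂ) h1
  have key2 : ((4 * I₁.card + I₂.card : ℕ) : ℂ) * ((q : ℂ) * (q : ℂ))
      = ((q + M : ℕ) : ℂ) * ((q : ℂ) * (q : ℂ)) := by
    push_cast
    linear_combination E2 - hfC - (M : ℂ) ^ 2 * habcC + 2 * (M : ℂ) * (q : ℂ) * h1C
      - (M : ℂ) * hNMC
  have h2 : 4 * I₁.card + I₂.card = q + M :=
    Nat.cast_inj.mp (mul_right_cancel₀ (mul_ne_zero hq0 hq0) key2)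
  -- conclusion
  have hz : ((q : ℤ) ^ 2 + (q : ℤ) + 1) = (N : ℤ) * (M : ℤ) := by
    exact_mod_cast congrArg (Nat.cast : ℕ → ℤ) hNM.symm
  rw [hz, Int.mul_ediv_cancel _ (by exact_mod_cast hM.ne' : (M : ℤ) ≠ 0)]
  have hModd' : M % 2 = 1 := Nat.odd_iff.mp hModd
  refine ⟨?_, ?_, ?_⟩ <;> omega
end

section
/- Let q be an odd prime power with q ≡ 2 or 4 (mod 7), and set N = (q²+q+1)/7. Then the Gauss periods ψ_{F_{q³}}(C_i^{(N,q³)}), i = 0,1,…,N−1, take exactly the three values −7+2q, −7+q, −7. -/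
open scoped Classical

namespace Stmt6aux

noncomputable def E (p : ℕ) (c : ZMod p) : ℂ :=
  Complex.exp (2 * Real.pi * Complex.I * (c.val : ℂ) / (p : ℂ))

lemma E_zero (p : ℕ) [Fact p.Prime] : E p 0 = 1 := by
  haveI : NeZero p := ⟨(Fact.out : p.Prime).ne_zero⟩
  have : ((0 : ZMod p).val : ℂ) = 0 := by simp [ZMod.val_zero]
  rw [E, this]
  simp

lemma exp_nat_arg (v k : ℕ) (p : ℕ) (hp0 : (p:ℂ) ≠ 0) :
    Complex.exp (2 * Real.pi * Complex.I * ((v + p * k : ℕ) : ℂ) / (p : ℂ))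
      = Complex.exp (2 * Real.pi * Complex.I * (v : ℂ) / (p : ℂ)) := by
  have : 2 * Real.pi * Complex.I * ((v + p * k : ℕ) : ℂ) / (p : ℂ)
      = 2 * Real.pi * Complex.I * (v : ℂ) / (p : ℂ) + (k : ℕ) * (2 * Real.pi * Complex.I) := by
    push_cast
    field_simp
  rw [this, Complex.exp_add]
  have h1 : Complex.exp (((k : ℕ) : ℂ) * (2 * Real.pi * Complex.I)) = 1 := by
    exact_mod_cast Complex.exp_int_mul_two_pi_mul_I (k : ℕ)
  rw [h1, mul_one]

lemma E_add (p : ℕ) [Fact p.Prime] (a b : ZMod p) : E p (a + b) = E p a * E p b := by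
  haveI : NeZero p := ⟨(Fact.out : p.Prime).ne_zero⟩
  have hp0 : (p : ℂ) ≠ 0 := Nat.cast_ne_zero.mpr (Fact.out : p.Prime).ne_zero
  have hval : a.val + b.val = (a + b).val + p * ((a.val + b.val) / p) := by
    have h := ZMod.val_add a b
    have := Nat.mod_add_div (a.val + b.val) p
    omega
  rw [E, E, E, ← Complex.exp_add]
  have h2 : 2 * Real.pi * Complex.I * ((a.val : ℕ) : ℂ) / (p:ℂ) + 2 * Real.pi * Complex.I * ((b.val : ℕ) : ℂ) / (p:ℂ)
      = 2 * Real.pi * Complex.I * (((a.val + b.val : ℕ) : ℕ) : ℂ) / (p:ℂ) := by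
    push_cast
    ring
  rw [h2, hval, exp_nat_arg _ _ _ hp0]

lemma E_ne_one (p : ℕ) [Fact p.Prime] {c : ZMod p} (hc : c ≠ 0) : E p c ≠ 1 := by
  haveI : NeZero p := ⟨(Fact.out : p.Prime).ne_zero⟩
  have hp0 : (p : ℂ) ≠ 0 := Nat.cast_ne_zero.mpr (Fact.out : p.Prime).ne_zero
  intro h
  rw [E, Complex.exp_eq_one_iff] at h
  obtain ⟨m, hm⟩ := h
  rw [div_eq_iff hp0] at hm
  have h2 : (2 : ℂ) * Real.pi * Complex.I ≠ 0 := by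
    simp [Real.pi_ne_zero, Complex.I_ne_zero]
  have h3 : (2 * Real.pi * Complex.I) * ((c.val : ℕ) : ℂ) = (2 * Real.pi * Complex.I) * ((m : ℂ) * p) := by
    linear_combination hm
  have h4 : ((c.val : ℕ) : ℂ) = ((m * p : ℤ) : ℂ) := by
    push_cast
    exact mul_left_cancel₀ h2 h3
  have hz : ((c.val : ℕ) : ℤ) = m * p := by exact_mod_cast h4
  have hlt : c.val < p := ZMod.val_lt c
  have hne : c.val ≠ 0 := fun h0 => hc (by rwa [← ZMod.val_eq_zero])
  have hdvd : (p:ℤ) ∣ (c.val : ℤ) := ⟨m, by linarith⟩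
  have hdvd' : p ∣ c.val := Int.natCast_dvd_natCast.mp hdvd
  have := Nat.le_of_dvd (Nat.pos_of_ne_zero hne) hdvd'
  omega

lemma canonPsi_zero (p : ℕ) [Fact p.Prime] (F : Type) [Field F] [Algebra (ZMod p) F] :
    canonPsi p F 0 = 1 := by
  haveI : NeZero p := ⟨(Fact.out : p.Prime).ne_zero⟩
  unfold canonPsi
  rw [map_zero, ZMod.val_zero]
  norm_num

variable {p : ℕ} [Fact p.Prime] {F : Type} [Field F] [Algebra (ZMod p) F]
variable (K : IntermediateField (ZMod p) F)

lemma lin0 {γ c₀ c₁ : F} (h₀ : c₀ ∈ K) (h₁ : c₁ ∈ K) (hγ : γ ∉ K)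
    (h : c₀ + c₁ * γ = 0) : c₀ = 0 ∧ c₁ = 0 := by
  by_cases hc1 : c₁ = 0
  · subst hc1; simp at h; exact ⟨h, rfl⟩
  · exfalso
    apply hγ
    have : γ = -c₀ / c₁ := by
      rw [eq_div_iff hc1]
      linear_combination h
    rw [this]
    exact div_mem (neg_mem h₀) h₁

set_option synthInstance.maxHeartbeats 1000000 in
lemma indep2 [FiniteDimensional ↥K F] (hr : Module.finrank ↥K F = 3)
    {γ : F} (hγ : γ ∉ K) {c₀ c₁ c₂ : F} (h₀ : c₀ ∈ K) (h₁ : c₁ ∈ K) (h₂ : c₂ ∈ K)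
    (h : c₀ + c₁ * γ + c₂ * γ ^ 2 = 0) : c₀ = 0 ∧ c₁ = 0 ∧ c₂ = 0 := by
  have hint : IsIntegral ↥K γ := IsIntegral.of_finite ↥K γ
  by_cases hc2 : c₂ = 0
  · subst hc2
    simp only [zero_mul, add_zero] at h
    obtain ⟨e0, e1⟩ := lin0 K h₀ h₁ hγ h
    exact ⟨e0, e1, rfl⟩
  · exfalso
    have hd3 : (minpoly ↥K γ).natDegree = 3 := by
      have h1 : Module.finrank ↥K ↥(IntermediateField.adjoin ↥K {γ})
          * Module.finrank ↥(IntermediateField.adjoin ↥K {γ}) F = 3 := by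
        rw [Module.finrank_mul_finrank]; exact hr
      have hdvd : Module.finrank ↥K ↥(IntermediateField.adjoin ↥K {γ}) ∣ 3 := ⟨_, h1.symm⟩
      have he1 : Module.finrank ↥K ↥(IntermediateField.adjoin ↥K {γ}) ≠ 1 := by
        intro h1'
        have hbot : IntermediateField.adjoin ↥K {γ} = ⊥ :=
          IntermediateField.finrank_eq_one_iff.mp h1'
        have hmem : γ ∈ IntermediateField.adjoin ↥K {γ} :=
          IntermediateField.mem_adjoin_simple_self ↥K γ
        rw [hbot, IntermediateField.mem_bot] at hmem
        obtain ⟨k, hk⟩ := hmem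
        apply hγ
        rw [← hk]
        exact k.2
      have := (Nat.prime_three.eq_one_or_self_of_dvd _ hdvd).resolve_left he1
      rw [← IntermediateField.adjoin.finrank hint, this]
    set a : ↥K := ⟨c₁ / c₂, div_mem h₁ h₂⟩ with ha
    set b : ↥K := ⟨c₀ / c₂, div_mem h₀ h₂⟩ with hb
    set P : Polynomial ↥K := Polynomial.X ^ 2 + (Polynomial.C a * Polynomial.X + Polynomial.C b) with hP
    have hPmonic : P.Monic := Polynomial.monic_X_pow_add (by
      simpa using lt_of_le_of_lt (Polynomial.degree_linear_le (a := a) (b := b)) (by norm_num))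
    have haeval : Polynomial.aeval γ P = 0 := by
      have hcoe : ∀ k : ↥K, (algebraMap ↥K F) k = (k : F) := fun k => rfl
      simp only [hP, map_add, map_mul, map_pow, Polynomial.aeval_X, Polynomial.aeval_C, hcoe]
      show γ ^ 2 + (c₁ / c₂ * γ + c₀ / c₂) = 0
      field_simp
      linear_combination h
    have hdle := minpoly.degree_le_of_ne_zero ↥K γ hPmonic.ne_zero haeval
    have h1 : (minpoly ↥K γ).natDegree ≤ P.natDegree := Polynomial.natDegree_le_natDegree hdle
    have h2 : P.natDegree ≤ 2 := by
      rw [hP]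
      compute_degree
    omega

lemma cube1 [FiniteDimensional ↥K F] (hr : Module.finrank ↥K F = 3) (h2F : (2:F) ≠ 0)
    {γ : F} (hγ : γ ∉ K) (h7 : γ ^ 7 ∈ K) {u v w : F} (hu : u ∈ K) (hv : v ∈ K) (hw : w ∈ K)
    (hw0 : w ≠ 0) (h : w * γ ^ 3 = u * γ + v) : False := by
  have hγ0 : γ ≠ 0 := fun h0 => hγ (h0 ▸ K.zero_mem)
  have key : (u^2*v - w^3*γ^7) + (u^3 + w*v^2) * γ + (2*u*v*w) * γ^2 = 0 := by
    linear_combination (-(w^2*γ^4 + u*w*γ^2 + v*w*γ + u^2)) * h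
  have htwo : (2:F) ∈ K := by
    rw [show (2:F) = 1 + 1 by norm_num]; exact add_mem K.one_mem K.one_mem
  obtain ⟨e0, e1, e2⟩ := indep2 K hr hγ
    (sub_mem (mul_mem (pow_mem hu 2) hv) (mul_mem (pow_mem hw 3) h7))
    (add_mem (pow_mem hu 3) (mul_mem hw (pow_mem hv 2)))
    (mul_mem (mul_mem (mul_mem htwo hu) hv) hw) key
  have huv : u = 0 ∨ v = 0 := by
    rcases mul_eq_zero.mp (show ((2:F) * w) * (u*v) = 0 by linear_combination e2) with h' | h'
    · rcases mul_eq_zero.mp h' with h'' | h''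
      · exact absurd h'' h2F
      · exact absurd h'' hw0
    · exact mul_eq_zero.mp h'
  have hfin : u = 0 → v = 0 → False := by
    intro hu0 hv0
    rw [hu0, hv0] at h
    have h3 : w * γ ^ 3 = 0 := by linear_combination h
    rcases mul_eq_zero.mp h3 with h' | h'
    · exact hw0 h'
    · exact hγ0 (pow_eq_zero_iff (n := 3) (by norm_num) |>.mp h')
  rcases huv with hu0 | hv0
  · apply hfin hu0
    have : w * v ^ 2 = 0 := by rw [hu0] at e1; linear_combination e1
    rcases mul_eq_zero.mp this with h' | h'
    · exact absurd h' hw0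
    · exact pow_eq_zero_iff (n := 2) (by norm_num) |>.mp h'
  · refine hfin ?_ hv0
    have : u ^ 3 = 0 := by rw [hv0] at e1; linear_combination e1
    exact pow_eq_zero_iff (n := 3) (by norm_num) |>.mp this

lemma cube2 [FiniteDimensional ↥K F] (hr : Module.finrank ↥K F = 3) (h2F : (2:F) ≠ 0)
    {γ : F} (hγ : γ ∉ K) (h7 : γ ^ 7 ∈ K) {u v w : F} (hu : u ∈ K) (hv : v ∈ K) (hw : w ∈ K)
    (hw0 : w ≠ 0) (h : w * γ ^ 3 = u * γ ^ 2 + v) : False := by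
  have hγ0 : γ ≠ 0 := fun h0 => hγ (h0 ▸ K.zero_mem)
  have key : (u^4*v + 2*u*v^2*w^2 - w^5*γ^7) + (u^3*v*w + v^2*w^3) * γ
      + (u^5 + 3*u^2*v*w^2) * γ^2 = 0 := by
    linear_combination (-(w^4*γ^4 + u*w^3*γ^3 + u^2*w^2*γ^2 + (v*w^3 + u^3*w)*γ + (2*u*v*w^2 + u^4))) * h
  have htwo : (2:F) ∈ K := by
    rw [show (2:F) = 1 + 1 by norm_num]; exact add_mem K.one_mem K.one_mem
  have hthree : (3:F) ∈ K := by
    rw [show (3:F) = 1 + 1 + 1 by norm_num]; exact add_mem (add_mem K.one_mem K.one_mem) K.one_mem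
  obtain ⟨e0, e1, e2⟩ := indep2 K hr hγ
    (sub_mem (add_mem (mul_mem (pow_mem hu 4) hv)
      (mul_mem (mul_mem (mul_mem htwo hu) (pow_mem hv 2)) (pow_mem hw 2)))
      (mul_mem (pow_mem hw 5) h7))
    (add_mem (mul_mem (mul_mem (pow_mem hu 3) hv) hw) (mul_mem (pow_mem hv 2) (pow_mem hw 3)))
    (add_mem (pow_mem hu 5) (mul_mem (mul_mem (mul_mem hthree (pow_mem hu 2)) hv) (pow_mem hw 2))) key
  by_cases hv0 : v = 0
  · apply hγ
    have hgu : γ = u / w := by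
      have h' : γ ^ 2 * (w * γ - u) = 0 := by rw [hv0] at h; linear_combination h
      rcases mul_eq_zero.mp h' with h'' | h''
      · exact absurd h'' (pow_ne_zero _ hγ0)
      · rw [eq_div_iff hw0]; linear_combination h''
    rw [hgu]; exact div_mem hu hw
  · have hvu : v * w ^ 2 = -u^3 := by
      have h' : (v * w) * (u^3 + v * w ^ 2) = 0 := by linear_combination e1
      rcases mul_eq_zero.mp h' with h'' | h''
      · rcases mul_eq_zero.mp h'' with h3 | h3
        · exact absurd h3 hv0
        · exact absurd h3 hw0
      · linear_combination h''
    have h5 : (2:F) * u^5 = 0 := by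
      have : u^5 + 3*u^2*(v*w^2) = 0 := by linear_combination e2
      rw [hvu] at this; linear_combination -this
    have hu0 : u = 0 := by
      rcases mul_eq_zero.mp h5 with h'' | h''
      · exact absurd h'' h2F
      · exact pow_eq_zero_iff (n := 5) (by norm_num) |>.mp h''
    rw [hu0] at hvu
    simp at hvu
    rcases hvu with h'' | h''
    · exact hv0 h''
    · exact hw0 h''

lemma notMemPow {γ : F} (hγ : γ ∉ K) (h7 : γ ^ 7 ∈ K) {u : ℕ} (hu1 : 1 ≤ u) (hu6 : u ≤ 6)
    (hmem : γ ^ u ∈ K) : False := by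
  have hγ0 : γ ≠ 0 := fun h0 => hγ (h0 ▸ K.zero_mem)
  obtain ⟨w, s, hws⟩ : ∃ w s : ℕ, u * w = 7 * s + 1 := by
    interval_cases u
    exacts [⟨1,0,rfl⟩, ⟨4,1,rfl⟩, ⟨5,2,rfl⟩, ⟨2,1,rfl⟩, ⟨3,2,rfl⟩, ⟨6,5,rfl⟩]
  apply hγ
  have hkey : γ = (γ ^ u) ^ w * ((γ ^ 7) ^ s)⁻¹ := by
    rw [← pow_mul, ← pow_mul, hws, pow_add, pow_one]
    field_simp
  rw [hkey]
  exact mul_mem (pow_mem hmem w) (inv_mem (pow_mem h7 s))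

lemma elemDep [FiniteDimensional ↥K F] (hr : Module.finrank ↥K F = 3) (h2F : (2:F) ≠ 0)
    {γ : F} (hγ : γ ∉ K) (h7 : γ ^ 7 ∈ K) {e : ℕ} (he2 : 2 ≤ e) (he6 : e ≤ 6)
    {c₀ c₁ c₂ : F} (h₀ : c₀ ∈ K) (h₁ : c₁ ∈ K) (h₂ : c₂ ∈ K)
    (h : c₀ + c₁ * γ + c₂ * γ ^ e = 0) : c₀ = 0 ∧ c₁ = 0 ∧ c₂ = 0 := by
  have hγ0 : γ ≠ 0 := fun h0 => hγ (h0 ▸ K.zero_mem)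
  have hd0 : γ ^ 7 ≠ 0 := pow_ne_zero _ hγ0
  interval_cases e
  · exact indep2 K hr hγ h₀ h₁ h₂ h
  · by_cases hc2 : c₂ = 0
    · subst hc2; simp only [zero_mul, add_zero] at h
      obtain ⟨e0, e1⟩ := lin0 K h₀ h₁ hγ h
      exact ⟨e0, e1, rfl⟩
    · exfalso
      have h3 : c₂ * γ ^ 3 = (-c₁) * γ + (-c₀) := by linear_combination h
      exact cube1 K hr h2F hγ h7 (neg_mem h₁) (neg_mem h₀) h₂ hc2 h3
  · by_cases hc2 : c₂ = 0
    · subst hc2; simp only [zero_mul, add_zero] at h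
      obtain ⟨e0, e1⟩ := lin0 K h₀ h₁ hγ h
      exact ⟨e0, e1, rfl⟩
    · exfalso
      have h4 : c₂ * γ ^ 4 = (-c₁) * γ + (-c₀) := by linear_combination h
      by_cases hv0 : (-c₀ : F) = 0
      · have h3 : c₂ * γ ^ 3 = 0 * γ + (-c₁) := by
          have := mul_left_cancel₀ hγ0 (show γ * (c₂ * γ^3) = γ * (-c₁) by
            rw [hv0, add_zero] at h4; linear_combination h4)
          rw [this]; ring
        exact cube1 K hr h2F hγ h7 K.zero_mem (neg_mem h₁) h₂ hc2 h3
      · have h3 : (c₂ * (-c₀)) * γ ^ 3 = (-(c₁^2)) * γ + (c₂^2 * γ^7 - c₁*c₀) := by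
          linear_combination (c₁ - c₂*γ^3) * h4
        exact cube1 K hr h2F hγ h7 (neg_mem (pow_mem h₁ 2))
          (sub_mem (mul_mem (pow_mem h₂ 2) h7) (mul_mem h₁ h₀)) (mul_mem h₂ (neg_mem h₀))
          (mul_ne_zero hc2 hv0) h3
  · by_cases hc1 : c₁ = 0
    · subst hc1
      simp only [zero_mul, add_zero] at h
      by_cases hc2 : c₂ = 0
      · subst hc2; simp at h; exact ⟨h, rfl, rfl⟩
      · exfalso
        have h2' : (c₂ * γ^7) + 0 * γ + c₀ * γ^2 = 0 := by linear_combination γ^2 * h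
        obtain ⟨e0, _, _⟩ := indep2 K hr hγ (mul_mem h₂ h7) K.zero_mem h₀ h2'
        rcases mul_eq_zero.mp e0 with h' | h'
        · exact hc2 h'
        · exact hd0 h'
    · exfalso
      have h3 : c₁ * γ ^ 3 = (-c₀) * γ ^ 2 + (-(c₂ * γ^7)) := by
        linear_combination (γ^2) * h
      exact cube2 K hr h2F hγ h7 (neg_mem h₀) (neg_mem (mul_mem h₂ h7)) h₁ hc1 h3
  · have h2 : (c₂ * γ^7) + c₀ * γ + c₁ * γ^2 = 0 := by
      linear_combination γ * h
    obtain ⟨e0, e1, e2⟩ := indep2 K hr hγ (mul_mem h₂ h7) h₀ h₁ h2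
    refine ⟨e1, e2, ?_⟩
    rcases mul_eq_zero.mp e0 with h' | h'
    · exact h'
    · exact absurd h' hd0

lemma pairDep [FiniteDimensional ↥K F] (hr : Module.finrank ↥K F = 3) (h2F : (2:F) ≠ 0)
    {γ : F} (hγ : γ ∉ K) (h7 : γ ^ 7 ∈ K) {a b : ℕ} (ha : 1 ≤ a) (hab : a < b) (hb : b ≤ 6)
    {c₀ c₁ c₂ : F} (h₀ : c₀ ∈ K) (h₁ : c₁ ∈ K) (h₂ : c₂ ∈ K)
    (h : c₀ + c₁ * γ ^ a + c₂ * γ ^ b = 0) : c₀ = 0 ∧ c₁ = 0 ∧ c₂ = 0 := by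
  have hγ0 : γ ≠ 0 := fun h0 => hγ (h0 ▸ K.zero_mem)
  have hd0 : γ ^ 7 ≠ 0 := pow_ne_zero _ hγ0
  have ha6 : a ≤ 6 := by omega
  have hb1 : 1 ≤ b := by omega
  obtain ⟨e, he6, t, ht, he2, het⟩ : ∃ e, e ≤ 6 ∧ ∃ t, t ≤ 5 ∧ 2 ≤ e ∧ a * e = b + 7 * t := by
    clear h h₀ h₁ h₂
    interval_cases a <;> interval_cases b
    exacts [⟨2, by norm_num, 0, by norm_num⟩, ⟨3, by norm_num, 0, by norm_num⟩,
      ⟨4, by norm_num, 0, by norm_num⟩, ⟨5, by norm_num, 0, by norm_num⟩,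
      ⟨6, by norm_num, 0, by norm_num⟩,
      ⟨5, by norm_num, 1, by norm_num⟩, ⟨2, by norm_num, 0, by norm_num⟩,
      ⟨6, by norm_num, 1, by norm_num⟩, ⟨3, by norm_num, 0, by norm_num⟩,
      ⟨6, by norm_num, 2, by norm_num⟩, ⟨4, by norm_num, 1, by norm_num⟩,
      ⟨2, by norm_num, 0, by norm_num⟩,
      ⟨3, by norm_num, 1, by norm_num⟩, ⟨5, by norm_num, 2, by norm_num⟩,
      ⟨4, by norm_num, 2, by norm_num⟩]
  have hγ' : γ ^ a ∉ K := fun hmem => notMemPow K hγ h7 ha ha6 hmem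
  have h7' : (γ ^ a) ^ 7 ∈ K := by
    rw [← pow_mul, mul_comm, pow_mul]
    exact pow_mem h7 a
  have hpow : (γ ^ a) ^ e = γ ^ b * (γ ^ 7) ^ t := by
    rw [← pow_mul, ← pow_mul, het, pow_add]
  have eq2 : (c₀ * (γ^7)^t) + (c₁ * (γ^7)^t) * γ ^ a + c₂ * (γ ^ a) ^ e = 0 := by
    rw [hpow]
    linear_combination ((γ^7)^t) * h
  obtain ⟨e0, e1, e2⟩ := elemDep K hr h2F hγ' h7' he2 he6
    (mul_mem h₀ (pow_mem h7 t)) (mul_mem h₁ (pow_mem h7 t)) h₂ eq2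
  have hdt : (γ^7)^t ≠ 0 := pow_ne_zero _ hd0
  refine ⟨?_, ?_, e2⟩
  · rcases mul_eq_zero.mp e0 with h' | h'
    · exact h'
    · exact absurd h' hdt
  · rcases mul_eq_zero.mp e1 with h' | h'
    · exact h'
    · exact absurd h' hdt

set_option synthInstance.maxHeartbeats 1000000 in
lemma traceSum {F : Type} [Field F] [Fintype F] [Algebra (ZMod p) F]
    (K : IntermediateField (ZMod p) F) [Fintype ↥K] (a : F) :
    ∑ t : ↥K, canonPsi p F (a * (t : F))
      = if Algebra.trace ↥K F a = 0 then (Fintype.card ↥K : ℂ) else 0 := by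
  haveI : FiniteDimensional (ZMod p) ↥K := Module.Finite.of_finite
  haveI : FiniteDimensional ↥K F := Module.Finite.of_finite
  have hψ : ∀ x : F, canonPsi p F x = E p (Algebra.trace (ZMod p) F x) := fun _ => rfl
  have hcomp : ∀ t : ↥K, Algebra.trace (ZMod p) F (a * (t : F))
      = Algebra.trace (ZMod p) ↥K (t * Algebra.trace ↥K F a) := by
    intro t
    rw [← Algebra.trace_trace (S := ↥K) (x := a * (t : F))]
    congr 1
    have hsmul : a * (t : F) = t • a := by
      rw [Algebra.smul_def]
      rw [IntermediateField.algebraMap_apply]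
      ring
    rw [hsmul, map_smul]
    rw [smul_eq_mul]
  by_cases h0 : Algebra.trace ↥K F a = 0
  · rw [if_pos h0]
    have : ∀ t : ↥K, canonPsi p F (a * (t : F)) = 1 := by
      intro t
      rw [hψ, hcomp, h0, mul_zero, map_zero, E_zero]
    rw [Finset.sum_congr rfl (fun t _ => this t)]
    simp
  · rw [if_neg h0]
    set c : ↥K := Algebra.trace ↥K F a with hc
    have hsum : ∑ t : ↥K, canonPsi p F (a * (t : F))
        = ∑ t : ↥K, E p (Algebra.trace (ZMod p) ↥K (t * c)) := by
      apply Finset.sum_congr rfl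
      intro t _
      rw [hψ, hcomp]
    rw [hsum]
    have hre : ∑ t : ↥K, E p (Algebra.trace (ZMod p) ↥K (t * c))
        = ∑ s : ↥K, E p (Algebra.trace (ZMod p) ↥K s) := by
      apply Fintype.sum_equiv (Equiv.mulRight₀ c h0)
      intro t
      rfl
    rw [hre]
    obtain ⟨s₀, hs₀⟩ : ∃ s₀ : ↥K, Algebra.trace (ZMod p) ↥K s₀ ≠ 0 := by
      have hne := Algebra.trace_ne_zero (ZMod p) ↥K
      rw [DFunLike.ne_iff] at hne
      obtain ⟨s₀, hs₀⟩ := hne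
      exact ⟨s₀, by simpa using hs₀⟩
    have htrans : ∑ s : ↥K, E p (Algebra.trace (ZMod p) ↥K s)
        = (∑ s : ↥K, E p (Algebra.trace (ZMod p) ↥K s)) * E p (Algebra.trace (ZMod p) ↥K s₀) := by
      conv_lhs => rw [← Equiv.sum_comp (Equiv.addRight s₀) (fun s => E p (Algebra.trace (ZMod p) ↥K s))]
      rw [Finset.sum_mul]
      apply Finset.sum_congr rfl
      intro s _
      show E p (Algebra.trace (ZMod p) ↥K (s + s₀)) = _
      rw [map_add, E_add]
    have hE1 : E p (Algebra.trace (ZMod p) ↥K s₀) ≠ 1 := E_ne_one p hs₀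
    have hzero : (∑ s : ↥K, E p (Algebra.trace (ZMod p) ↥K s))
        * (E p (Algebra.trace (ZMod p) ↥K s₀) - 1) = 0 := by
      linear_combination -htrans
    rcases mul_eq_zero.mp hzero with h' | h'
    · exact h'
    · exact absurd (by linear_combination h' : E p (Algebra.trace (ZMod p) ↥K s₀) = 1) hE1

end Stmt6aux

set_option maxHeartbeats 4000000 in
set_option synthInstance.maxHeartbeats 1000000 in
/-- Let `q` be an odd prime power with `q ≡ 2` or `4 (mod 7)` and
`N = (q²+q+1)/7`. Then the Gauss periods `ψ_{F_{q³}}(C_i^{(N,q³)})`, `i = 0,…,N-1`,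
take exactly the three values `-7+2q`, `-7+q`, `-7`. -/
theorem stmt6 (p n q N : ℕ) [Fact p.Prime] (hq : q = p ^ n) (hn : 0 < n)
    (hodd : Odd q) (hq7 : q % 7 = 2 ∨ q % 7 = 4) (hN : N = (q ^ 2 + q + 1) / 7)
    (F : Type) [Field F] [Fintype F] [Algebra (ZMod p) F]
    (hF : Fintype.card F = q ^ 3)
    (ω : F) (hω : ∀ x : F, x ≠ 0 → ∃ k : ℕ, ω ^ k = x) :
    {v : ℂ | ∃ i < N, psiSum (canonPsi p F) (cycClass ω N i) = v}
      = {(-7 + 2 * (q : ℂ)), (-7 + (q : ℂ)), (-7 : ℂ)} := by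
  classical
  have hp : p.Prime := Fact.out
  -- basic arithmetic
  have hq2 : q % 2 = 1 := Nat.odd_iff.mp hodd
  have hq9 : 9 ≤ q := by omega
  have h7N : 7 * N = q ^ 2 + q + 1 := by
    obtain ⟨k, hk⟩ : ∃ k, q = 7*k+2 ∨ q = 7*k+4 := ⟨q/7, by omega⟩
    rcases hk with hk | hk
    · rw [hN, hk, show (7*k+2)^2 + (7*k+2) + 1 = 7*(7*k^2+5*k+1) from by ring,
        Nat.mul_div_cancel_left _ (by norm_num)]
    · rw [hN, hk, show (7*k+4)^2 + (7*k+4) + 1 = 7*(7*k^2+9*k+3) from by ring,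
        Nat.mul_div_cancel_left _ (by norm_num)]
  have hqq : 81 ≤ q * q := Nat.mul_le_mul hq9 hq9
  have hq2pow : q ^ 2 = q * q := by ring
  have hq3pow : q ^ 3 = q * q * q := by ring
  have hqqq : 729 ≤ q * q * q := by nlinarith
  have hN1 : 13 ≤ N := by omega
  have hMeq : q ^ 3 - 1 = 7 * N * (q - 1) := by
    zify [show 1 ≤ q from by omega, show 1 ≤ q ^ 3 from by omega]
    have h7N' : (7:ℤ) * N = (q:ℤ)^2 + q + 1 := by exact_mod_cast h7N
    linear_combination ((1:ℤ) - q) * h7N'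
  have hMpos : 0 < q ^ 3 - 1 := by omega
  have h7Npos : 0 < 7 * N := by omega
  -- ω is a primitive root
  have hω0 : ω ≠ 0 := by
    intro h0
    have hcard : 1 < (Finset.univ.erase (0:F)).card := by
      rw [Finset.card_erase_of_mem (Finset.mem_univ 0), Finset.card_univ, hF]
      omega
    obtain ⟨x, hx, y, hy, hxy⟩ := Finset.one_lt_card.mp hcard
    have hx0 : x ≠ 0 := (Finset.mem_erase.mp hx).1
    have hy0 : y ≠ 0 := (Finset.mem_erase.mp hy).1
    have hx1 : x = 1 := by
      obtain ⟨k, hk⟩ := hω x hx0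
      rw [h0] at hk
      cases k with
      | zero => simpa using hk.symm
      | succ m => rw [zero_pow (Nat.succ_ne_zero m)] at hk; exact absurd hk.symm hx0
    have hy1 : y = 1 := by
      obtain ⟨k, hk⟩ := hω y hy0
      rw [h0] at hk
      cases k with
      | zero => simpa using hk.symm
      | succ m => rw [zero_pow (Nat.succ_ne_zero m)] at hk; exact absurd hk.symm hy0
    exact hxy (hx1.trans hy1.symm)
  have hunit : ω ^ (q ^ 3 - 1) = 1 := by
    rw [← hF]; exact FiniteField.pow_card_sub_one_eq_one ω hω0
  have hord : orderOf ω = q ^ 3 - 1 := by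
    have hdvd : orderOf ω ∣ q ^ 3 - 1 := orderOf_dvd_of_pow_eq_one hunit
    have hfo : IsOfFinOrder ω := isOfFinOrder_iff_pow_eq_one.mpr ⟨_, hMpos, hunit⟩
    have hle : q ^ 3 - 1 ≤ orderOf ω := by
      have hsub : Finset.univ.erase (0:F) ⊆ (Finset.range (orderOf ω)).image (ω ^ ·) := by
        intro x hx
        obtain ⟨k, hk⟩ := hω x (Finset.mem_erase.mp hx).1
        refine Finset.mem_image.mpr ⟨k % orderOf ω, Finset.mem_range.mpr (Nat.mod_lt _ hfo.orderOf_pos), ?_⟩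
        rw [pow_mod_orderOf]; exact hk
      calc q ^ 3 - 1 = (Finset.univ.erase (0:F)).card := by
            rw [Finset.card_erase_of_mem (Finset.mem_univ 0), Finset.card_univ, hF]
        _ ≤ ((Finset.range (orderOf ω)).image (ω ^ ·)).card := Finset.card_le_card hsub
        _ ≤ (Finset.range (orderOf ω)).card := Finset.card_image_le
        _ = orderOf ω := Finset.card_range _
    exact le_antisymm (Nat.le_of_dvd hMpos hdvd) hle
  set ωu : Fˣ := Units.mk0 ω hω0 with hωu
  have hordu : orderOf ωu = q ^ 3 - 1 := by
    rw [← orderOf_units]; exact hord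
  have powInj : ∀ a b : ℕ, ω ^ a = ω ^ b ↔ a ≡ b [MOD q ^ 3 - 1] := by
    intro a b
    constructor
    · intro h
      have hu : ωu ^ a = ωu ^ b := Units.ext (by
        rw [Units.val_pow_eq_pow_val, Units.val_pow_eq_pow_val]; exact h)
      have := pow_eq_pow_iff_modEq.mp hu
      rwa [hordu] at this
    · intro h
      have hu : ωu ^ a = ωu ^ b := pow_eq_pow_iff_modEq.mpr (by rwa [hordu])
      have := congrArg (Units.val) hu
      rwa [Units.val_pow_eq_pow_val, Units.val_pow_eq_pow_val] at this
  -- the subfield K of cardinality q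
  haveI : CharP F p := charP_of_injective_algebraMap (algebraMap (ZMod p) F).injective p
  haveI : ExpChar F p := ExpChar.prime hp
  have hpodd : p ≠ 2 := by
    intro h2
    have : (2:ℕ) ∣ q := by rw [hq, h2]; exact dvd_pow_self 2 hn.ne'
    omega
  have h2F : (2:F) ≠ 0 := by
    intro h
    have h2 : ((2:ℕ) : F) = 0 := by exact_mod_cast h
    have := (CharP.cast_eq_zero_iff F p 2).mp h2
    have := Nat.le_of_dvd (by norm_num) this
    have := hp.two_le
    omega
  have hq0 : q ≠ 0 := by omega
  let S : Subalgebra (ZMod p) F :=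
  { carrier := {x : F | x ^ q = x}
    mul_mem' := by
      intro a b ha hb
      simp only [Set.mem_setOf_eq] at *
      rw [mul_pow, ha, hb]
    one_mem' := by simp
    add_mem' := by
      intro a b ha hb
      simp only [Set.mem_setOf_eq] at *
      rw [hq] at ha hb ⊢
      rw [add_pow_char_pow, ha, hb]
    zero_mem' := by
      simp only [Set.mem_setOf_eq]
      exact zero_pow hq0
    algebraMap_mem' := by
      intro c
      simp only [Set.mem_setOf_eq]
      rw [hq, ← map_pow, ZMod.pow_card_pow] }
  let K : IntermediateField (ZMod p) F :=
  { S with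
    inv_mem' := by
      intro x hx
      show x⁻¹ ^ q = x⁻¹
      rw [inv_pow]
      exact congrArg Inv.inv hx }
  have memK : ∀ x : F, x ∈ K ↔ x ^ q = x := fun x => Iff.rfl
  haveI : Fintype ↥K := Fintype.ofFinite _
  haveI : FiniteDimensional ↥K F := Module.Finite.of_finite
  -- κ generates K*
  set κ : F := ω ^ (7 * N) with hκdef
  have hκ0 : κ ≠ 0 := pow_ne_zero _ hω0
  have hexpκ : 7 * N * q = (q ^ 3 - 1) + 7 * N := by
    rw [hMeq]
    zify [show 1 ≤ q from by omega]
    ring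
  have hκK : κ ∈ K := by
    rw [memK, hκdef, ← pow_mul, hexpκ, pow_add, hunit, one_mul]
  have hκinj : ∀ k k' : ℕ, k < q - 1 → k' < q - 1 → κ ^ k = κ ^ k' → k = k' := by
    intro k k' hk hk' heq
    rw [hκdef, ← pow_mul, ← pow_mul] at heq
    have hmod := (powInj _ _).mp heq
    rw [hMeq] at hmod
    have h1 : 7 * N * k < 7 * N * (q - 1) := (Nat.mul_lt_mul_left h7Npos).mpr hk
    have h2 : 7 * N * k' < 7 * N * (q - 1) := (Nat.mul_lt_mul_left h7Npos).mpr hk'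
    have := Nat.ModEq.eq_of_lt_of_lt hmod h1 h2
    exact Nat.eq_of_mul_eq_mul_left h7Npos this
  set T : Finset F := (Finset.range (q-1)).image (fun k => κ ^ k) with hTdef
  have hTcard : T.card = q - 1 := by
    rw [hTdef, Finset.card_image_of_injOn, Finset.card_range]
    intro k hk k' hk' heq
    exact hκinj k k' (Finset.mem_range.mp hk) (Finset.mem_range.mp hk') heq
  have hroots : ∀ x : F, x ∈ K → x ≠ 0 → x ^ (q-1) = 1 := by
    intro x hx hx0
    have hxq : x ^ q = x := (memK x).mp hx
    have h1 : x ^ (q-1) * x = 1 * x := by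
      rw [one_mul, ← pow_succ, show q - 1 + 1 = q from by omega]
      exact hxq
    exact mul_right_cancel₀ hx0 h1
  set E : Finset F := ((K : Set F)).toFinset.erase 0 with hEdef
  have hTsubE : T ⊆ E := by
    intro x hx
    obtain ⟨k, _, rfl⟩ := Finset.mem_image.mp hx
    refine Finset.mem_erase.mpr ⟨pow_ne_zero _ hκ0, Set.mem_toFinset.mpr ?_⟩
    exact pow_mem hκK k
  have hEcard : E.card ≤ q - 1 := by
    have hEsub : E ⊆ (Polynomial.nthRoots (q-1) (1:F)).toFinset := by
      intro x hx
      obtain ⟨hx0, hxK⟩ := Finset.mem_erase.mp hx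
      rw [Multiset.mem_toFinset]
      rw [Polynomial.mem_nthRoots (by omega : 0 < q - 1)]
      exact hroots x (Set.mem_toFinset.mp hxK) hx0
    calc E.card ≤ (Polynomial.nthRoots (q-1) (1:F)).toFinset.card := Finset.card_le_card hEsub
      _ ≤ Multiset.card (Polynomial.nthRoots (q-1) (1:F)) := Multiset.toFinset_card_le _
      _ ≤ q - 1 := Polynomial.card_nthRoots _ _
  have hTE : T = E := Finset.eq_of_subset_of_card_le hTsubE (by rw [hTcard]; exact hEcard)
  have hK0 : (0:F) ∈ ((K : Set F)).toFinset := Set.mem_toFinset.mpr K.zero_mem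
  have hKfin_card : ((K : Set F)).toFinset.card = q := by
    have h1 := Finset.card_erase_of_mem hK0
    have h2 : E.card = q - 1 := by rw [← hTE]; exact hTcard
    have h3 : 0 < ((K : Set F)).toFinset.card := Finset.card_pos.mpr ⟨0, hK0⟩
    rw [hEdef] at h2
    omega
  have hKq : Nat.card ↥K = q := by
    have h1 : Nat.card ↥K = Nat.card ↥(K : Set F) :=
      Nat.card_congr (Equiv.subtypeEquivRight (fun x => Iff.rfl))
    rw [h1, Nat.card_coe_set_eq, Set.ncard_eq_toFinset_card']
    exact hKfin_card
  have hKmem : ∀ x : F, x ∈ K → x ≠ 0 → ∃ k, k < q - 1 ∧ x = κ ^ k := by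
    intro x hx hx0
    have : x ∈ E := Finset.mem_erase.mpr ⟨hx0, Set.mem_toFinset.mpr hx⟩
    rw [← hTE] at this
    obtain ⟨k, hk, hkx⟩ := Finset.mem_image.mp this
    exact ⟨k, Finset.mem_range.mp hk, hkx.symm⟩
  have hKq' : Fintype.card ↥K = q := by rw [← Nat.card_eq_fintype_card]; exact hKq
  have hr3 : Module.finrank ↥K F = 3 := by
    have hcard := Module.card_eq_pow_finrank (K := ↥K) (V := F)
    rw [hF, hKq'] at hcard
    exact (Nat.pow_right_injective (by omega) hcard).symm
  -- W = kernel of trace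
  haveI : Algebra.IsSeparable ↥K F := inferInstance
  set W : Submodule ↥K F := LinearMap.ker (Algebra.trace ↥K F) with hWdef
  have hWrank : Module.finrank ↥K ↥W = 2 := by
    have hrange : LinearMap.range (Algebra.trace ↥K F) = ⊤ :=
      LinearMap.range_eq_top.mpr (Algebra.trace_surjective ↥K F)
    have hrn := LinearMap.finrank_range_add_finrank_ker (Algebra.trace ↥K F)
    rw [hrange, finrank_top, Module.finrank_self, hr3] at hrn
    rw [← hWdef] at hrn
    omega
  haveI : Fintype ↥W := Fintype.ofFinite _
  have hWcard : Nat.card ↥W = q ^ 2 := by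
    have hcard := Module.card_eq_pow_finrank (K := ↥K) (V := ↥W)
    rw [hKq', hWrank] at hcard
    rw [Nat.card_eq_fintype_card]
    exact hcard
  -- scaling stability
  have hsmulK : ∀ (c y : F), c ∈ K → ∀ S' : Submodule ↥K F, y ∈ S' → c * y ∈ S' := by
    intro c y hc S' hy
    have : c * y = (⟨c, hc⟩ : ↥K) • y := by
      rw [Algebra.smul_def, IntermediateField.algebraMap_apply]
    rw [this]
    exact S'.smul_mem _ hy
  have hstab : ∀ (S' : Submodule ↥K F) (c x : F), c ∈ K → c ≠ 0 → (c * x ∈ S' ↔ x ∈ S') := by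
    intro S' c x hc hc0
    constructor
    · intro h
      have := hsmulK c⁻¹ (c*x) (inv_mem hc) S' h
      rwa [inv_mul_cancel_left₀ hc0] at this
    · exact hsmulK c x hc S'
  -- β
  set β : F := ω ^ N with hβdef
  have hβ0 : β ≠ 0 := pow_ne_zero _ hω0
  have hβ7 : β ^ 7 = κ := by rw [hβdef, hκdef, ← pow_mul, mul_comm]
  have hβ7K : β ^ 7 ∈ K := by rw [hβ7]; exact hκK
  have hβK : β ∉ K := by
    intro hmem
    have hβq : β ^ q = β := (memK β).mp hmem
    rw [hβdef, ← pow_mul] at hβq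
    have hmod := (powInj (N*q) N).mp hβq
    have hdvd := (Nat.modEq_iff_dvd' (show N ≤ N*q from Nat.le_mul_of_pos_right N (by omega))).mp hmod.symm
    have heq : N * q - N = N * (q - 1) := by
      zify [show 1 ≤ q from by omega, show N ≤ N * q from Nat.le_mul_of_pos_right N (by omega)]
      ring
    rw [heq, hMeq] at hdvd
    have hpos : 0 < N * (q-1) := by
      apply Nat.mul_pos <;> omega
    have hle := Nat.le_of_dvd hpos hdvd
    have : 7 * N * (q-1) = 7 * (N * (q-1)) := by ring
    omega
  -- noThree
  have noThree : ∀ (x : F), x ≠ 0 → ∀ a b : ℕ, 1 ≤ a → a < b → b ≤ 6 →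
      x ∈ W → β ^ a * x ∈ W → β ^ b * x ∈ W → False := by
    intro x hx0 a b ha hab hb hxW haW hbW
    haveI : Module.Finite ↥K ↥W := Module.Finite.of_finite
    have hs : ∀ (c : ↥K) (y : F), c • y = (c : F) * y := fun c y => by
      rw [Algebra.smul_def, IntermediateField.algebraMap_apply]
    have hli : LinearIndependent ↥K ![x, β^a * x, β^b * x] := by
      rw [Fintype.linearIndependent_iff]
      intro g hg
      simp only [Fin.sum_univ_three, Matrix.cons_val_zero, Matrix.cons_val_one,
        Matrix.head_cons, Matrix.cons_val_two, Matrix.tail_cons] at hg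
      rw [hs, hs, hs] at hg
      have hsum : ((g 0 : F) + (g 1 : F) * β^a + (g 2 : F) * β^b) * x = 0 := by
        linear_combination hg
      rcases mul_eq_zero.mp hsum with h' | h'
      · obtain ⟨e0, e1, e2⟩ := Stmt6aux.pairDep K hr3 h2F hβK hβ7K ha hab hb
          (g 0).2 (g 1).2 (g 2).2 h'
        intro i
        fin_cases i
        · exact Subtype.ext e0
        · exact Subtype.ext e1
        · exact Subtype.ext e2
      · exact absurd h' hx0
    have hmemW : ∀ i : Fin 3, (![x, β^a*x, β^b*x]) i ∈ W := by
      intro i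
      fin_cases i <;> simpa
    have hli' : LinearIndependent ↥K (fun i : Fin 3 => (⟨_, hmemW i⟩ : ↥W)) := by
      apply LinearIndependent.of_comp W.subtype
      convert hli
      funext i; rfl
    have hle := hli'.fintype_card_le_finrank
    rw [hWrank, Fintype.card_fin] at hle
    omega
  -- counting lemma
  have countAux : ∀ S' : Submodule ↥K F,
      (Finset.univ.filter (fun x : F => x ∈ S')).card = Nat.card ↥S' := by
    intro S'
    rw [Nat.card_eq_fintype_card]
    exact (Fintype.card_subtype _).symm
  have hshift : ∀ (S' : Submodule ↥K F) (a s : ℕ), (ω ^ (a + 7*N*s) ∈ S') ↔ ω ^ a ∈ S' := by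
    intro S' a s
    rw [pow_add, mul_comm, show ω ^ (7*N*s) = κ ^ s from by rw [hκdef, ← pow_mul]]
    exact hstab S' (κ^s) (ω^a) (pow_mem hκK s) (pow_ne_zero _ hκ0)
  have countS : ∀ S' : Submodule ↥K F,
      ((Finset.range (7*N)).filter (fun m => ω ^ m ∈ S')).card * (q-1) = Nat.card ↥S' - 1 := by
    intro S'
    have step1 : ((Finset.range (q^3-1)).filter (fun m => ω ^ m ∈ S')).card
        = Nat.card ↥S' - 1 := by
      have htarget : (Finset.univ.filter (fun x : F => x ∈ S')).erase 0
          = Finset.univ.filter (fun x : F => x ∈ S' ∧ x ≠ 0) := by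
        ext x
        simp only [Finset.mem_erase, Finset.mem_filter, Finset.mem_univ, true_and]
        tauto
      have hbij : ((Finset.range (q^3-1)).filter (fun m => ω ^ m ∈ S')).card
          = (Finset.univ.filter (fun x : F => x ∈ S' ∧ x ≠ 0)).card := by
        apply Finset.card_bij (fun m _ => ω ^ m)
        · intro m hm
          obtain ⟨_, hmS⟩ := Finset.mem_filter.mp hm
          exact Finset.mem_filter.mpr ⟨Finset.mem_univ _, hmS, pow_ne_zero _ hω0⟩
        · intro m hm m' hm' heq
          have h1 := Finset.mem_range.mp (Finset.mem_filter.mp hm).1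
          have h2 := Finset.mem_range.mp (Finset.mem_filter.mp hm').1
          exact Nat.ModEq.eq_of_lt_of_lt ((powInj _ _).mp heq) h1 h2
        · intro x hx
          obtain ⟨_, hxS, hx0⟩ := Finset.mem_filter.mp hx
          obtain ⟨k, hk⟩ := hω x hx0
          refine ⟨k % (q^3-1), Finset.mem_filter.mpr ⟨Finset.mem_range.mpr (Nat.mod_lt _ hMpos), ?_⟩, ?_⟩
          · have : ω ^ (k % (q^3-1)) = ω ^ k := (powInj _ _).mpr (Nat.mod_modEq _ _)
            rw [this, hk]; exact hxS
          · have : ω ^ (k % (q^3-1)) = ω ^ k := (powInj _ _).mpr (Nat.mod_modEq _ _)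
            rw [this, hk]
      rw [hbij, ← htarget, Finset.card_erase_of_mem
        (Finset.mem_filter.mpr ⟨Finset.mem_univ _, S'.zero_mem⟩), countAux S']
    have step2 : ((Finset.range (q^3-1)).filter (fun m => ω ^ m ∈ S')).card
        = ((Finset.range (7*N)).filter (fun m => ω ^ m ∈ S')).card * (q-1) := by
      have hsplit : ((Finset.range (q^3-1)).filter (fun m => ω ^ m ∈ S')).card
          = (((Finset.range (7*N)).filter (fun m => ω ^ m ∈ S')) ×ˢ Finset.range (q-1)).card := by
        apply Finset.card_nbij' (fun m => (m % (7*N), m / (7*N))) (fun pr => pr.1 + 7*N*pr.2)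
        · intro m hm
          obtain ⟨hmr, hmS⟩ := Finset.mem_filter.mp hm
          have hmlt := Finset.mem_range.mp hmr
          rw [hMeq] at hmlt
          refine Finset.mem_product.mpr ⟨Finset.mem_filter.mpr ⟨Finset.mem_range.mpr (Nat.mod_lt _ h7Npos), ?_⟩, Finset.mem_range.mpr ?_⟩
          · have hdecomp : m = m % (7*N) + 7*N*(m / (7*N)) := by
              rw [Nat.mod_add_div]
            rw [hdecomp] at hmS
            exact (hshift S' _ _).mp hmS
          · exact Nat.div_lt_of_lt_mul (by omega)
        · intro pr hpr
          obtain ⟨hp1, hp2⟩ := Finset.mem_product.mp hpr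
          obtain ⟨hp1r, hp1S⟩ := Finset.mem_filter.mp hp1
          have h1 := Finset.mem_range.mp hp1r
          have h2 := Finset.mem_range.mp hp2
          refine Finset.mem_filter.mpr ⟨Finset.mem_range.mpr ?_, (hshift S' _ _).mpr hp1S⟩
          rw [hMeq]
          have : 7*N*pr.2 + 7*N ≤ 7*N*(q-1) := by
            have : 7*N*(pr.2+1) ≤ 7*N*(q-1) := Nat.mul_le_mul_left _ (by omega)
            calc 7*N*pr.2 + 7*N = 7*N*(pr.2+1) := by ring
              _ ≤ _ := this
          beta_reduce
          omega
        · intro m hm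
          simp only
          rw [Nat.mod_add_div]
        · intro pr hpr
          obtain ⟨hp1, hp2⟩ := Finset.mem_product.mp hpr
          have h1 := Finset.mem_range.mp (Finset.mem_filter.mp hp1).1
          have hmod : (pr.1 + 7*N*pr.2) % (7*N) = pr.1 := by
            rw [Nat.add_mul_mod_self_left, Nat.mod_eq_of_lt h1]
          have hdiv : (pr.1 + 7*N*pr.2) / (7*N) = pr.2 := by
            rw [Nat.add_mul_div_left _ _ h7Npos, Nat.div_eq_of_lt h1, zero_add]
          beta_reduce
          rw [hmod, hdiv]
      rw [hsplit, Finset.card_product, Finset.card_range]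
    omega
  -- the counting function nn
  set nn : ℕ → ℕ := fun i => ((Finset.range 7).filter (fun j => ω ^ (i + j*N) ∈ W)).card with hnn
  -- main value computation
  have hβωpow : ∀ (i j : ℕ), β ^ j * ω ^ i = ω ^ (i + j*N) := by
    intro i j
    rw [hβdef, ← pow_mul, ← pow_add]
    congr 1
    ring
  have hcyc : ∀ i : ℕ, (cycClass ω N i).toFinset
      = (Finset.range 7).biUnion
          (fun j => (Finset.range (q-1)).image (fun k => ω ^ (i + j*N + 7*N*k))) := by
    intro i
    ext x
    rw [Set.mem_toFinset]
    constructor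
    · rintro ⟨k', rfl⟩
      have hx : ω ^ i * (ω ^ N) ^ k' = ω ^ (i + N * (k' % (7*(q-1)))) := by
        rw [← pow_mul, ← pow_add]
        apply (powInj _ _).mpr
        apply Nat.ModEq.add_left
        have h1 : k' ≡ k' % (7*(q-1)) [MOD 7*(q-1)] := (Nat.mod_modEq k' (7*(q-1))).symm
        have h2 := Nat.ModEq.mul_left' (c := N) h1
        have heq : N * (7*(q-1)) = q^3 - 1 := by rw [hMeq]; ring
        rwa [heq] at h2
      rw [hx]
      set r := k' % (7*(q-1)) with hr
      have hrlt : r < 7*(q-1) := Nat.mod_lt _ (by omega)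
      refine Finset.mem_biUnion.mpr ⟨r % 7, Finset.mem_range.mpr (Nat.mod_lt _ (by omega)), ?_⟩
      refine Finset.mem_image.mpr ⟨r / 7, Finset.mem_range.mpr (by omega), ?_⟩
      congr 1
      have hrd : r % 7 + 7 * (r/7) = r := Nat.mod_add_div r 7
      calc i + (r % 7)*N + 7*N*(r/7) = i + N * (r % 7 + 7*(r/7)) := by ring
        _ = i + N * r := by rw [hrd]
    · intro hx
      obtain ⟨j, hj, hx2⟩ := Finset.mem_biUnion.mp hx
      obtain ⟨k, hk, rfl⟩ := Finset.mem_image.mp hx2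
      refine ⟨j + 7*k, ?_⟩
      rw [← pow_mul, ← pow_add]
      congr 1
      ring
  have hexpinj : ∀ i j k j' k' : ℕ, j < 7 → j' < 7 → k < q-1 → k' < q-1 →
      ω ^ (i + j*N + 7*N*k) = ω ^ (i + j'*N + 7*N*k') → j = j' ∧ k = k' := by
    intro i j k j' k' hj hj' hk hk' heq
    have h1 : i + j*N + 7*N*k = i + N*(j + 7*k) := by ring
    have h2 : i + j'*N + 7*N*k' = i + N*(j' + 7*k') := by ring
    rw [h1, h2] at heq
    have hmod := (powInj _ _).mp heq
    rw [hMeq] at hmod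
    have hmod2 := Nat.ModEq.add_left_cancel' i hmod
    have hmod3 : N*(j+7*k) ≡ N*(j'+7*k') [MOD N*(7*(q-1))] := by
      have : 7*N*(q-1) = N*(7*(q-1)) := by ring
      rwa [this] at hmod2
    have hN0 : N ≠ 0 := by omega
    have hmod4 : j + 7*k ≡ j' + 7*k' [MOD 7*(q-1)] := by
      have h := hmod3
      unfold Nat.ModEq at h ⊢
      rw [Nat.mul_mod_mul_left, Nat.mul_mod_mul_left] at h
      exact Nat.eq_of_mul_eq_mul_left (by omega) h
    have hlt1 : j + 7*k < 7*(q-1) := by omega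
    have hlt2 : j' + 7*k' < 7*(q-1) := by omega
    have := Nat.ModEq.eq_of_lt_of_lt hmod4 hlt1 hlt2
    omega
  -- sum of psi over the subfield K
  have hKsum : ∀ a : F, ∑ x ∈ ((K : Set F)).toFinset, canonPsi p F (a * x)
      = if a ∈ W then (q:ℂ) else 0 := by
    intro a
    have h1 : ∑ x ∈ ((K : Set F)).toFinset, canonPsi p F (a * x)
        = ∑ t : ↥K, canonPsi p F (a * (t : F)) := by
      apply Finset.sum_subtype
      intro x
      exact Set.mem_toFinset
    rw [h1, Stmt6aux.traceSum K a, hKq']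
    have hiff : (Algebra.trace ↥K F a = 0) ↔ a ∈ W := by
      rw [hWdef]; exact (LinearMap.mem_ker).symm
    by_cases hW : a ∈ W
    · rw [if_pos (hiff.mpr hW), if_pos hW]
    · rw [if_neg (fun h => hW (hiff.mp h)), if_neg hW]
  have hcosetSum : ∀ a : F, ∑ k ∈ Finset.range (q-1), canonPsi p F (a * κ ^ k)
      = (if a ∈ W then (q:ℂ) else 0) - 1 := by
    intro a
    have himg : ∑ x ∈ T, canonPsi p F (a * x)
        = ∑ k ∈ Finset.range (q-1), canonPsi p F (a * κ ^ k) := by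
      rw [hTdef]
      apply Finset.sum_image
      intro k hk k' hk' heq
      exact hκinj k k' (Finset.mem_range.mp hk) (Finset.mem_range.mp hk') heq
    rw [← himg, hTE, hEdef, ← hKsum a]
    have hsplit : canonPsi p F (a * 0) + ∑ x ∈ ((K : Set F)).toFinset.erase 0, canonPsi p F (a * x)
        = ∑ x ∈ ((K : Set F)).toFinset, canonPsi p F (a * x) :=
      Finset.add_sum_erase _ (fun x => canonPsi p F (a * x)) hK0
    have hzero : canonPsi p F (a * 0) = 1 := by
      rw [mul_zero]; exact Stmt6aux.canonPsi_zero p F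
    rw [← hsplit, hzero]
    ring
  -- the Gauss period values
  have hval : ∀ i : ℕ, psiSum (canonPsi p F) (cycClass ω N i) = -7 + (q:ℂ) * ((nn i : ℕ) : ℂ) := by
    intro i
    rw [psiSum, hcyc i]
    rw [Finset.sum_biUnion (by
      intro j hj j' hj' hne
      apply Finset.disjoint_left.mpr
      intro x hx hx'
      obtain ⟨k, hk, rfl⟩ := Finset.mem_image.mp hx
      obtain ⟨k', hk', heq⟩ := Finset.mem_image.mp hx'
      have hj7 := Finset.mem_range.mp (Finset.mem_coe.mp hj)
      have hj7' := Finset.mem_range.mp (Finset.mem_coe.mp hj')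
      have := hexpinj i j' k' j k hj7' hj7 (Finset.mem_range.mp hk') (Finset.mem_range.mp hk) heq
      exact hne this.1.symm)]
    have hinner : ∀ j ∈ Finset.range 7,
        ∑ x ∈ (Finset.range (q-1)).image (fun k => ω ^ (i + j*N + 7*N*k)), canonPsi p F x
        = (if ω ^ (i + j*N) ∈ W then (q:ℂ) else 0) - 1 := by
      intro j hj
      have hjlt := Finset.mem_range.mp hj
      rw [Finset.sum_image (fun k hk k' hk' heq =>
        (hexpinj i j k j k' hjlt hjlt (Finset.mem_range.mp hk) (Finset.mem_range.mp hk') heq).2)]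
      have hterm : ∀ k : ℕ, ω ^ (i + j*N + 7*N*k) = ω ^ (i + j*N) * κ ^ k := by
        intro k
        rw [pow_add]
        congr 1
        rw [hκdef, ← pow_mul]
      rw [Finset.sum_congr rfl (fun k _ => by rw [hterm k])]
      exact hcosetSum (ω ^ (i + j*N))
    rw [Finset.sum_congr rfl hinner]
    rw [Finset.sum_sub_distrib]
    have hone : ∑ _j ∈ Finset.range 7, (1:ℂ) = 7 := by simp
    have hite : ∑ j ∈ Finset.range 7, (if ω ^ (i + j*N) ∈ W then (q:ℂ) else 0)
        = ((nn i : ℕ) : ℂ) * q := by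
      rw [← Finset.sum_filter, Finset.sum_const, nsmul_eq_mul]
      try norm_num
    rw [hone, hite]
    ring
  -- nn i ≤ 2
  have hnn2 : ∀ i : ℕ, nn i ≤ 2 := by
    intro i
    by_contra hcon
    push_neg at hcon
    obtain ⟨t, hts, htc⟩ := Finset.exists_subset_card_eq
      (s := (Finset.range 7).filter (fun j => ω ^ (i + j*N) ∈ W)) (n := 3) (by
        have hd : nn i = ((Finset.range 7).filter (fun j => ω ^ (i + j*N) ∈ W)).card := rfl
        omega)
    obtain ⟨a, b, c, hab, hac, hbc, hteq⟩ := Finset.card_eq_three.mp htc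
    have hmem : ∀ x ∈ t, x < 7 ∧ ω ^ (i + x*N) ∈ W := by
      intro x hx
      have := hts hx
      rw [Finset.mem_filter, Finset.mem_range] at this
      exact this
    have key : ∀ x y z : ℕ, x < y → y < z → x ∈ t → y ∈ t → z ∈ t → False := by
      intro x y z h1 h2 hx hy hz
      obtain ⟨hx7, hxW⟩ := hmem x hx
      obtain ⟨hy7, hyW⟩ := hmem y hy
      obtain ⟨hz7, hzW⟩ := hmem z hz
      apply noThree (ω ^ (i + x*N)) (pow_ne_zero _ hω0) (y - x) (z - x)
        (by omega) (by omega) (by omega) hxW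
      · have heq : β ^ (y-x) * ω ^ (i + x*N) = ω ^ (i + y*N) := by
          rw [hβωpow]
          congr 1
          have h3 : (y - x) * N + x * N = y * N := by
            have h4 : (y - x) + x = y := by omega
            calc (y-x)*N + x*N = ((y-x)+x)*N := by ring
              _ = y*N := by rw [h4]
          omega
        rw [heq]; exact hyW
      · have heq : β ^ (z-x) * ω ^ (i + x*N) = ω ^ (i + z*N) := by
          rw [hβωpow]
          congr 1
          have h3 : (z - x) * N + x * N = z * N := by
            have h4 : (z - x) + x = z := by omega
            calc (z-x)*N + x*N = ((z-x)+x)*N := by ring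
              _ = z*N := by rw [h4]
          omega
        rw [heq]; exact hzW
    have ha' : a ∈ t := by rw [hteq]; simp
    have hb' : b ∈ t := by rw [hteq]; simp
    have hc' : c ∈ t := by rw [hteq]; simp
    rcases Nat.lt_or_ge a b with h1 | h1
    · rcases Nat.lt_or_ge b c with h2 | h2
      · exact key a b c h1 h2 ha' hb' hc'
      · rcases Nat.lt_or_ge a c with h3 | h3
        · exact key a c b h3 (by omega) ha' hc' hb'
        · exact key c a b (by omega) h1 hc' ha' hb'
    · rcases Nat.lt_or_ge a c with h2 | h2
      · exact key b a c (by omega) h2 hb' ha' hc'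
      · rcases Nat.lt_or_ge b c with h3 | h3
        · exact key b c a h3 (by omega) hb' hc' ha'
        · exact key c b a (by omega) (by omega) hc' hb' ha'
  -- first moment
  have hq21 : (q+1) * (q-1) = q^2 - 1 := by
    zify [show 1 ≤ q from by omega, show 1 ≤ q^2 from by omega]
    ring
  have hcW : ((Finset.range (7*N)).filter (fun m => ω ^ m ∈ W)).card = q + 1 := by
    have h := countS W
    rw [hWcard] at h
    apply Nat.eq_of_mul_eq_mul_right (show 0 < q - 1 from by omega)
    rw [h, hq21]
  have hsum1 : ∑ i ∈ Finset.range N, nn i = q + 1 := by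
    rw [← hcW, Finset.card_filter]
    have hnn' : ∀ i : ℕ, nn i = ∑ j ∈ Finset.range 7, if ω ^ (i + j*N) ∈ W then 1 else 0 :=
      fun i => Finset.card_filter _ _
    rw [Finset.sum_congr rfl (fun i _ => hnn' i)]
    rw [← Finset.sum_product']
    apply Finset.sum_nbij' (fun ij : ℕ × ℕ => ij.1 + ij.2 * N) (fun m => (m % N, m / N))
    · intro ij hij
      rw [Finset.mem_product, Finset.mem_range, Finset.mem_range] at hij
      rw [Finset.mem_range]
      have : ij.2 * N ≤ 6 * N := Nat.mul_le_mul_right N (by omega)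
      omega
    · intro m hm
      rw [Finset.mem_range] at hm
      rw [Finset.mem_product, Finset.mem_range, Finset.mem_range]
      exact ⟨Nat.mod_lt _ (by omega), Nat.div_lt_of_lt_mul (by omega)⟩
    · intro ij hij
      rw [Finset.mem_product, Finset.mem_range, Finset.mem_range] at hij
      have h1 : (ij.1 + ij.2 * N) % N = ij.1 := by
        rw [Nat.add_mul_mod_self_right, Nat.mod_eq_of_lt hij.1]
      have h2 : (ij.1 + ij.2 * N) / N = ij.2 := by
        rw [Nat.add_mul_div_right _ _ (show 0 < N from by omega), Nat.div_eq_of_lt hij.1, zero_add]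
      simp [h1, h2]
    · intro m hm
      simp only
      rw [Nat.mod_add_div']
    · intro ij hij
      rfl
  -- second moment
  have hVcard : ∀ δ : ℕ, 1 ≤ δ → δ ≤ 6 →
      ((Finset.range (7*N)).filter (fun m => ω ^ m ∈ W ∧ ω ^ (m + δ*N) ∈ W)).card = 1 := by
    intro δ hδ1 hδ6
    have hβδ0 : (β ^ δ : F) ≠ 0 := pow_ne_zero _ hβ0
    set mulβ : F →ₗ[↥K] F := LinearMap.mulLeft ↥K (β ^ δ) with hmul
    set C : Submodule ↥K F := Submodule.comap mulβ W with hC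
    have hmemC : ∀ x : F, x ∈ C ↔ β ^ δ * x ∈ W := by
      intro x
      rw [hC, Submodule.mem_comap, hmul]
      simp [LinearMap.mulLeft_apply]
    have hCe : Module.finrank ↥K ↥C = 2 := by
      set e : F ≃ₗ[↥K] F := LinearEquiv.ofLinear mulβ (LinearMap.mulLeft ↥K (β ^ δ)⁻¹)
        (by ext x; simp [hmul, LinearMap.mulLeft_apply]; field_simp)
        (by ext x; simp [hmul, LinearMap.mulLeft_apply]; field_simp) with he
      have hcoe : (e : F →ₗ[↥K] F) = mulβ := rfl
      have hmap : C = Submodule.map (e.symm : F →ₗ[↥K] F) W := by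
        rw [hC, ← hcoe, Submodule.comap_equiv_eq_map_symm]
      rw [hmap, LinearEquiv.finrank_map_eq]
      exact hWrank
    have hinf_le : Module.finrank ↥K ↥(W ⊓ C) ≤ 1 := by
      by_contra hcon
      push_neg at hcon
      have hWV : W ⊓ C = W := by
        apply Submodule.eq_of_le_of_finrank_le inf_le_left
        rw [hWrank]; omega
      have hWC : W ≤ C := inf_eq_left.mp hWV
      obtain ⟨x₀, hx₀W, hx₀0⟩ := (Submodule.ne_bot_iff W).mp (by
        intro hbot
        rw [hbot, finrank_bot] at hWrank
        omega)
      have h1 : β ^ δ * x₀ ∈ W := (hmemC x₀).mp (hWC hx₀W)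
      have h2 : β ^ δ * (β ^ δ * x₀) ∈ W := (hmemC _).mp (hWC h1)
      set r := (2*δ) % 7 with hr
      set s := (2*δ) / 7 with hs
      have hδr : δ + δ = r + 7 * s := by omega
      have h3 : β ^ δ * (β ^ δ * x₀) = κ ^ s * (β ^ r * x₀) := by
        rw [← mul_assoc, ← pow_add, hδr, pow_add, pow_mul, hβ7]
        ring
      rw [h3] at h2
      have h4 : β ^ r * x₀ ∈ W :=
        (hstab W (κ^s) _ (pow_mem hκK s) (pow_ne_zero _ hκ0)).mp h2
      rcases Nat.lt_or_ge δ r with hlt | hge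
      · exact noThree x₀ hx₀0 δ r (by omega) hlt (by omega) hx₀W h1 h4
      · have hrδ : r < δ := by omega
        exact noThree x₀ hx₀0 r δ (by omega) hrδ (by omega) hx₀W h4 h1
    have hinf_ge : 1 ≤ Module.finrank ↥K ↥(W ⊓ C) := by
      have hsup := Submodule.finrank_sup_add_finrank_inf_eq W C
      have hle : Module.finrank ↥K ↥(W ⊔ C) ≤ 3 := by
        have := Submodule.finrank_le (W ⊔ C)
        rwa [hr3] at this
      rw [hWrank, hCe] at hsup
      omega
    have hVrank : Module.finrank ↥K ↥(W ⊓ C) = 1 := le_antisymm hinf_le hinf_ge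
    haveI : Fintype ↥(W ⊓ C) := Fintype.ofFinite _
    have hVcard' : Nat.card ↥(W ⊓ C) = q := by
      have hcard := Module.card_eq_pow_finrank (K := ↥K) (V := ↥(W ⊓ C))
      rw [hKq', hVrank, pow_one] at hcard
      rw [Nat.card_eq_fintype_card]
      exact hcard
    have hfilter_eq : (Finset.range (7*N)).filter (fun m => ω ^ m ∈ W ∧ ω ^ (m + δ*N) ∈ W)
        = (Finset.range (7*N)).filter (fun m => ω ^ m ∈ W ⊓ C) := by
      apply Finset.filter_congr
      intro m hm
      have hωm : ω ^ (m + δ*N) = β ^ δ * ω ^ m := (hβωpow m δ).symm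
      rw [hωm]
      simp [Submodule.mem_inf, hmemC]
    rw [hfilter_eq]
    have h := countS (W ⊓ C)
    rw [hVcard'] at h
    apply Nat.eq_of_mul_eq_mul_right (show 0 < q-1 from by omega)
    rw [h, one_mul]
  have hmulsub : ∀ m : ℕ, m * m - m = m * (m - 1) := by
    intro m
    cases m with
    | zero => rfl
    | succ k =>
      calc (k+1)*(k+1) - (k+1) = ((k+1)*k + (k+1)) - (k+1) := by rw [Nat.mul_succ]
        _ = (k+1)*k := by omega
        _ = (k+1)*((k+1)-1) := by rw [Nat.succ_sub_one]
  have hsum2 : ∑ i ∈ Finset.range N, nn i * (nn i - 1) = 6 := by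
    set bigA := ((Finset.range N) ×ˢ ((Finset.range 7) ×ˢ (Finset.range 7))).filter
      (fun x : ℕ × (ℕ × ℕ) => x.2.1 ≠ x.2.2 ∧ ω ^ (x.1 + x.2.1*N) ∈ W ∧ ω ^ (x.1 + x.2.2*N) ∈ W)
      with hbigA
    set bigB := ((Finset.range (7*N)) ×ˢ (Finset.Ico 1 7)).filter
      (fun y : ℕ × ℕ => ω ^ y.1 ∈ W ∧ ω ^ (y.1 + y.2*N) ∈ W) with hbigB
    have hA : bigA.card = ∑ i ∈ Finset.range N, nn i * (nn i - 1) := by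
      rw [Finset.card_eq_sum_card_fiberwise
        (f := fun x : ℕ × (ℕ × ℕ) => x.1) (t := Finset.range N)
        (fun x hx => (Finset.mem_product.mp (Finset.mem_filter.mp hx).1).1)]
      apply Finset.sum_congr rfl
      intro i hi
      have hoff : (((Finset.range 7).filter (fun j => ω ^ (i + j*N) ∈ W)).offDiag).card
          = nn i * (nn i - 1) := by
        rw [Finset.offDiag_card]
        exact hmulsub (nn i)
      rw [← hoff]
      apply Finset.card_nbij' (fun x : ℕ × (ℕ × ℕ) => x.2) (fun jj : ℕ × ℕ => (i, jj))
      · intro x hx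
        rw [Finset.mem_coe] at hx ⊢
        rw [Finset.mem_filter] at hx
        obtain ⟨hx1, hx2⟩ := hx
        rw [Finset.mem_filter] at hx1
        obtain ⟨hx1', hne, hW1, hW2⟩ := hx1
        rw [Finset.mem_product, Finset.mem_product] at hx1'
        rw [Finset.mem_offDiag]
        subst hx2
        exact ⟨Finset.mem_filter.mpr ⟨hx1'.2.1, hW1⟩, Finset.mem_filter.mpr ⟨hx1'.2.2, hW2⟩, hne⟩
      · intro jj hjj
        rw [Finset.mem_coe] at hjj ⊢
        rw [Finset.mem_offDiag] at hjj
        obtain ⟨hj1, hj2, hne⟩ := hjj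
        rw [Finset.mem_filter] at hj1 hj2
        refine Finset.mem_filter.mpr ⟨Finset.mem_filter.mpr ⟨?_, hne, hj1.2, hj2.2⟩, rfl⟩
        rw [Finset.mem_product, Finset.mem_product]
        exact ⟨hi, hj1.1, hj2.1⟩
      · intro x hx
        rw [Finset.mem_coe] at hx
        rw [Finset.mem_filter] at hx
        exact Prod.ext hx.2.symm rfl
      · intro jj hjj
        rfl
    have hB : bigB.card = 6 := by
      rw [Finset.card_eq_sum_card_fiberwise
        (f := fun y : ℕ × ℕ => y.2) (t := Finset.Ico 1 7)
        (fun y hy => (Finset.mem_product.mp (Finset.mem_filter.mp hy).1).2)]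
      have hper : ∀ δ ∈ Finset.Ico 1 7, (bigB.filter (fun y => y.2 = δ)).card = 1 := by
        intro δ hδ
        obtain ⟨hδ1, hδ7⟩ := Finset.mem_Ico.mp hδ
        rw [← hVcard δ hδ1 (by omega)]
        apply Finset.card_nbij' (fun y : ℕ × ℕ => y.1) (fun m : ℕ => (m, δ))
        · intro y hy
          rw [Finset.mem_coe] at hy ⊢
          rw [Finset.mem_filter] at hy
          obtain ⟨hy1, hy2⟩ := hy
          rw [Finset.mem_filter] at hy1
          obtain ⟨hy1', hyW⟩ := hy1
          rw [Finset.mem_product] at hy1'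
          rw [Finset.mem_filter]
          refine ⟨hy1'.1, ?_⟩
          rw [← hy2]
          exact hyW
        · intro m hm
          rw [Finset.mem_coe] at hm ⊢
          rw [Finset.mem_filter] at hm ⊢
          refine ⟨Finset.mem_filter.mpr ⟨?_, ?_⟩, rfl⟩
          · rw [Finset.mem_product]
            exact ⟨hm.1, hδ⟩
          · exact hm.2
        · intro y hy
          rw [Finset.mem_coe] at hy
          rw [Finset.mem_filter] at hy
          exact Prod.ext rfl hy.2.symm
        · intro m hm
          rfl
      rw [Finset.sum_congr rfl hper]
      simp
    have hAB : bigA.card = bigB.card := by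
      apply Finset.card_nbij'
        (fun x : ℕ × (ℕ × ℕ) => (x.1 + x.2.1*N, (x.2.2 + 7 - x.2.1) % 7))
        (fun y : ℕ × ℕ => (y.1 % N, (y.1 / N, (y.1 / N + y.2) % 7)))
      · intro x hx
        simp only [Finset.mem_coe] at hx ⊢
        rw [Finset.mem_filter] at hx
        obtain ⟨hx1, hne, hW1, hW2⟩ := hx
        rw [Finset.mem_product, Finset.mem_product] at hx1
        obtain ⟨hiN, hj7, hj7'⟩ := hx1
        rw [Finset.mem_range] at hiN hj7 hj7'
        rw [Finset.mem_filter, Finset.mem_product, Finset.mem_range, Finset.mem_Ico]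
        have hjN : x.2.1 * N ≤ 6 * N := Nat.mul_le_mul_right N (by omega)
        refine ⟨⟨by omega, by omega, by omega⟩, hW1, ?_⟩
        obtain ⟨s, hs⟩ : ∃ s, x.2.1 + (x.2.2 + 7 - x.2.1) % 7 = x.2.2 + 7*s := ⟨(x.2.1 + (x.2.2 + 7 - x.2.1) % 7 - x.2.2)/7, by omega⟩
        have hexp : x.1 + x.2.1*N + ((x.2.2 + 7 - x.2.1) % 7)*N = (x.1 + x.2.2*N) + 7*N*s := by
          calc x.1 + x.2.1*N + ((x.2.2 + 7 - x.2.1) % 7)*N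
              = x.1 + (x.2.1 + (x.2.2 + 7 - x.2.1) % 7)*N := by ring
            _ = x.1 + (x.2.2 + 7*s)*N := by rw [hs]
            _ = (x.1 + x.2.2*N) + 7*N*s := by ring
        rw [hexp, hshift W]
        exact hW2
      · intro y hy
        rw [Finset.mem_coe] at hy ⊢
        rw [Finset.mem_filter] at hy
        obtain ⟨hy1, hW1, hW2⟩ := hy
        rw [Finset.mem_product, Finset.mem_range, Finset.mem_Ico] at hy1
        obtain ⟨hm7N, hδ1, hδ7⟩ := hy1
        have hj7 : y.1 / N < 7 := Nat.div_lt_of_lt_mul (by omega)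
        rw [Finset.mem_filter, Finset.mem_product, Finset.mem_product,
          Finset.mem_range, Finset.mem_range, Finset.mem_range]
        dsimp only
        have hmN : y.1 % N < N := Nat.mod_lt _ (by omega)
        refine ⟨⟨hmN, hj7, by omega⟩, by omega, ?_, ?_⟩
        · have : y.1 % N + (y.1 / N) * N = y.1 := Nat.mod_add_div' y.1 N
          rw [this]
          exact hW1
        · obtain ⟨s, hs⟩ : ∃ s, y.1 / N + y.2 = (y.1 / N + y.2) % 7 + 7*s :=
            ⟨(y.1 / N + y.2)/7, by omega⟩
          have hexp : y.1 % N + ((y.1 / N + y.2) % 7)*N + 7*N*s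
              = y.1 + y.2*N := by
            calc y.1 % N + ((y.1 / N + y.2) % 7)*N + 7*N*s
                = y.1 % N + ((y.1 / N + y.2) % 7 + 7*s)*N := by ring
              _ = y.1 % N + (y.1 / N + y.2)*N := by rw [← hs]
              _ = (y.1 % N + (y.1 / N)*N) + y.2*N := by ring
              _ = y.1 + y.2*N := by rw [Nat.mod_add_div']
          rw [← hexp, hshift W] at hW2
          exact hW2
      · intro x hx
        rw [Finset.mem_coe] at hx
        rw [Finset.mem_filter] at hx
        obtain ⟨hx1, hne, _, _⟩ := hx
        rw [Finset.mem_product, Finset.mem_product] at hx1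
        obtain ⟨hiN, hj7, hj7'⟩ := hx1
        rw [Finset.mem_range] at hiN hj7 hj7'
        have h1 : (x.1 + x.2.1 * N) % N = x.1 := by
          rw [Nat.add_mul_mod_self_right, Nat.mod_eq_of_lt hiN]
        have h2 : (x.1 + x.2.1 * N) / N = x.2.1 := by
          rw [Nat.add_mul_div_right _ _ (show 0 < N from by omega),
            Nat.div_eq_of_lt hiN, zero_add]
        have h3 : (x.2.1 + (x.2.2 + 7 - x.2.1) % 7) % 7 = x.2.2 := by omega
        refine Prod.ext h1 (Prod.ext h2 ?_)
        simp only [h1, h2]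
        exact h3
      · intro y hy
        rw [Finset.mem_coe] at hy
        rw [Finset.mem_filter] at hy
        obtain ⟨hy1, _, _⟩ := hy
        rw [Finset.mem_product, Finset.mem_range, Finset.mem_Ico] at hy1
        obtain ⟨hm7N, hδ1, hδ7⟩ := hy1
        have hj7 : y.1 / N < 7 := Nat.div_lt_of_lt_mul (by omega)
        have h1 : y.1 % N + (y.1 / N) * N = y.1 := Nat.mod_add_div' y.1 N
        have h2 : ((y.1 / N + y.2) % 7 + 7 - y.1 / N) % 7 = y.2 := by omega
        refine Prod.ext ?_ ?_
        · simp only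
          exact h1
        · simp only
          exact h2
    omega
  -- putting everything together
  have hnn_cases : ∀ i : ℕ, nn i = 0 ∨ nn i = 1 ∨ nn i = 2 := fun i => by
    have := hnn2 i; omega
  have hex2 : ∃ i, i < N ∧ nn i = 2 := by
    by_contra hno
    push_neg at hno
    have hz : ∀ i ∈ Finset.range N, nn i * (nn i - 1) = 0 := by
      intro i hi
      have h2 := hno i (Finset.mem_range.mp hi)
      rcases hnn_cases i with h | h | h
      · simp [h]
      · simp [h]
      · exact absurd h h2
    rw [Finset.sum_congr rfl hz, Finset.sum_const_zero] at hsum2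
    exact absurd hsum2 (by norm_num)
  have hex1 : ∃ i, i < N ∧ nn i = 1 := by
    by_contra hno
    push_neg at hno
    have heq1 : ∀ i ∈ Finset.range N, nn i = nn i * (nn i - 1) := by
      intro i hi
      have h1 := hno i (Finset.mem_range.mp hi)
      rcases hnn_cases i with h | h | h
      · simp [h]
      · exact absurd h h1
      · simp [h]
    rw [Finset.sum_congr rfl heq1, hsum2] at hsum1
    omega
  have h9q : 9 * q ≤ q * q := Nat.mul_le_mul_right q hq9
  have hex0 : ∃ i, i < N ∧ nn i = 0 := by
    by_contra hno
    push_neg at hno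
    have hge : ∀ i ∈ Finset.range N, 1 ≤ nn i := by
      intro i hi
      have := hno i (Finset.mem_range.mp hi)
      omega
    have hN' := Finset.card_nsmul_le_sum (Finset.range N) nn 1 hge
    rw [hsum1, Finset.card_range, smul_eq_mul, mul_one] at hN'
    omega
  ext v
  simp only [Set.mem_setOf_eq, Set.mem_insert_iff, Set.mem_singleton_iff]
  constructor
  · rintro ⟨i, hiN, rfl⟩
    rw [hval i]
    rcases hnn_cases i with h | h | h
    · right; right; rw [h]; push_cast; ring
    · right; left; rw [h]; push_cast; ring
    · left; rw [h]; push_cast; ring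
  · rintro (rfl | rfl | rfl)
    · obtain ⟨i, hiN, h2⟩ := hex2
      exact ⟨i, hiN, by rw [hval i, h2]; push_cast; ring⟩
    · obtain ⟨i, hiN, h1⟩ := hex1
      exact ⟨i, hiN, by rw [hval i, h1]; push_cast; ring⟩
    · obtain ⟨i, hiN, h0⟩ := hex0
      exact ⟨i, hiN, by rw [hval i, h0]; push_cast; ring⟩
end

section
/- Let q be an odd prime power with q ≡ 2 or 4 (mod 7), let ω be a primitive element of F_{q³}, and set N = (q²+q+1)/7. Then for all distinct j₁, j₂, j₃ ∈ {0,1,…,6}, the elements ω^{j₁N}, ω^{j₂N}, ω^{j₃N} of F_{q³} are linearly independent over F_q. -/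
open scoped Classical

def Cl (K : Type) {F : Type} [Field K] [Field F] [Algebra K F] (z : F) (i j k : ZMod 7) : Prop :=
  ∃ a b c : K, (a ≠ 0 ∨ b ≠ 0 ∨ c ≠ 0) ∧
    algebraMap K F a * z ^ i.val + algebraMap K F b * z ^ j.val + algebraMap K F c * z ^ k.val = 0

namespace Cl

variable {K F : Type} [Field K] [Field F] [Algebra K F] {z : F} {s : K} {i j k : ZMod 7}

theorem swap1 (h : Cl K z i j k) : Cl K z j i k := by
  obtain ⟨a, b, c, h0, he⟩ := h
  exact ⟨b, a, c, by tauto, by linear_combination he⟩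

theorem swap2 (h : Cl K z i j k) : Cl K z i k j := by
  obtain ⟨a, b, c, h0, he⟩ := h
  exact ⟨a, c, b, by tauto, by linear_combination he⟩

theorem cg (h : Cl K z i j k) {i' j' k' : ZMod 7} (hi : i = i') (hj : j = j') (hk : k = k') :
    Cl K z i' j' k' := hi ▸ hj ▸ hk ▸ h

theorem step_mul (hs : z ^ 7 = algebraMap K F s) (hz : z ≠ 0) (i : ZMod 7) :
    ∃ e : K, e ≠ 0 ∧ z * z ^ i.val = algebraMap K F e * z ^ (i + 1 : ZMod 7).val := by
  have hs0 : s ≠ 0 := by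
    intro h; rw [h, map_zero] at hs; exact pow_ne_zero 7 hz hs
  have hv : (i + 1 : ZMod 7).val = (i.val + 1) % 7 := by
    rw [ZMod.val_add, show (1 : ZMod 7).val = 1 from rfl]
  obtain ⟨m, hm, hlt⟩ : ∃ m, i.val = m ∧ m < 7 := ⟨i.val, rfl, i.val_lt⟩
  rw [hm] at hv ⊢
  rw [hv]
  interval_cases m
  · exact ⟨1, one_ne_zero, by norm_num⟩
  · exact ⟨1, one_ne_zero, by norm_num [pow_succ]; try ring⟩
  · exact ⟨1, one_ne_zero, by norm_num [pow_succ]; try ring⟩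
  · exact ⟨1, one_ne_zero, by norm_num [pow_succ]; try ring⟩
  · exact ⟨1, one_ne_zero, by norm_num [pow_succ]; try ring⟩
  · exact ⟨1, one_ne_zero, by norm_num [pow_succ]; try ring⟩
  · exact ⟨s, hs0, by norm_num [← hs, pow_succ]; try ring⟩

theorem tr (hs : z ^ 7 = algebraMap K F s) (hz : z ≠ 0) (h : Cl K z i j k) :
    Cl K z (i + 1) (j + 1) (k + 1) := by
  obtain ⟨a, b, c, h0, he⟩ := h
  obtain ⟨e1, he1, h1⟩ := step_mul hs hz (s := s) i
  obtain ⟨e2, he2, h2⟩ := step_mul hs hz (s := s) j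
  obtain ⟨e3, he3, h3⟩ := step_mul hs hz (s := s) k
  refine ⟨a * e1, b * e2, c * e3, ?_, ?_⟩
  · rcases h0 with h | h | h
    · exact Or.inl (mul_ne_zero h he1)
    · exact Or.inr (Or.inl (mul_ne_zero h he2))
    · exact Or.inr (Or.inr (mul_ne_zero h he3))
  · simp only [map_mul]
    linear_combination z * he - algebraMap K F a * h1 - algebraMap K F b * h2
      - algebraMap K F c * h3

theorem trn (hs : z ^ 7 = algebraMap K F s) (hz : z ≠ 0) (n : ℕ) (h : Cl K z i j k) :
    Cl K z (i + n) (j + n) (k + n) := by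
  induction n with
  | zero => simpa using h
  | succ m ih => exact (ih.tr hs hz).cg (by push_cast; ring) (by push_cast; ring) (by push_cast; ring)

theorem step_frob (hs : z ^ 7 = algebraMap K F s) (hz : z ≠ 0)
    (τ : F →ₐ[K] F) (d : K) (hd : d ≠ 0) (hτ : τ z = algebraMap K F d * z ^ 2) (i : ZMod 7) :
    ∃ e : K, e ≠ 0 ∧ τ (z ^ i.val) = algebraMap K F e * z ^ (2 * i : ZMod 7).val := by
  have hs0 : s ≠ 0 := by
    intro h; rw [h, map_zero] at hs; exact pow_ne_zero 7 hz hs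
  have hv : (2 * i : ZMod 7).val = (2 * i.val) % 7 := by
    rw [ZMod.val_mul, show (2 : ZMod 7).val = 2 from rfl]
  obtain ⟨m, hm, hlt⟩ : ∃ m, i.val = m ∧ m < 7 := ⟨i.val, rfl, i.val_lt⟩
  rw [hm] at hv ⊢
  rw [hv]
  have hτp : ∀ t : ℕ, τ (z ^ t) = algebraMap K F (d ^ t) * z ^ (2 * t) := by
    intro t
    rw [map_pow, hτ, mul_pow, ← map_pow, ← pow_mul]
  interval_cases m
  · exact ⟨1, one_ne_zero, by simpa using hτp 0⟩
  · exact ⟨d, hd, by simpa using hτp 1⟩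
  · exact ⟨d ^ 2, pow_ne_zero 2 hd, by simpa using hτp 2⟩
  · exact ⟨d ^ 3, pow_ne_zero 3 hd, by simpa using hτp 3⟩
  · refine ⟨d ^ 4 * s, mul_ne_zero (pow_ne_zero 4 hd) hs0, ?_⟩
    have := hτp 4
    rw [this, map_mul, map_pow]
    norm_num
    linear_combination (algebraMap K F d) ^ 4 * z * hs
  · refine ⟨d ^ 5 * s, mul_ne_zero (pow_ne_zero 5 hd) hs0, ?_⟩
    have := hτp 5
    rw [this, map_mul, map_pow]
    norm_num
    linear_combination (algebraMap K F d) ^ 5 * z ^ 3 * hs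
  · refine ⟨d ^ 6 * s, mul_ne_zero (pow_ne_zero 6 hd) hs0, ?_⟩
    have := hτp 6
    rw [this, map_mul, map_pow]
    norm_num
    linear_combination (algebraMap K F d) ^ 6 * z ^ 5 * hs

theorem db (hs : z ^ 7 = algebraMap K F s) (hz : z ≠ 0)
    (τ : F →ₐ[K] F) (d : K) (hd : d ≠ 0) (hτ : τ z = algebraMap K F d * z ^ 2)
    (h : Cl K z i j k) : Cl K z (2 * i) (2 * j) (2 * k) := by
  obtain ⟨a, b, c, h0, he⟩ := h
  obtain ⟨e1, he1, h1⟩ := step_frob hs hz τ d hd hτ (s := s) i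
  obtain ⟨e2, he2, h2⟩ := step_frob hs hz τ d hd hτ (s := s) j
  obtain ⟨e3, he3, h3⟩ := step_frob hs hz τ d hd hτ (s := s) k
  refine ⟨a * e1, b * e2, c * e3, ?_, ?_⟩
  · rcases h0 with h | h | h
    · exact Or.inl (mul_ne_zero h he1)
    · exact Or.inr (Or.inl (mul_ne_zero h he2))
    · exact Or.inr (Or.inr (mul_ne_zero h he3))
  · have hτ0 := congrArg τ he
    rw [map_add, map_add, map_mul, map_mul, map_mul, map_zero] at hτ0
    rw [AlgHom.commutes, AlgHom.commutes, AlgHom.commutes] at hτ0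
    rw [h1, h2, h3] at hτ0
    simp only [map_mul]
    linear_combination hτ0


section Bases

variable (hB : ∀ a b c : K, algebraMap K F a + algebraMap K F b * z + algebraMap K F c * z ^ 2 = 0
  → a = 0 ∧ b = 0 ∧ c = 0)
variable (hnK : ∀ m : ℕ, 0 < m → m < 7 → ∀ c : K, z ^ m ≠ algebraMap K F c)
variable (h2 : (2 : K) ≠ 0)
variable (hs : z ^ 7 = algebraMap K F s) (hz : z ≠ 0)

include hB

theorem base1 : ¬ Cl K z 0 1 2 := by
  rintro ⟨a, b, c, h0, he⟩
  rw [show ((0 : ZMod 7)).val = 0 from rfl, show ((1 : ZMod 7)).val = 1 from rfl,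
    show ((2 : ZMod 7)).val = 2 from rfl] at he
  obtain ⟨rfl, rfl, rfl⟩ := hB a b c (by linear_combination he)
  tauto

/-- From a nontrivial relation on `1, z, z^m` (`m = 3`), get `z^3 = alg A + alg B * z`
with `A B ≠ 0`. -/
theorem extract2 (hnK : ∀ m : ℕ, 0 < m → m < 7 → ∀ c : K, z ^ m ≠ algebraMap K F c)
    (hz : z ≠ 0) {a b c : K} (h0 : a ≠ 0 ∨ b ≠ 0 ∨ c ≠ 0)
    (he : algebraMap K F a + algebraMap K F b * z + algebraMap K F c * z ^ 3 = 0) :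
    ∃ A B : K, A ≠ 0 ∧ B ≠ 0 ∧ z ^ 3 = algebraMap K F A + algebraMap K F B * z := by
  have hc : c ≠ 0 := by
    rintro rfl
    simp only [map_zero, zero_mul, add_zero, zero_add] at he
    obtain ⟨rfl, rfl, -⟩ := hB a b 0 (by
      simp only [map_zero, zero_mul, add_zero]
      linear_combination he)
    tauto
  have hc' : algebraMap K F c ≠ 0 := fun h => hc ((map_eq_zero _).mp h)
  have ha : a ≠ 0 := by
    rintro rfl
    simp only [map_zero, zero_mul, add_zero, zero_add] at he
    have hfac : z * (algebraMap K F b + algebraMap K F c * z ^ 2) = 0 := by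
      linear_combination he
    rcases mul_eq_zero.mp hfac with h | h
    · exact hz h
    · obtain ⟨rfl, -, rfl⟩ := hB b 0 c (by
        simp only [map_zero, zero_mul, add_zero, zero_add]
        linear_combination h)
      tauto
  have e1 : algebraMap K F c * algebraMap K F (-(a / c)) = -(algebraMap K F a) := by
    rw [← map_mul, show c * -(a / c) = -a by field_simp; try ring, map_neg]
  have e2 : algebraMap K F c * algebraMap K F (-(b / c)) = -(algebraMap K F b) := by
    rw [← map_mul, show c * -(b / c) = -b by field_simp; try ring, map_neg]
  have hb : b ≠ 0 := by
    rintro rfl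
    simp only [map_zero, zero_mul, add_zero, zero_add] at he
    refine hnK 3 (by norm_num) (by norm_num) (-(a / c)) ?_
    apply (mul_right_inj' hc').mp
    linear_combination he - e1
  refine ⟨-(a / c), -(b / c), by simp [ha, hc], by simp [hb, hc], ?_⟩
  apply (mul_right_inj' hc').mp
  linear_combination he - e1 - z * e2

include hnK h2 hs hz

theorem base2 : ¬ Cl K z 0 1 3 := by
  rintro ⟨a, b, c, h0, he⟩
  rw [show ((0 : ZMod 7)).val = 0 from rfl, show ((1 : ZMod 7)).val = 1 from rfl,
    show ((3 : ZMod 7)).val = 3 from rfl] at he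
  obtain ⟨A, B, hA, hB', hz3⟩ := extract2 hB hnK hz h0 (by linear_combination he)
  set X := algebraMap K F A with hX
  set Y := algebraMap K F B with hY
  have h4 : z ^ 4 = X * z + Y * z ^ 2 := by linear_combination z * hz3
  have h5 : z ^ 5 = X * Y + Y ^ 2 * z + X * z ^ 2 := by
    linear_combination z * h4 + Y * hz3
  have h6 : z ^ 6 = X ^ 2 + 2 * X * Y * z + Y ^ 2 * z ^ 2 := by
    linear_combination z * h5 + X * hz3
  have h7 : z ^ 7 = X * Y ^ 2 + (X ^ 2 + Y ^ 3) * z + 2 * X * Y * z ^ 2 := by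
    linear_combination z * h6 + Y ^ 2 * hz3
  have hfin : algebraMap K F (A * B ^ 2 - s) + algebraMap K F (A ^ 2 + B ^ 3) * z
      + algebraMap K F (2 * A * B) * z ^ 2 = 0 := by
    simp only [map_sub, map_add, map_mul, map_pow, map_ofNat, ← hX, ← hY]
    linear_combination hs - h7
  obtain ⟨-, -, e3⟩ := hB _ _ _ hfin
  rcases mul_eq_zero.mp e3 with h | h
  · rcases mul_eq_zero.mp h with h | h
    · exact h2 h
    · exact hA h
  · exact hB' h

theorem base3 : ¬ Cl K z 0 2 3 := by
  rintro ⟨a, b, c, h0, he⟩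
  rw [show ((0 : ZMod 7)).val = 0 from rfl, show ((2 : ZMod 7)).val = 2 from rfl,
    show ((3 : ZMod 7)).val = 3 from rfl] at he
  -- extract z^3 = alg A + alg B * z^2 with A, B ≠ 0
  have hc : c ≠ 0 := by
    rintro rfl
    simp only [map_zero, zero_mul, add_zero, zero_add] at he
    obtain ⟨rfl, -, rfl⟩ := hB a 0 b (by
      simp only [map_zero, zero_mul, add_zero, zero_add]
      linear_combination he)
    tauto
  have hc' : algebraMap K F c ≠ 0 := fun h => hc ((map_eq_zero _).mp h)
  have ha : a ≠ 0 := by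
    rintro rfl
    simp only [map_zero, zero_mul, add_zero, zero_add] at he
    have hfac : z ^ 2 * (algebraMap K F b + algebraMap K F c * z) = 0 := by
      linear_combination he
    rcases mul_eq_zero.mp hfac with h | h
    · exact pow_ne_zero 2 hz h
    · obtain ⟨rfl, rfl, -⟩ := hB b c 0 (by
        simp only [map_zero, zero_mul, add_zero, zero_add]
        linear_combination h)
      tauto
  have e1 : algebraMap K F c * algebraMap K F (-(a / c)) = -(algebraMap K F a) := by
    rw [← map_mul, show c * -(a / c) = -a by field_simp; try ring, map_neg]
  have e2 : algebraMap K F c * algebraMap K F (-(b / c)) = -(algebraMap K F b) := by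
    rw [← map_mul, show c * -(b / c) = -b by field_simp; try ring, map_neg]
  have hb : b ≠ 0 := by
    rintro rfl
    simp only [map_zero, zero_mul, add_zero, zero_add] at he
    refine hnK 3 (by norm_num) (by norm_num) (-(a / c)) ?_
    apply (mul_right_inj' hc').mp
    linear_combination he - e1
  have hz3 : z ^ 3 = algebraMap K F (-(a / c)) + algebraMap K F (-(b / c)) * z ^ 2 := by
    apply (mul_right_inj' hc').mp
    linear_combination he - e1 - z ^ 2 * e2
  set A := -(a / c) with hAdef
  set B := -(b / c) with hBdef
  have hA : A ≠ 0 := by simp [hAdef, ha, hc]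
  have hB' : B ≠ 0 := by simp [hBdef, hb, hc]
  set X := algebraMap K F A with hX
  set Y := algebraMap K F B with hY
  have h4 : z ^ 4 = X * Y + X * z + Y ^ 2 * z ^ 2 := by
    linear_combination z * hz3 + Y * hz3
  have h5 : z ^ 5 = X * Y ^ 2 + X * Y * z + (X + Y ^ 3) * z ^ 2 := by
    linear_combination z * h4 + Y ^ 2 * hz3
  have h6 : z ^ 6 = X ^ 2 + X * Y ^ 3 + X * Y ^ 2 * z + (2 * X * Y + Y ^ 4) * z ^ 2 := by
    linear_combination z * h5 + (X + Y ^ 3) * hz3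
  have h7 : z ^ 7 = 2 * X ^ 2 * Y + X * Y ^ 4 + (X ^ 2 + X * Y ^ 3) * z
      + (3 * X * Y ^ 2 + Y ^ 5) * z ^ 2 := by
    linear_combination z * h6 + (2 * X * Y + Y ^ 4) * hz3
  have hfin : algebraMap K F (2 * A ^ 2 * B + A * B ^ 4 - s)
      + algebraMap K F (A ^ 2 + A * B ^ 3) * z
      + algebraMap K F (3 * A * B ^ 2 + B ^ 5) * z ^ 2 = 0 := by
    simp only [map_sub, map_add, map_mul, map_pow, map_ofNat, ← hX, ← hY]
    linear_combination hs - h7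
  obtain ⟨-, e2, e3⟩ := hB _ _ _ hfin
  have key : 2 * (A ^ 2 * B ^ 2) = 0 := by linear_combination A * e3 - B ^ 2 * e2
  rcases mul_eq_zero.mp key with h | h
  · exact h2 h
  · rcases mul_eq_zero.mp h with h | h
    · exact hA (pow_eq_zero_iff (by norm_num) |>.mp h)
    · exact hB' (pow_eq_zero_iff (by norm_num) |>.mp h)

include hs hz

theorem noCl (τ : F →ₐ[K] F) (d : K) (hd : d ≠ 0) (hτ : τ z = algebraMap K F d * z ^ 2) :
    ∀ i j k : ZMod 7, i ≠ j → i ≠ k → j ≠ k → ¬ Cl K z i j k := by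
  have T : ∀ {i j k : ZMod 7}, Cl K z i j k → Cl K z (i + 1) (j + 1) (k + 1) :=
    fun {i j k} h => Cl.tr hs hz h
  have D : ∀ {i j k : ZMod 7}, Cl K z i j k → Cl K z (2 * i) (2 * j) (2 * k) :=
    fun {i j k} h => Cl.db hs hz τ d hd hτ h
  have Tn : ∀ (n : ℕ) {i j k : ZMod 7}, Cl K z i j k → Cl K z (i + n) (j + n) (k + n) :=
    fun n {i j k} h => Cl.trn hs hz n h
  have N012 : ¬ Cl K z 0 1 2 := base1 hB
  have N013 : ¬ Cl K z 0 1 3 := base2 hB hnK h2 hs hz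
  have N023 : ¬ Cl K z 0 2 3 := base3 hB hnK h2 hs hz
  have N014 : ¬ Cl K z 0 1 4 := fun h =>
    N012 (((D h).cg (by decide) (by decide) (by decide)).swap2)
  have N024 : ¬ Cl K z 0 2 4 := fun h =>
    N014 (((D h).cg (by decide) (by decide) (by decide)).swap2)
  have N015 : ¬ Cl K z 0 1 5 := fun h =>
    N023 ((D h).cg (by decide) (by decide) (by decide))
  have N016 : ¬ Cl K z 0 1 6 := fun h =>
    N012 ((((T h).cg (by decide) (by decide) (by decide)).swap2).swap1)
  have N034 : ¬ Cl K z 0 3 4 := fun h =>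
    N014 ((((Tn 4 h).cg (by decide) (by decide) (by decide)).swap1).swap2)
  have N025 : ¬ Cl K z 0 2 5 := fun h =>
    N034 (((D h).cg (by decide) (by decide) (by decide)).swap2)
  have N045 : ¬ Cl K z 0 4 5 := fun h =>
    N013 ((((Tn 3 h).cg (by decide) (by decide) (by decide)).swap1).swap2)
  have N026 : ¬ Cl K z 0 2 6 := fun h =>
    N045 ((D h).cg (by decide) (by decide) (by decide))
  have N035 : ¬ Cl K z 0 3 5 := fun h =>
    N024 ((((Tn 4 h).cg (by decide) (by decide) (by decide)).swap1).swap2)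
  have N036 : ¬ Cl K z 0 3 6 := fun h =>
    N014 ((((Tn 1 h).cg (by decide) (by decide) (by decide)).swap2).swap1)
  have N046 : ¬ Cl K z 0 4 6 := fun h =>
    N015 ((D h).cg (by decide) (by decide) (by decide))
  have N056 : ¬ Cl K z 0 5 6 := fun h =>
    N016 ((((Tn 1 h).cg (by decide) (by decide) (by decide)).swap2).swap1)
  have ha7 : ∀ x : ZMod 7, x = 0 ∨ x = 1 ∨ x = 2 ∨ x = 3 ∨ x = 4 ∨ x = 5 ∨ x = 6 := by
    decide
  have bash : ∀ a b : ZMod 7, a ≠ 0 → b ≠ 0 → a ≠ b → ¬ Cl K z 0 a b := by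
    intro a b ha hb hab h
    rcases ha7 a with rfl|rfl|rfl|rfl|rfl|rfl|rfl <;> rcases ha7 b with rfl|rfl|rfl|rfl|rfl|rfl|rfl <;>
      skip
    · exact absurd rfl ha
    · exact absurd rfl ha
    · exact absurd rfl ha
    · exact absurd rfl ha
    · exact absurd rfl ha
    · exact absurd rfl ha
    · exact absurd rfl ha
    · exact absurd rfl hb
    · exact absurd rfl hab
    · exact N012 h
    · exact N013 h
    · exact N014 h
    · exact N015 h
    · exact N016 h
    · exact absurd rfl hb
    · exact N012 h.swap2
    · exact absurd rfl hab
    · exact N023 h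
    · exact N024 h
    · exact N025 h
    · exact N026 h
    · exact absurd rfl hb
    · exact N013 h.swap2
    · exact N023 h.swap2
    · exact absurd rfl hab
    · exact N034 h
    · exact N035 h
    · exact N036 h
    · exact absurd rfl hb
    · exact N014 h.swap2
    · exact N024 h.swap2
    · exact N034 h.swap2
    · exact absurd rfl hab
    · exact N045 h
    · exact N046 h
    · exact absurd rfl hb
    · exact N015 h.swap2
    · exact N025 h.swap2
    · exact N035 h.swap2
    · exact N045 h.swap2
    · exact absurd rfl hab
    · exact N056 h
    · exact absurd rfl hb
    · exact N016 h.swap2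
    · exact N026 h.swap2
    · exact N036 h.swap2
    · exact N046 h.swap2
    · exact N056 h.swap2
    · exact absurd rfl hab
  intro i j k hij hik hjk h
  have hcast : ((7 - i.val : ℕ) : ZMod 7) = -i := by
    rw [Nat.cast_sub i.val_lt.le]
    simp only [ZMod.natCast_val, ZMod.cast_id]
    rw [show ((7 : ℕ) : ZMod 7) = 0 by decide, zero_sub]
  have h0 : Cl K z 0 (j - i) (k - i) := by
    refine (Tn (7 - i.val) h).cg ?_ ?_ ?_ <;> rw [hcast] <;> ring
  exact bash (j - i) (k - i) (fun hx => hij (sub_eq_zero.mp hx).symm)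
    (fun hx => hik (sub_eq_zero.mp hx).symm)
    (fun hx => hjk (sub_left_inj.mp hx)) h0

end Bases

end Cl

theorem aux_root (K F : Type) [Field K] [Field F] [Fintype K] [Fintype F] [Algebra K F]
    (q : ℕ) (hq2 : 2 ≤ q) (hK : Fintype.card K = q) (x : F) (hx : x ^ (q - 1) = 1) :
    ∃ c : K, x = algebraMap K F c := by
  classical
  by_contra hcon
  push_neg at hcon
  set T : Finset F := Finset.image (fun k : Kˣ => algebraMap K F ↑k) Finset.univ with hT
  have hinj : Function.Injective (fun k : Kˣ => algebraMap K F (↑k : K)) := by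
    intro u v huv
    exact Units.ext ((algebraMap K F).injective huv)
  have hcardK : Fintype.card Kˣ = q - 1 := by rw [Fintype.card_units, hK]
  have hcardT : T.card = q - 1 := by
    rw [hT, Finset.card_image_of_injective _ hinj, Finset.card_univ, hcardK]
  have hxT : x ∉ T := by
    intro hmem
    rw [hT, Finset.mem_image] at hmem
    obtain ⟨u, -, hu⟩ := hmem
    exact hcon ↑u hu.symm
  have hsub : insert x T ⊆ (Polynomial.nthRoots (q - 1) (1 : F)).toFinset := by
    intro y hy
    rw [Multiset.mem_toFinset, Polynomial.mem_nthRoots (by omega : 0 < q - 1)]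
    rcases Finset.mem_insert.mp hy with rfl | hyT
    · exact hx
    · rw [hT, Finset.mem_image] at hyT
      obtain ⟨u, -, rfl⟩ := hyT
      rw [← map_pow, ← Units.val_pow_eq_pow_val, ← hcardK, pow_card_eq_one,
        Units.val_one, map_one]
  have hle := Finset.card_le_card hsub
  rw [Finset.card_insert_of_notMem hxT, hcardT] at hle
  have hroots : (Polynomial.nthRoots (q - 1) (1 : F)).toFinset.card ≤ q - 1 :=
    le_trans (Multiset.toFinset_card_le _) (Polynomial.card_nthRoots _ _)
  omega

open IntermediateField in
/-- Let `q` be an odd prime power with `q ≡ 2` or `4 (mod 7)`,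
`ω` a primitive element of `F_{q³}` and `N = (q²+q+1)/7`. Then for all distinct
`j₁, j₂, j₃ ∈ {0,…,6}`, the elements `ω^{j₁N}, ω^{j₂N}, ω^{j₃N}` of `F_{q³}` are
linearly independent over `F_q`. -/
theorem stmt7 (p n q N : ℕ) [Fact p.Prime] (hq : q = p ^ n) (hn : 0 < n)
    (hodd : Odd q) (hq7 : q % 7 = 2 ∨ q % 7 = 4) (hN : N = (q ^ 2 + q + 1) / 7)
    (K F : Type) [Field K] [Field F] [Fintype K] [Fintype F] [Algebra K F]
    (hK : Fintype.card K = q) (hF : Fintype.card F = q ^ 3)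
    (ω : F) (hω : ∀ x : F, x ≠ 0 → ∃ k : ℕ, ω ^ k = x) :
    ∀ j₁ j₂ j₃ : ℕ, j₁ < 7 → j₂ < 7 → j₃ < 7 → j₁ ≠ j₂ → j₁ ≠ j₃ → j₂ ≠ j₃ →
      LinearIndependent K ![ω ^ (j₁ * N), ω ^ (j₂ * N), ω ^ (j₃ * N)] := by
  classical
  have hp : p.Prime := Fact.out
  have hq2 : 2 ≤ q := by
    rw [hq]
    calc 2 ≤ p := hp.two_le
    _ ≤ p ^ n := Nat.le_self_pow hn.ne' p
  -- 7 * N = q² + q + 1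
  have h7N : 7 * N = q ^ 2 + q + 1 := by
    rcases hq7 with h | h
    · obtain ⟨t, rfl⟩ : ∃ t, q = 7 * t + 2 := ⟨q / 7, by omega⟩
      have : (7 * t + 2) ^ 2 = 49 * t ^ 2 + 28 * t + 4 := by ring
      omega
    · obtain ⟨t, rfl⟩ : ∃ t, q = 7 * t + 4 := ⟨q / 7, by omega⟩
      have : (7 * t + 4) ^ 2 = 49 * t ^ 2 + 56 * t + 16 := by ring
      omega
  have hq2pos : 0 < q ^ 2 := by positivity
  have hN0 : 0 < N := by omega
  -- characteristic facts
  haveI hcharF : CharP F p := by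
    haveI := ringChar.charP F
    obtain ⟨n', hprime, hcard⟩ := FiniteField.card F (ringChar F)
    have hdvd : ringChar F ∣ p ^ (n * 3) := by
      rw [pow_mul, ← hq, ← hF, hcard]
      exact dvd_pow_self _ (by positivity : (0:ℕ) < (n' : ℕ)).ne'
    have : ringChar F = p :=
      (Nat.prime_dvd_prime_iff_eq hprime hp).mp (hprime.dvd_of_dvd_pow hdvd)
    rw [← this]
    exact ringChar.charP F
  haveI hcharK : CharP K p := by
    haveI := ringChar.charP K
    obtain ⟨n', hprime, hcard⟩ := FiniteField.card K (ringChar K)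
    have hdvd : ringChar K ∣ p ^ n := by
      rw [← hq, ← hK, hcard]
      exact dvd_pow_self _ (by positivity : (0:ℕ) < (n' : ℕ)).ne'
    have : ringChar K = p :=
      (Nat.prime_dvd_prime_iff_eq hprime hp).mp (hprime.dvd_of_dvd_pow hdvd)
    rw [← this]
    exact ringChar.charP K
  have hpne2 : p ≠ 2 := by
    rintro rfl
    have h2q : 2 ∣ q := hq ▸ dvd_pow_self 2 hn.ne'
    rcases hodd with ⟨m, hm⟩
    omega
  have h2K : (2 : K) ≠ 0 := by
    intro h
    have h' : ((2 : ℕ) : K) = 0 := by exact_mod_cast h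
    have := (CharP.cast_eq_zero_iff K p 2).mp h'
    rcases (Nat.prime_two.eq_one_or_self_of_dvd p this) with h1 | h1
    · exact hp.ne_one h1
    · exact hpne2 h1
  have h2F : (2 : F) ≠ 0 := by
    intro h
    have h' : ((2 : ℕ) : F) = 0 := by exact_mod_cast h
    have := (CharP.cast_eq_zero_iff F p 2).mp h'
    rcases (Nat.prime_two.eq_one_or_self_of_dvd p this) with h1 | h1
    · exact hp.ne_one h1
    · exact hpne2 h1
  -- ω is nonzero and has full order
  have hω0 : ω ≠ 0 := by
    obtain ⟨k, hk⟩ := hω (-1) (by simp)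
    intro h0
    rw [h0] at hk
    rcases Nat.eq_zero_or_pos k with rfl | hk0
    · rw [pow_zero] at hk
      exact h2F (by linear_combination hk)
    · rw [zero_pow hk0.ne'] at hk
      exact (by simp : ¬ ((0 : F) = -1)) hk
  have horder : orderOf ω = q ^ 3 - 1 := by
    have hΩ : ∀ u : Fˣ, u ∈ Subgroup.zpowers (Units.mk0 ω hω0) := by
      intro u
      obtain ⟨k, hk⟩ := hω ↑u (Units.ne_zero u)
      refine Subgroup.mem_zpowers_iff.mpr ⟨(k : ℤ), ?_⟩
      rw [zpow_natCast]
      exact Units.ext (by rw [Units.val_pow_eq_pow_val]; exact hk)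
    have := orderOf_eq_card_of_forall_mem_zpowers hΩ
    rw [Nat.card_eq_fintype_card, Fintype.card_units, hF] at this
    rw [show ω = ((Units.mk0 ω hω0 : Fˣ) : F) from rfl, orderOf_units]
    exact this
  have hord : ∀ k : ℕ, ω ^ k = 1 ↔ (q ^ 3 - 1) ∣ k := by
    intro k
    rw [← orderOf_dvd_iff_pow_eq_one, horder]
  have hfact : q ^ 3 - 1 = (q - 1) * (7 * N) := by
    have key : (q - 1) * (7 * N) + 1 = q ^ 3 := by
      rw [h7N]
      obtain ⟨m, rfl⟩ : ∃ m, q = m + 1 := ⟨q - 1, by omega⟩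
      rw [Nat.add_sub_cancel]
      ring
    omega
  -- z and s
  set z := ω ^ N with hzdef
  have hz0 : z ≠ 0 := pow_ne_zero _ hω0
  obtain ⟨s, hs⟩ : ∃ s : K, z ^ 7 = algebraMap K F s := by
    have hone : (z ^ 7) ^ (q - 1) = 1 := by
      rw [hzdef, ← pow_mul, ← pow_mul, hord, hfact]
      exact ⟨1, by ring⟩
    exact aux_root K F q hq2 hK (z ^ 7) hone
  -- powers of z outside the prime field
  have hnK : ∀ m : ℕ, 0 < m → m < 7 → ∀ c : K, z ^ m ≠ algebraMap K F c := by
    intro m hm0 hm7 c hEq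
    have hc0 : c ≠ 0 := by
      rintro rfl
      rw [map_zero] at hEq
      exact pow_ne_zero m hz0 hEq
    have hcq : c ^ (q - 1) = 1 := by
      rw [← hK]
      exact FiniteField.pow_card_sub_one_eq_one c hc0
    have h1 : ω ^ (N * m * (q - 1)) = 1 := by
      rw [pow_mul, pow_mul, ← hzdef, hEq, ← map_pow, hcq, map_one]
    rw [hord, hfact] at h1
    have h2 : (q - 1) * (7 * N) ∣ (q - 1) * (N * m) := by
      obtain ⟨u, hu⟩ := h1
      exact ⟨u, by linear_combination (norm := ring_nf) hu⟩
    have h3 : 7 * N ∣ N * m := (Nat.mul_dvd_mul_iff_left (by omega : 0 < q - 1)).mp h2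
    have h4 : N * 7 ∣ N * m := by rwa [mul_comm 7 N] at h3
    have h5 : 7 ∣ m := (Nat.mul_dvd_mul_iff_left hN0).mp h4
    omega
  -- degree facts
  haveI : FiniteDimensional K F := Module.Finite.of_finite
  have hrank : Module.finrank K F = 3 := by
    have := Module.card_eq_pow_finrank (K := K) (V := F)
    rw [hK, hF] at this
    exact (Nat.pow_right_injective hq2 this.symm)
  have hB : ∀ a b c : K,
      algebraMap K F a + algebraMap K F b * z + algebraMap K F c * z ^ 2 = 0 →
      a = 0 ∧ b = 0 ∧ c = 0 := by
    intro a b c habc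
    by_contra hcon
    set P : Polynomial K := Polynomial.C a + Polynomial.C b * Polynomial.X
      + Polynomial.C c * Polynomial.X ^ 2 with hP
    have hPa : P.coeff 0 = a := by simp [hP]
    have hPb : P.coeff 1 = b := by simp [hP]
    have hPc : P.coeff 2 = c := by simp [hP, Polynomial.coeff_X]
    have hPne : P ≠ 0 := by
      intro h0
      rw [h0] at hPa hPb hPc
      simp only [Polynomial.coeff_zero] at hPa hPb hPc
      exact hcon ⟨hPa.symm, hPb.symm, hPc.symm⟩
    have hint : IsIntegral K z := IsIntegral.of_finite K z
    have haev : Polynomial.aeval z P = 0 := by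
      rw [hP]
      simp only [map_add, map_mul, map_pow, Polynomial.aeval_C, Polynomial.aeval_X]
      exact habc
    have hdegP : P.degree ≤ 2 := by
      rw [hP]
      compute_degree
    have hdeg : (minpoly K z).degree ≤ 2 :=
      le_trans (minpoly.degree_le_of_ne_zero K z hPne haev) hdegP
    have hnd : (minpoly K z).natDegree ≤ 2 := Polynomial.natDegree_le_iff_degree_le.mpr hdeg
    have hnd1 : 0 < (minpoly K z).natDegree := minpoly.natDegree_pos hint
    have hfr : Module.finrank K ↥K⟮z⟯ = (minpoly K z).natDegree :=
      IntermediateField.adjoin.finrank hint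
    have hd3 : Module.finrank K ↥K⟮z⟯ ∣ 3 := by
      rw [← hrank]
      exact ⟨Module.finrank ↥K⟮z⟯ F, (Module.finrank_mul_finrank _ _ _).symm⟩
    have hfr1 : Module.finrank K ↥K⟮z⟯ = 1 := by
      rcases (Nat.prime_three.eq_one_or_self_of_dvd _ hd3) with h1 | h1
      · exact h1
      · omega
    have hbot : K⟮z⟯ = ⊥ := IntermediateField.finrank_eq_one_iff.mp hfr1
    have hzmem : z ∈ K⟮z⟯ := IntermediateField.mem_adjoin_simple_self K z
    rw [hbot, IntermediateField.mem_bot] at hzmem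
    obtain ⟨c', hc'⟩ := hzmem
    exact hnK 1 one_pos (by norm_num) c' (by rw [pow_one, ← hc'])
  -- the Frobenius-type algebra endomorphism
  obtain ⟨τ, Q, hτQ, hQ2⟩ : ∃ (τ : F →ₐ[K] F) (Q : ℕ), (∀ x, τ x = x ^ Q) ∧ Q % 7 = 2 := by
    haveI : ExpChar F p := ExpChar.prime hp
    have hcommutes : ∀ k : K, (iterateFrobenius F p n) (algebraMap K F k) = algebraMap K F k := by
      intro k
      rw [iterateFrobenius_def, ← map_pow, ← hq, ← hK, FiniteField.pow_card]
    set σ : F →ₐ[K] F := { toRingHom := iterateFrobenius F p n, commutes' := hcommutes } with hσ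
    have hσx : ∀ x : F, σ x = x ^ q := by
      intro x
      show iterateFrobenius F p n x = x ^ q
      rw [iterateFrobenius_def, hq]
    rcases hq7 with hr | hr
    · exact ⟨σ, q, hσx, hr⟩
    · refine ⟨σ.comp σ, q * q, fun x => ?_, ?_⟩
      · show σ (σ x) = x ^ (q * q)
        rw [hσx, hσx, ← pow_mul]
      · rw [Nat.mul_mod, hr]
  have hQ7 : Q = 7 * (Q / 7) + 2 := by
    have := Nat.div_add_mod Q 7
    omega
  have hs0 : s ≠ 0 := by
    intro h
    rw [h, map_zero] at hs
    exact pow_ne_zero 7 hz0 hs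
  set d : K := s ^ (Q / 7) with hd'
  have hd : d ≠ 0 := pow_ne_zero _ hs0
  have hτz : τ z = algebraMap K F d * z ^ 2 := by
    rw [hτQ]
    conv_lhs => rw [hQ7]
    rw [pow_add, pow_mul, hs, ← map_pow, hd']
  -- conclusion
  intro j₁ j₂ j₃ hj1 hj2 hj3 h12 h13 h23
  rw [Fintype.linearIndependent_iff]
  intro g hg
  by_contra hcon
  push_neg at hcon
  obtain ⟨i, hi⟩ := hcon
  have hne : g 0 ≠ 0 ∨ g 1 ≠ 0 ∨ g 2 ≠ 0 := by fin_cases i <;> tauto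
  have hval : ∀ m : ℕ, m < 7 → z ^ ((m : ZMod 7)).val = ω ^ (m * N) := by
    intro m hm
    rw [ZMod.val_cast_of_lt hm, hzdef, ← pow_mul, mul_comm N m]
  have hcast : ∀ m m' : ℕ, m < 7 → m' < 7 → m ≠ m' → (m : ZMod 7) ≠ (m' : ZMod 7) := by
    intro m m' hm hm' hne h
    have := congrArg ZMod.val h
    rw [ZMod.val_cast_of_lt hm, ZMod.val_cast_of_lt hm'] at this
    exact hne this
  refine Cl.noCl hB hnK h2K hs hz0 τ d hd hτz (j₁ : ZMod 7) (j₂ : ZMod 7) (j₃ : ZMod 7)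
    (hcast _ _ hj1 hj2 h12) (hcast _ _ hj1 hj3 h13) (hcast _ _ hj2 hj3 h23)
    ⟨g 0, g 1, g 2, hne, ?_⟩
  rw [hval _ hj1, hval _ hj2, hval _ hj3]
  rw [Fin.sum_univ_three] at hg
  simp only [Matrix.cons_val_zero, Matrix.cons_val_one, Matrix.head_cons,
    Matrix.cons_val_two, Matrix.tail_cons] at hg
  rw [Algebra.smul_def, Algebra.smul_def, Algebra.smul_def] at hg
  exact hg
end
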